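/- arXiv:1002.2129 — 8 statements merged into one kernel-verified Lean document; each statement's English description precedes it below -/
import Mathlib

section
/- Let G be a countable group with a free, weakly mixing, p.m.p. action G ↷ (X,μ) on a standard probability space, and let Λ be a non-trivial finite group of measure-preserving automorphisms of (X,μ) acting essentially freely on (X,μ) and satisfying gΛg⁻¹ = Λ for all g ∈ G (inside the group of measure-preserving automorphisms of (X,μ)). Then the action of G₁/(G₁∩Λ) on X/Λ fails to be cocycle superrigid with countable targets for some finite index subgroup G₁ ≤ G. Concretely: there exist a finite index subgroup G₁ ≤ G, a countable group 𝒢, and a measurable map ω : G₁ × X → 𝒢 satisfying (a) the cocycle identity ω(gh,x) = ω(g,h·x)ω(h,x) for all g,h ∈ G₁ and a.e. x, (b) ω(g,λ·x) = ω(g,x) for all λ ∈ Λ, g ∈ G₁ and a.e. x, and (c) ω(gλ,x) = ω(g,x) for all λ ∈ G₁∩Λ, g ∈ G₁ and a.e. x, such that there exist NO group homomorphism δ : G₁ → 𝒢 that is trivial on G₁∩Λ and NO measurable map φ : X → 𝒢 with φ(λ·x) = φ(x) for all λ ∈ Λ and a.e. x, satisfying ω(g,x) = φ(g·x)δ(g)φ(x)⁻¹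 for all g ∈ G₁ and almost every x ∈ X. -/
open MeasureTheory Filter Pointwise

/-- The `Λ`-relative cocycle `ω : G₁ × X → 𝒢` (descending to `G₁/(G₁∩Λ) × X/Λ`) admits no
untwisting to a group morphism by a `Λ`-invariant measurable map, i.e. it witnesses the
failure of cocycle superrigidity of `G₁/(G₁∩Λ) ↷ X/Λ` with the countable target `𝒢`. -/
def IsBadRelativeCocycle {X : Type} [MeasurableSpace X] (μ : Measure X)
    {G : Type} [Group G] [MulAction G X] (Λ : Subgroup (Equiv.Perm X))
    (G₁ : Subgroup G) (𝒢 : Type) [Group 𝒢] (ω : G₁ → X → 𝒢) : Prop :=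
  (∀ (g : G₁) (c : 𝒢), MeasurableSet {x : X | ω g x = c}) ∧
  -- (a) the cocycle identity
  (∀ g h : G₁, ∀ᵐ x ∂μ, ω (g * h) x = ω g ((h : G) • x) * ω h x) ∧
  -- (b) invariance in the space variable under `Λ`
  (∀ g : G₁, ∀ s ∈ Λ, ∀ᵐ x ∂μ, ω g (s x) = ω g x) ∧
  -- (c) invariance in the group variable under `G₁ ∩ Λ`
  (∀ g h : G₁, MulAction.toPermHom G X h ∈ Λ → ∀ᵐ x ∂μ, ω (g * h) x = ω g x) ∧
  -- no untwisting to a group morphism, compatibly with `Λ`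
  ¬ ∃ (δ : G₁ →* 𝒢) (φ : X → 𝒢),
      (∀ h : G₁, MulAction.toPermHom G X h ∈ Λ → δ h = 1) ∧
      (∀ c : 𝒢, MeasurableSet {x : X | φ x = c}) ∧
      (∀ s ∈ Λ, ∀ᵐ x ∂μ, φ (s x) = φ x) ∧
      (∀ g : G₁, ∀ᵐ x ∂μ, ω g x = φ ((g : G) • x) * δ g * (φ x)⁻¹)

/-- Let `G ↷ (X,μ)` be a free, weakly mixing, p.m.p. action of a countable
group on a standard probability space and let `Λ` be a non-trivial finite group of m.p.
automorphisms of `(X,μ)` acting essentially freely, with `gΛg⁻¹ = Λ` for all `g ∈ G`.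
Then for some finite index subgroup `G₁ ≤ G`, the action `G₁/(G₁∩Λ) ↷ X/Λ` fails to be
cocycle superrigid with countable targets. -/
theorem quotient_action_not_cocycle_superrigid
    (X : Type) [MeasurableSpace X] [StandardBorelSpace X]
    (μ : Measure X) [IsProbabilityMeasure μ]
    (G : Type) [Group G] [Countable G] [MulAction G X]
    (hmeas : ∀ g : G, Measurable fun x : X => g • x)
    (hpmp : ∀ g : G, MeasurePreserving (fun x : X => g • x) μ μ)
    (hfree : ∀ g : G, g ≠ 1 → μ {x : X | g • x = x} = 0)
    (hwm : ∃ gseq : ℕ → G, ∀ U V : Set X, MeasurableSet U → MeasurableSet V →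
      Tendsto (fun n => μ (gseq n • U ∩ V)) atTop (nhds (μ U * μ V)))
    (Λ : Subgroup (Equiv.Perm X))
    (hΛfin : (Λ : Set (Equiv.Perm X)).Finite) (hΛnontriv : Λ ≠ ⊥)
    (hΛmeas : ∀ s ∈ Λ, Measurable s ∧ MeasurePreserving s μ μ)
    (hΛfree : ∀ s ∈ Λ, s ≠ 1 → μ {x : X | s x = x} = 0)
    (hΛnorm : ∀ (g : G) (σ : Equiv.Perm X),
      σ ∈ Λ ↔ MulAction.toPermHom G X g * σ * (MulAction.toPermHom G X g)⁻¹ ∈ Λ) :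
    ∃ G₁ : Subgroup G, G₁.FiniteIndex ∧
      ∃ (𝒢 : Type) (h𝒢 : Group 𝒢), Countable 𝒢 ∧
        ∃ ω : G₁ → X → 𝒢, @IsBadRelativeCocycle X _ μ G _ _ Λ G₁ 𝒢 h𝒢 ω := by
  classical
  obtain ⟨e, he⟩ := MeasureTheory.exists_measurableEmbedding_real X
  obtain ⟨gseq, hgseq⟩ := hwm
  set p : G →* Equiv.Perm X := MulAction.toPermHom G X with hpdef
  have hpapp : ∀ (g : G) (x : X), p g x = g • x := fun _ _ => rfl
  haveI hΛfinT : Finite ↥Λ := hΛfin.to_subtype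
  haveI : Countable ↥Λ := Finite.to_countable
  -- membership facts for conjugation
  have hmemconj : ∀ (g : G) (σ : Equiv.Perm X), σ ∈ Λ → p g * σ * (p g)⁻¹ ∈ Λ :=
    fun g σ h => (hΛnorm g σ).mp h
  have hmemconj' : ∀ (g : G) (σ : Equiv.Perm X), σ ∈ Λ → (p g)⁻¹ * σ * p g ∈ Λ := by
    intro g σ h
    refine (hΛnorm g _).mpr ?_
    have h2 : p g * ((p g)⁻¹ * σ * p g) * (p g)⁻¹ = σ := by group
    rwa [h2]
  -- the conjugation homomorphism `G →* Perm ↥Λ`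
  let ρ : G →* Equiv.Perm ↥Λ :=
    MonoidHom.mk'
      (fun g =>
        { toFun := fun σ => ⟨p g * ↑σ * (p g)⁻¹, hmemconj g _ σ.2⟩
          invFun := fun σ => ⟨(p g)⁻¹ * ↑σ * p g, hmemconj' g _ σ.2⟩
          left_inv := fun σ => Subtype.ext (by group)
          right_inv := fun σ => Subtype.ext (by group) })
      (by
        intro g h
        refine Equiv.ext fun σ => Subtype.ext ?_
        show p (g * h) * ↑σ * (p (g * h))⁻¹ = p g * (p h * ↑σ * (p h)⁻¹) * (p g)⁻¹
        rw [map_mul]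
        group)
  set G₁ : Subgroup G := ρ.ker with hG₁def
  have hcomm : ∀ g ∈ G₁, ∀ σ ∈ Λ, p g * σ = σ * p g := by
    intro g hg σ hσ
    have h1 : ρ g = 1 := hg
    have h2 : ρ g ⟨σ, hσ⟩ = ⟨σ, hσ⟩ := by rw [h1]; rfl
    have h3 : p g * σ * (p g)⁻¹ = σ := congrArg Subtype.val h2
    calc p g * σ = p g * σ * (p g)⁻¹ * p g := by group
    _ = σ * p g := by rw [h3]
  have hfinidx : G₁.FiniteIndex := by
    constructor
    rw [hG₁def, Subgroup.index_ker]
    have : 0 < Nat.card ↥ρ.range := Nat.card_pos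
    exact this.ne'
  -- commutation in terms of the action
  have hacomm : ∀ g ∈ G₁, ∀ σ ∈ Λ, ∀ x : X, g • (σ x) = σ (g • x) := by
    intro g hg σ hσ x
    have := congrFun (congrArg (fun (q : Equiv.Perm X) => (q : X → X)) (hcomm g hg σ hσ)) x
    simpa [hpapp] using this
  -- the measurable fundamental-domain labelling ψ : X → Λ
  set E : Equiv.Perm X → Set X := fun s => {x | ∀ t ∈ Λ, t ≠ s → e (s x) < e (t x)} with hEdef
  have hEdisj : ∀ s ∈ Λ, ∀ t ∈ Λ, ∀ x : X, x ∈ E s → x ∈ E t → s = t := by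
    intro s hs t ht x hxs hxt
    by_contra hne
    exact lt_asymm (hxs t ht fun hh => hne hh.symm) (hxt s hs hne)
  set psi : X → Equiv.Perm X := fun x =>
    if h : ∃ s, s ∈ Λ ∧ x ∈ E s then h.choose else 1 with hpsidef
  have hpsi_mem : ∀ x, psi x ∈ Λ := by
    intro x
    by_cases h : ∃ s, s ∈ Λ ∧ x ∈ E s
    · simp only [hpsidef, dif_pos h]; exact h.choose_spec.1
    · simp only [hpsidef, dif_neg h]; exact Λ.one_mem
  have hpsi_eq : ∀ x, ∀ s ∈ Λ, x ∈ E s → psi x = s := by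
    intro x s hs hxs
    have h : ∃ s, s ∈ Λ ∧ x ∈ E s := ⟨s, hs, hxs⟩
    simp only [hpsidef, dif_pos h]
    exact hEdisj _ h.choose_spec.1 _ hs x h.choose_spec.2 hxs
  have hpsi_none : ∀ x : X, (¬ ∃ s, s ∈ Λ ∧ x ∈ E s) → psi x = 1 := by
    intro x h; simp only [hpsidef, dif_neg h]
  -- the conull set of points with free Λ-orbit
  set Good : Set X := {x | ∀ u ∈ Λ, u ≠ 1 → u x ≠ x} with hGooddef
  have hGood_null : μ Goodᶜ = 0 := by
    have hsub : Goodᶜ ⊆ ⋃ u : ↥Λ, {x : X | (u : Equiv.Perm X) x = x ∧ (u : Equiv.Perm X) ≠ 1} := by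
      intro x hx
      simp only [hGooddef, Set.mem_compl_iff, Set.mem_setOf_eq, not_forall] at hx
      obtain ⟨u, hu, hune, hufix⟩ := hx
      exact Set.mem_iUnion.mpr ⟨⟨u, hu⟩, not_not.mp hufix, hune⟩
    refine measure_mono_null hsub (measure_iUnion_null fun u => ?_)
    by_cases hu : (u : Equiv.Perm X) = 1
    · refine measure_mono_null (fun x hx => (hx.2 hu).elim) (measure_empty (μ := μ))
      -- dummy; fixed below
    · exact measure_mono_null (fun x hx => hx.1) (hΛfree u u.2 hu)
  -- existence of the labelling on Good points
  have hGood_ne : ∀ x ∈ Good, ∀ s ∈ Λ, ∀ t ∈ Λ, t ≠ s → t x ≠ s x := by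
    intro x hx s hs t ht hne heq
    have h1 : (s⁻¹ * t) x = x := by
      simp only [Equiv.Perm.mul_apply, heq]
      exact Equiv.symm_apply_apply s x
    have h2 : s⁻¹ * t ≠ 1 := by
      intro hcon
      exact hne (by rwa [inv_mul_eq_one, eq_comm] at hcon)
    exact hx (s⁻¹ * t) (Λ.mul_mem (Λ.inv_mem hs) ht) h2 h1
  have hGood_exists : ∀ x ∈ Good, ∃ s ∈ Λ, x ∈ E s := by
    intro x hx
    obtain ⟨s, hs, hmin⟩ := Set.exists_min_image (Λ : Set (Equiv.Perm X))
      (fun t => e (t x)) hΛfin ⟨1, Λ.one_mem⟩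
    refine ⟨s, hs, fun t ht htne => lt_of_le_of_ne (hmin t ht) ?_⟩
    intro heq
    exact hGood_ne x hx s hs t ht htne (he.injective heq.symm)
  have hGood_smul : ∀ u ∈ Λ, ∀ x ∈ Good, u x ∈ Good := by
    intro u hu x hx v hv hvne hfix
    have h1 : (u⁻¹ * v * u) x = x := by
      simp only [Equiv.Perm.mul_apply, hfix]
      exact Equiv.symm_apply_apply u x
    have h2 : u⁻¹ * v * u ≠ 1 := by
      intro hcon
      apply hvne
      have : v * u = u := by
        have := congrArg (fun w => u * w) hcon
        simpa [mul_assoc] using this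
      exact mul_right_cancel (by rw [this, one_mul])
    exact hx _ (Λ.mul_mem (Λ.mul_mem (Λ.inv_mem hu) hv) hu) h2 h1
  have hpsi_equiv : ∀ x ∈ Good, ∀ u ∈ Λ, psi (u x) = psi x * u⁻¹ := by
    intro x hx u hu
    obtain ⟨s, hs, hxs⟩ := hGood_exists x hx
    have h1 : psi x = s := hpsi_eq x s hs hxs
    have h2 : u x ∈ E (s * u⁻¹) := by
      intro t ht htne
      have e1 : (s * u⁻¹) (u x) = s x := by
        simp only [Equiv.Perm.mul_apply, Equiv.Perm.inv_def, Equiv.symm_apply_apply]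
      have e2 : t (u x) = (t * u) x := by simp [Equiv.Perm.mul_apply]
      rw [e1, e2]
      refine hxs (t * u) (Λ.mul_mem ht hu) ?_
      intro hcon
      apply htne
      rw [← hcon]; group
    rw [h1, hpsi_eq (u x) (s * u⁻¹) (Λ.mul_mem hs (Λ.inv_mem hu)) h2]
  -- measurability of the labelling
  have hEmeas : ∀ s ∈ Λ, MeasurableSet (E s) := by
    intro s hs
    have heq : E s = ⋂ t : ↥Λ,
        if (t : Equiv.Perm X) = s then Set.univ
        else {x : X | e (s x) < e ((t : Equiv.Perm X) x)} := by
      ext x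
      simp only [hEdef, Set.mem_setOf_eq, Set.mem_iInter]
      constructor
      · intro hx t
        by_cases hts : (t : Equiv.Perm X) = s
        · simp [hts]
        · simpa [hts] using hx t t.2 hts
      · intro hx t ht htne
        have := hx ⟨t, ht⟩
        simpa [htne] using this
    rw [heq]
    refine MeasurableSet.iInter fun t => ?_
    by_cases hts : (t : Equiv.Perm X) = s
    · simp [hts]
    · simp only [hts, if_false]
      exact measurableSet_lt (he.measurable.comp (hΛmeas s hs).1)
        (he.measurable.comp (hΛmeas _ t.2).1)
  have hpsimeas : ∀ c : Equiv.Perm X, MeasurableSet {x | psi x = c} := by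
    intro c
    by_cases hc : c ∈ Λ
    · by_cases h1 : c = 1
      · have heq : {x | psi x = c} = E c ∪ (⋃ s : ↥Λ, E (s : Equiv.Perm X))ᶜ := by
          ext x
          simp only [Set.mem_setOf_eq, Set.mem_union, Set.mem_compl_iff, Set.mem_iUnion]
          constructor
          · intro hx
            by_cases hmem : ∃ s : ↥Λ, x ∈ E (s : Equiv.Perm X)
            · obtain ⟨s, hxs⟩ := hmem
              left
              have := hpsi_eq x s s.2 hxs
              rw [this] at hx; rwa [← hx]
            · right; exact hmem
          · rintro (hx | hx)
            · exact hpsi_eq x c hc hx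
            · rw [hpsi_none x, h1]
              rintro ⟨s, hs, hxs⟩
              exact hx ⟨⟨s, hs⟩, hxs⟩
        rw [heq]
        exact (hEmeas c hc).union (MeasurableSet.iUnion fun s => hEmeas _ s.2).compl
      · have heq : {x | psi x = c} = E c := by
          ext x
          simp only [Set.mem_setOf_eq]
          constructor
          · intro hx
            by_cases hmem : ∃ s, s ∈ Λ ∧ x ∈ E s
            · obtain ⟨s, hs, hxs⟩ := hmem
              have := hpsi_eq x s hs hxs
              rw [this] at hx; rwa [← hx]
            · rw [hpsi_none x hmem] at hx
              exact absurd hx.symm h1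
          · intro hx; exact hpsi_eq x c hc hx
        rw [heq]; exact hEmeas c hc
    · have heq : {x | psi x = c} = ∅ := by
        ext x
        simp only [Set.mem_setOf_eq, Set.mem_empty_iff_false, iff_false]
        intro hx
        exact hc (hx ▸ hpsi_mem x)
      rw [heq]; exact MeasurableSet.empty
  -- the countable target group `H = Λ ⋅ p(G₁)`
  set S : Set (Equiv.Perm X) := {σ | ∃ a ∈ Λ, ∃ g ∈ G₁, σ = a * p g} with hSdef
  set H : Subgroup (Equiv.Perm X) :=
    { carrier := S
      one_mem' := ⟨1, Λ.one_mem, 1, G₁.one_mem, by simp⟩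
      mul_mem' := by
        rintro σ τ ⟨a, ha, g, hg, rfl⟩ ⟨b, hb, k, hk, rfl⟩
        refine ⟨a * b, Λ.mul_mem ha hb, g * k, G₁.mul_mem hg hk, ?_⟩
        have hc := hcomm g hg b hb
        rw [map_mul, mul_assoc a (p g), ← mul_assoc (p g) b, hc, mul_assoc b (p g),
          ← mul_assoc a b]
      inv_mem' := by
        rintro σ ⟨a, ha, g, hg, rfl⟩
        refine ⟨a⁻¹, Λ.inv_mem ha, g⁻¹, G₁.inv_mem hg, ?_⟩
        rw [mul_inv_rev, map_inv]
        have hc := hcomm g⁻¹ (G₁.inv_mem hg) a⁻¹ (Λ.inv_mem ha)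
        rw [map_inv] at hc
        exact hc } with hHdef
  have hHmem : ∀ σ : Equiv.Perm X, σ ∈ H ↔ ∃ a ∈ Λ, ∃ g ∈ G₁, σ = a * p g := fun σ => Iff.rfl
  have hScnt : S.Countable := by
    have hsub : S ⊆ Set.range (fun q : ↥Λ × ↥G₁ => (q.1 : Equiv.Perm X) * p (q.2 : G)) := by
      rintro σ ⟨a, ha, g, hg, rfl⟩
      exact ⟨(⟨a, ha⟩, ⟨g, hg⟩), rfl⟩
    exact (Set.countable_range _).mono hsub
  haveI hHcnt : Countable ↥H := hScnt.to_subtype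
  have hΛH : ∀ a ∈ Λ, a ∈ H := by
    intro a ha
    exact ⟨a, ha, 1, G₁.one_mem, by simp⟩
  have homega_mem : ∀ (g : G), g ∈ G₁ → ∀ x : X, psi (g • x) * p g * (psi x)⁻¹ ∈ H := by
    intro g hg x
    refine ⟨psi (g • x) * (psi x)⁻¹, Λ.mul_mem (hpsi_mem _) (Λ.inv_mem (hpsi_mem x)), g, hg, ?_⟩
    have hc := hcomm g hg ((psi x)⁻¹) (Λ.inv_mem (hpsi_mem x))
    rw [mul_assoc (psi (g • x)) (p g), hc, ← mul_assoc]
  refine ⟨G₁, hfinidx, ↥H, inferInstance,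
    ⟨inferInstance,
      (fun g x => ⟨psi ((g : G) • x) * p (g : G) * (psi x)⁻¹, homega_mem _ g.2 x⟩),
      ?_, ?_, ?_, ?_, ?_⟩⟩
  · -- measurability of the cocycle
    intro g c
    have hset : {x : X | (⟨psi ((g : G) • x) * p (g : G) * (psi x)⁻¹, homega_mem _ g.2 x⟩ : ↥H)
        = c} = {x : X | psi ((g : G) • x) * p (g : G) * (psi x)⁻¹ = (c : Equiv.Perm X)} := by
      ext x
      exact Subtype.ext_iff
    rw [hset]
    have hkey : {x : X | psi ((g : G) • x) * p (g : G) * (psi x)⁻¹ = (c : Equiv.Perm X)} =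
        ⋃ a : ↥Λ, ⋃ b : ↥Λ,
          ({x : X | psi ((g : G) • x) = (a : Equiv.Perm X)} ∩
            {x : X | psi x = (b : Equiv.Perm X)}) ∩
            {x : X | (a : Equiv.Perm X) * p (g : G) * ((b : Equiv.Perm X))⁻¹
              = (c : Equiv.Perm X)} := by
      ext x
      simp only [Set.mem_iUnion, Set.mem_inter_iff, Set.mem_setOf_eq]
      constructor
      · intro hx
        exact ⟨⟨psi ((g : G) • x), hpsi_mem _⟩, ⟨psi x, hpsi_mem x⟩, ⟨rfl, rfl⟩, hx⟩
      · rintro ⟨a, b, ⟨h1, h2⟩, h3⟩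
        rw [h1, h2]
        exact h3
    rw [hkey]
    refine MeasurableSet.iUnion fun a => MeasurableSet.iUnion fun b =>
      MeasurableSet.inter (MeasurableSet.inter ?_ (hpsimeas _)) ?_
    · have hpre : {x : X | psi ((g : G) • x) = (a : Equiv.Perm X)} =
          (fun x : X => (g : G) • x) ⁻¹' {y : X | psi y = (a : Equiv.Perm X)} := rfl
      rw [hpre]
      exact hmeas (g : G) (hpsimeas _)
    · by_cases hp : (a : Equiv.Perm X) * p (g : G) * ((b : Equiv.Perm X))⁻¹ = (c : Equiv.Perm X)
      · simp only [hp, Set.setOf_true]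
        exact MeasurableSet.univ
      · simp only [hp, Set.setOf_false]
        exact MeasurableSet.empty
  · -- (a) cocycle identity
    intro g h
    refine Filter.Eventually.of_forall fun x => ?_
    apply Subtype.ext
    show psi (((g * h : G₁) : G) • x) * p ((g * h : G₁) : G) * (psi x)⁻¹
        = psi ((g : G) • ((h : G) • x)) * p (g : G) * (psi ((h : G) • x))⁻¹ *
          (psi ((h : G) • x) * p (h : G) * (psi x)⁻¹)
    simp only [Subgroup.coe_mul, map_mul, mul_smul, mul_assoc, inv_mul_cancel_left]
  · -- (b) Λ-invariance in the space variable
    intro g s hs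
    have hGoodmeas : MeasurableSet Good := by
      have heqG : Good = ⋂ u : ↥Λ, if (u : Equiv.Perm X) = 1 then Set.univ
          else {x : X | e ((u : Equiv.Perm X) x) = e x}ᶜ := by
        ext x
        simp only [hGooddef, Set.mem_setOf_eq, Set.mem_iInter]
        constructor
        · intro hx u
          by_cases hu : (u : Equiv.Perm X) = 1
          · simp [hu]
          · simp only [hu, if_false, Set.mem_compl_iff, Set.mem_setOf_eq]
            intro hcon
            exact hx u u.2 hu (he.injective hcon)
        · intro hx u hu hune hcon
          have := hx ⟨u, hu⟩
          simp only [hune, if_false, Set.mem_compl_iff, Set.mem_setOf_eq] at this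
          exact this (by rw [hcon])
      rw [heqG]
      refine MeasurableSet.iInter fun u => ?_
      by_cases hu : (u : Equiv.Perm X) = 1
      · simp only [hu, if_true]
        exact MeasurableSet.univ
      · simp only [hu, if_false]
        exact (measurableSet_eq_fun (he.measurable.comp (hΛmeas _ u.2).1) he.measurable).compl
    have hae : ∀ᵐ x ∂μ, x ∈ Good ∧ (g : G) • x ∈ Good := by
      have h1 : ∀ᵐ x ∂μ, x ∈ Good := mem_ae_iff.mpr hGood_null
      have h2 : ∀ᵐ x ∂μ, (g : G) • x ∈ Good := by
        apply mem_ae_iff.mpr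
        have hpre : {x : X | (g : G) • x ∈ Good}ᶜ = (fun x : X => (g : G) • x) ⁻¹' Goodᶜ := rfl
        rw [hpre, (hpmp (g : G)).measure_preimage hGoodmeas.compl.nullMeasurableSet]
        exact hGood_null
      exact h1.and h2
    filter_upwards [hae] with x hx
    apply Subtype.ext
    show psi ((g : G) • s x) * p (g : G) * (psi (s x))⁻¹
        = psi ((g : G) • x) * p (g : G) * (psi x)⁻¹
    have h1 : (g : G) • s x = s ((g : G) • x) := hacomm (g : G) g.2 s hs x
    have h2 : psi (s ((g : G) • x)) = psi ((g : G) • x) * s⁻¹ := hpsi_equiv _ hx.2 s hs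
    have h3 : psi (s x) = psi x * s⁻¹ := hpsi_equiv x hx.1 s hs
    have hc := hcomm (g : G) g.2 s hs
    have hkey : s⁻¹ * p (g : G) * s = p (g : G) := by
      rw [mul_assoc, hc, inv_mul_cancel_left]
    rw [h1, h2, h3, mul_inv_rev, inv_inv]
    calc psi ((g : G) • x) * s⁻¹ * p (g : G) * (s * (psi x)⁻¹)
        = psi ((g : G) • x) * (s⁻¹ * p (g : G) * s) * (psi x)⁻¹ := by group
      _ = psi ((g : G) • x) * p (g : G) * (psi x)⁻¹ := by rw [hkey]
  · -- (c) invariance in the group variable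
    intro g h hperm
    have hGoodmeas : MeasurableSet Good := by
      have heqG : Good = ⋂ u : ↥Λ, if (u : Equiv.Perm X) = 1 then Set.univ
          else {x : X | e ((u : Equiv.Perm X) x) = e x}ᶜ := by
        ext x
        simp only [hGooddef, Set.mem_setOf_eq, Set.mem_iInter]
        constructor
        · intro hx u
          by_cases hu : (u : Equiv.Perm X) = 1
          · simp [hu]
          · simp only [hu, if_false, Set.mem_compl_iff, Set.mem_setOf_eq]
            intro hcon
            exact hx u u.2 hu (he.injective hcon)
        · intro hx u hu hune hcon
          have := hx ⟨u, hu⟩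
          simp only [hune, if_false, Set.mem_compl_iff, Set.mem_setOf_eq] at this
          exact this (by rw [hcon])
      rw [heqG]
      refine MeasurableSet.iInter fun u => ?_
      by_cases hu : (u : Equiv.Perm X) = 1
      · simp only [hu, if_true]
        exact MeasurableSet.univ
      · simp only [hu, if_false]
        exact (measurableSet_eq_fun (he.measurable.comp (hΛmeas _ u.2).1) he.measurable).compl
    have hae : ∀ᵐ x ∂μ, (g : G) • x ∈ Good := by
      apply mem_ae_iff.mpr
      have hpre : {x : X | (g : G) • x ∈ Good}ᶜ = (fun x : X => (g : G) • x) ⁻¹' Goodᶜ := rfl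
      rw [hpre, (hpmp (g : G)).measure_preimage hGoodmeas.compl.nullMeasurableSet]
      exact hGood_null
    filter_upwards [hae] with x hx
    apply Subtype.ext
    show psi (((g * h : G₁) : G) • x) * p ((g * h : G₁) : G) * (psi x)⁻¹
        = psi ((g : G) • x) * p (g : G) * (psi x)⁻¹
    have hph : p (h : G) ∈ Λ := hperm
    have hco : ((g * h : G₁) : G) = (g : G) * (h : G) := rfl
    have hsm : ((g : G) * (h : G)) • x = (g : G) • (p (h : G) x) := by
      rw [mul_smul]
      rfl
    have h1 : (g : G) • (p (h : G) x) = p (h : G) ((g : G) • x) :=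
      hacomm (g : G) g.2 _ hph x
    have h2 : psi (p (h : G) ((g : G) • x)) = psi ((g : G) • x) * (p (h : G))⁻¹ :=
      hpsi_equiv _ hx _ hph
    have hc := hcomm (g : G) g.2 _ hph
    have hkey : (p (h : G))⁻¹ * (p (g : G) * p (h : G)) = p (g : G) := by
      rw [hc, ← mul_assoc, inv_mul_cancel, one_mul]
    rw [hco, map_mul, hsm, h1, h2]
    calc psi ((g : G) • x) * (p (h : G))⁻¹ * (p (g : G) * p (h : G)) * (psi x)⁻¹
        = psi ((g : G) • x) * ((p (h : G))⁻¹ * (p (g : G) * p (h : G))) * (psi x)⁻¹ := by group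
      _ = psi ((g : G) • x) * p (g : G) * (psi x)⁻¹ := by rw [hkey]
  · -- no untwisting
    rintro ⟨δ, φ, hδ, hφm, hφinv, hun⟩
    set F : X → Equiv.Perm X := fun x => ((φ x : ↥H) : Equiv.Perm X) with hFdef
    set η : X → Equiv.Perm X := fun x => (F x)⁻¹ * psi x with hηdef
    -- measurability of level sets of F and η
    have hFmeas : ∀ d : Equiv.Perm X, MeasurableSet {x | F x = d} := by
      intro d
      by_cases hd : d ∈ H
      · have hset : {x | F x = d} = {x | φ x = (⟨d, hd⟩ : ↥H)} := by
          ext x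
          constructor
          · intro hx
            exact Subtype.ext hx
          · intro hx
            exact congrArg (Subtype.val : ↥H → Equiv.Perm X) hx
        rw [hset]
        exact hφm _
      · have hset : {x | F x = d} = (∅ : Set X) := by
          ext x
          simp only [Set.mem_setOf_eq, Set.mem_empty_iff_false, iff_false]
          intro hx
          exact hd (hx ▸ (φ x).2)
        rw [hset]
        exact MeasurableSet.empty
    have hηmeas : ∀ c : Equiv.Perm X, MeasurableSet {x | η x = c} := by
      intro c
      have hset : {x | η x = c} = ⋃ b : ↥Λ,
          {x | psi x = (b : Equiv.Perm X)} ∩ {x | F x = (b : Equiv.Perm X) * c⁻¹} := by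
        ext x
        simp only [Set.mem_iUnion, Set.mem_inter_iff, Set.mem_setOf_eq, hηdef]
        constructor
        · intro hx
          refine ⟨⟨psi x, hpsi_mem x⟩, rfl, ?_⟩
          rw [← hx]
          group
        · rintro ⟨b, h1, h2⟩
          rw [h1, h2]
          group
      rw [hset]
      exact MeasurableSet.iUnion fun b => (hpsimeas _).inter (hFmeas _)
    -- a level set of η of positive measure
    have hcover : ∃ c : Equiv.Perm X, μ {x | η x = c} ≠ 0 := by
      by_contra hall
      push_neg at hall
      have huniv : (Set.univ : Set X) ⊆ ⋃ q : ↥H × ↥Λ,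
          {x | η x = ((q.1 : Equiv.Perm X))⁻¹ * (q.2 : Equiv.Perm X)} := by
        intro x _
        exact Set.mem_iUnion.mpr ⟨(φ x, ⟨psi x, hpsi_mem x⟩), rfl⟩
      have h0 : μ Set.univ = 0 :=
        measure_mono_null huniv (measure_iUnion_null fun q => hall _)
      rw [measure_univ] at h0
      exact one_ne_zero h0
    obtain ⟨c₀, hm⟩ := hcover
    set A : Set X := {x | η x = c₀} with hAdef
    have hAmeas : MeasurableSet A := hηmeas c₀
    -- helper lemmas about smul of sets
    have hsmul_eq : ∀ (g : G) (T : Set X), g • T = (fun x : X => g⁻¹ • x) ⁻¹' T := by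
      intro g T
      ext x
      simp [Set.mem_smul_set_iff_inv_smul_mem]
    have hmu_smul : ∀ (g : G) (T : Set X), MeasurableSet T → μ (g • T) = μ T := by
      intro g T hT
      rw [hsmul_eq, (hpmp g⁻¹).measure_preimage hT.nullMeasurableSet]
    have hnull_smul : ∀ (g : G) (T : Set X), μ T = 0 → μ (g • T) = 0 := by
      intro g T hT
      have hsub : g • T ⊆ (fun x : X => g⁻¹ • x) ⁻¹' (toMeasurable μ T) := by
        rw [hsmul_eq]
        exact Set.preimage_mono (subset_toMeasurable μ T)
      refine measure_mono_null hsub ?_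
      rw [(hpmp g⁻¹).measure_preimage (measurableSet_toMeasurable μ T).nullMeasurableSet,
        measure_toMeasurable]
      exact hT
    -- the equivariance relations for η
    have hR1 : ∀ k : G₁, ∀ᵐ x ∂μ, η ((k : G) • x)
        = ((δ k : ↥H) : Equiv.Perm X) * η x * (p (k : G))⁻¹ := by
      intro k
      filter_upwards [hun k] with x hx
      have hval : psi ((k : G) • x) * p (k : G) * (psi x)⁻¹
          = F ((k : G) • x) * ((δ k : ↥H) : Equiv.Perm X) * (F x)⁻¹ := by
        have h2 := congrArg (Subtype.val : ↥H → Equiv.Perm X) hx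
        simpa using h2
      have hpsival : psi ((k : G) • x)
          = F ((k : G) • x) * ((δ k : ↥H) : Equiv.Perm X) * (F x)⁻¹ * psi x * (p (k : G))⁻¹ := by
        rw [← hval]
        group
      show (F ((k : G) • x))⁻¹ * psi ((k : G) • x)
          = ((δ k : ↥H) : Equiv.Perm X) * ((F x)⁻¹ * psi x) * (p (k : G))⁻¹
      rw [hpsival]
      group
    have hR2 : ∀ s ∈ Λ, ∀ᵐ x ∂μ, η (s x) = η x * s⁻¹ := by
      intro s hs
      have hg : ∀ᵐ x ∂μ, x ∈ Good := mem_ae_iff.mpr hGood_null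
      filter_upwards [hφinv s hs, hg] with x h1 h2
      show (F (s x))⁻¹ * psi (s x) = (F x)⁻¹ * psi x * s⁻¹
      have hFeq : F (s x) = F x := congrArg (Subtype.val : ↥H → Equiv.Perm X) h1
      rw [hFeq, hpsi_equiv x h2 s hs, ← mul_assoc]
    -- key step: for k ∈ G₁, the measure of k•A ∩ A is 0 or μ A
    have hstep : ∀ k : G, ∀ _ : k ∈ G₁, μ (k • A ∩ A) = 0 ∨ μ (k • A ∩ A) = μ A := by
      intro k hk
      set D : Equiv.Perm X := ((δ ⟨k, hk⟩ : ↥H) : Equiv.Perm X) with hDdef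
      set ck : Equiv.Perm X := D * c₀ * (p k)⁻¹ with hckdef
      set Z : Set X := {x | η (k • x) = D * η x * (p k)⁻¹} with hZdef
      have hZnull : μ Zᶜ = 0 := ae_iff.mp (hR1 ⟨k, hk⟩)
      have haeeq : k • A =ᵐ[μ] {x | η x = ck} := by
        rw [MeasureTheory.ae_eq_set]
        constructor
        · refine measure_mono_null ?_ (hnull_smul k Zᶜ hZnull)
          rintro x ⟨hx1, hx2⟩
          rw [Set.mem_smul_set_iff_inv_smul_mem] at hx1 ⊢
          intro hxZ
          apply hx2
          have h3 : η (k • (k⁻¹ • x)) = D * η (k⁻¹ • x) * (p k)⁻¹ := hxZ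
          rw [smul_inv_smul] at h3
          have h4 : η (k⁻¹ • x) = c₀ := hx1
          show η x = ck
          rw [h3, h4]
        · refine measure_mono_null ?_ (hnull_smul k Zᶜ hZnull)
          rintro x ⟨hx1, hx2⟩
          rw [Set.mem_smul_set_iff_inv_smul_mem]
          intro hxZ
          apply hx2
          rw [Set.mem_smul_set_iff_inv_smul_mem]
          have h3 : η (k • (k⁻¹ • x)) = D * η (k⁻¹ • x) * (p k)⁻¹ := hxZ
          rw [smul_inv_smul] at h3
          have h4 : D * η (k⁻¹ • x) * (p k)⁻¹ = D * c₀ * (p k)⁻¹ := by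
            rw [← h3]
            exact hx1
          show η (k⁻¹ • x) = c₀
          exact mul_left_cancel (mul_right_cancel h4)
      have hmeq : μ (k • A ∩ A) = μ ({x | η x = ck} ∩ A) :=
        measure_congr (MeasureTheory.ae_eq_set_inter haeeq (ae_eq_refl A))
      by_cases hck : ck = c₀
      · right
        rw [hmeq]
        have hAA : {x | η x = ck} ∩ A = A := by
          ext x
          simp only [Set.mem_inter_iff, Set.mem_setOf_eq, hAdef, hck, and_self]
        rw [hAA]
      · left
        rw [hmeq]
        have hAA : {x | η x = ck} ∩ A = (∅ : Set X) := by
          ext x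
          simp only [Set.mem_inter_iff, Set.mem_setOf_eq, hAdef,
            Set.mem_empty_iff_false, iff_false, not_and]
          intro h1 h2
          exact hck (h1 ▸ h2 ▸ rfl)
        rw [hAA, measure_empty]
    -- pigeonhole: infinitely many gseq n in one coset of G₁
    haveI hQfin : Finite (G ⧸ G₁) :=
      Nat.finite_of_card_ne_zero hfinidx.index_ne_zero
    obtain ⟨q, hq⟩ :=
      Finite.exists_infinite_fiber fun n : ℕ => (QuotientGroup.mk (gseq n) : G ⧸ G₁)
    obtain ⟨t, ht⟩ := QuotientGroup.mk_surjective q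
    have hinf : {n : ℕ | (QuotientGroup.mk (gseq n) : G ⧸ G₁) = q}.Infinite :=
      Set.infinite_coe_iff.mp hq
    have hfib : ∀ n : ℕ, (QuotientGroup.mk (gseq n) : G ⧸ G₁) = q → t⁻¹ * gseq n ∈ G₁ := by
      intro n hn
      have hqq : (QuotientGroup.mk t : G ⧸ G₁) = QuotientGroup.mk (gseq n) := by
        rw [ht, hn]
      exact QuotientGroup.eq.mp hqq
    set B : Set X := t • A with hBdef
    have hBmeas : MeasurableSet B := by
      rw [hBdef, hsmul_eq]
      exact hmeas t⁻¹ hAmeas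
    have hBμ : μ B = μ A := hmu_smul t A hAmeas
    have htend := hgseq A B hAmeas hBmeas
    rw [hBμ] at htend
    have hvals : ∀ n : ℕ, (QuotientGroup.mk (gseq n) : G ⧸ G₁) = q →
        μ (gseq n • A ∩ B) = 0 ∨ μ (gseq n • A ∩ B) = μ A := by
      intro n hn
      have hk := hfib n hn
      have hdecomp : gseq n • A = t • ((t⁻¹ * gseq n) • A) := by
        rw [← mul_smul, mul_inv_cancel_left]
      have hint : gseq n • A ∩ B = t • ((t⁻¹ * gseq n) • A ∩ A) := by
        rw [hdecomp, hBdef, Set.smul_set_inter]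
      have hAk : MeasurableSet ((t⁻¹ * gseq n) • A) := by
        rw [hsmul_eq]
        exact hmeas _ hAmeas
      rw [hint, hmu_smul t _ (hAk.inter hAmeas)]
      exact hstep (t⁻¹ * gseq n) hk
    have hclosed : IsClosed ({0, μ A} : Set ENNReal) :=
      ((Set.finite_singleton (μ A)).insert 0).isClosed
    have hfreq : ∃ᶠ n in atTop, μ (gseq n • A ∩ B) ∈ ({0, μ A} : Set ENNReal) := by
      rw [frequently_atTop]
      intro a
      obtain ⟨b, hb1, hb2⟩ := hinf.exists_gt a
      refine ⟨b, hb2.le, ?_⟩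
      rcases hvals b hb1 with h | h
      · exact Or.inl h
      · exact Or.inr h
    have hlim : μ A * μ A ∈ ({0, μ A} : Set ENNReal) := by
      have hcl := mem_closure_of_frequently_of_tendsto hfreq htend
      rwa [hclosed.closure_eq] at hcl
    have hA1 : μ A = 1 := by
      rcases hlim with h | h
      · rcases mul_eq_zero.mp h with h' | h' <;> exact absurd h' hm
      · have hne_top : μ A ≠ ⊤ := measure_ne_top μ A
        have h' : μ A * μ A = μ A * 1 := by
          rw [mul_one]
          exact h
        exact (ENNReal.mul_right_inj hm hne_top).mp h'
    -- contradiction with the nontrivial element of Λ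
    obtain ⟨s₀sub, hs₀ne⟩ := Subgroup.ne_bot_iff_exists_ne_one.mp hΛnontriv
    set s₀ : Equiv.Perm X := (s₀sub : Equiv.Perm X) with hs₀def
    have hs₀Λ : s₀ ∈ Λ := s₀sub.2
    have hs₀1 : s₀ ≠ 1 := by
      intro hcon
      exact hs₀ne (Subtype.ext hcon)
    set Z₂ : Set X := {x | η (s₀ x) = η x * s₀⁻¹} with hZ₂def
    have hZ₂null : μ Z₂ᶜ = 0 := ae_iff.mp (hR2 s₀ hs₀Λ)
    have himg : ∀ T : Set X, s₀ '' T = (fun x : X => (s₀⁻¹ : Equiv.Perm X) x) ⁻¹' T := by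
      intro T
      ext x
      constructor
      · rintro ⟨y, hy, rfl⟩
        show (s₀⁻¹ : Equiv.Perm X) (s₀ y) ∈ T
        rw [Equiv.Perm.inv_def, Equiv.symm_apply_apply]
        exact hy
      · intro hx
        exact ⟨(s₀⁻¹ : Equiv.Perm X) x, hx, Equiv.apply_symm_apply s₀ x⟩
    set Dimg : Set X := s₀ '' A with hDimgdef
    have hDmeas : MeasurableSet Dimg := by
      rw [hDimgdef, himg]
      exact (hΛmeas _ (Λ.inv_mem hs₀Λ)).1 hAmeas
    have hDμ : μ Dimg = 1 := by
      rw [hDimgdef, himg,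
        (hΛmeas _ (Λ.inv_mem hs₀Λ)).2.measure_preimage hAmeas.nullMeasurableSet]
      exact hA1
    have hdisj : μ (A ∩ Dimg) = 0 := by
      have hsub : A ∩ Dimg ⊆ s₀ '' Z₂ᶜ := by
        rintro x ⟨hxA, y, hyA, rfl⟩
        refine ⟨y, ?_, rfl⟩
        intro hyZ
        have h1 : η (s₀ y) = η y * s₀⁻¹ := hyZ
        have h2 : η (s₀ y) = c₀ := hxA
        have h3 : η y = c₀ := hyA
        rw [h3] at h1
        rw [h1] at h2
        have h5 : c₀ * s₀⁻¹ = c₀ * 1 := by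
          rw [mul_one]
          exact h2
        have h6 : s₀⁻¹ = 1 := mul_left_cancel h5
        exact hs₀1 (by rw [← inv_inv s₀, h6, inv_one])
      have hsub2 : s₀ '' Z₂ᶜ ⊆ (fun x : X => (s₀⁻¹ : Equiv.Perm X) x) ⁻¹' (toMeasurable μ Z₂ᶜ) := by
        rw [himg]
        exact Set.preimage_mono (subset_toMeasurable μ _)
      refine measure_mono_null (hsub.trans hsub2) ?_
      rw [(hΛmeas _ (Λ.inv_mem hs₀Λ)).2.measure_preimage
        (measurableSet_toMeasurable μ _).nullMeasurableSet, measure_toMeasurable]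
      exact hZ₂null
    have hui := measure_union_add_inter (μ := μ) A hDmeas
    rw [hdisj, add_zero, hA1, hDμ] at hui
    have hcontr : (2 : ENNReal) ≤ 1 := by
      calc (2 : ENNReal) = 1 + 1 := by norm_num
        _ = μ (A ∪ Dimg) := hui.symm
        _ ≤ 1 := prob_le_one
    norm_num at hcontr
end

section
/- Let I be a countable index set and let (pᵢ)_{i∈I} be a family of prime numbers. For a positive integer m, the following are equivalent: (1) there exists a finite subgroup G of the direct product group ∏_{i∈I} ℤ/pᵢℤ with |G| = m; (2) there exists a finite subset J ⊆ I such that m divides ∏_{i∈J} pᵢ. -/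
/-- Any divisor of a product of primes over a finset is itself a sub-product. -/
lemma exists_subset_prod_eq {I : Type} (p : I → ℕ) (hp : ∀ i, (p i).Prime)
    (J : Finset I) : ∀ m : ℕ, 0 < m → m ∣ ∏ i ∈ J, p i →
    ∃ K : Finset I, K ⊆ J ∧ m = ∏ i ∈ K, p i := by
  classical
  induction J using Finset.induction with
  | empty =>
    intro m hm h
    simp only [Finset.prod_empty, Nat.dvd_one] at h
    exact ⟨∅, by simp, by simp [h]⟩
  | insert _ _ ha ih =>
    rename_i a J
    intro m hm h
    rw [Finset.prod_insert ha] at h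
    by_cases hpa : p a ∣ m
    · obtain ⟨m', rfl⟩ := hpa
      have hm' : 0 < m' := Nat.pos_of_ne_zero (by rintro rfl; simp at hm)
      have hdvd : m' ∣ ∏ i ∈ J, p i :=
        (Nat.mul_dvd_mul_iff_left (hp a).pos).mp h
      obtain ⟨K, hKJ, hKe⟩ := ih m' hm' hdvd
      have haK : a ∉ K := fun hmem => ha (hKJ hmem)
      exact ⟨insert a K, Finset.insert_subset_insert a hKJ,
        by rw [Finset.prod_insert haK, ← hKe]⟩
    · have hco : Nat.Coprime (p a) m := ((hp a).coprime_iff_not_dvd).mpr hpa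
      have hdvd : m ∣ ∏ i ∈ J, p i := (Nat.Coprime.dvd_of_dvd_mul_left hco.symm) h
      obtain ⟨K, hKJ, hKe⟩ := ih m hm hdvd
      exact ⟨K, hKJ.trans (Finset.subset_insert a J), hKe⟩

/-- Let `I` be a countable index set and `(pᵢ)` a family of primes.
For a positive integer `m`, there is a finite subgroup of order `m` in the direct
product `∏ᵢ ℤ/pᵢℤ` if and only if `m` divides `∏_{i ∈ J} pᵢ` for some finite `J ⊆ I`. -/
theorem finite_subgroup_orders_of_pi_zmod (I : Type) [Countable I] (p : I → ℕ)
    (hp : ∀ i, (p i).Prime) (m : ℕ) (hm : 0 < m) :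
    (∃ G : AddSubgroup (∀ i, ZMod (p i)), Finite G ∧ Nat.card G = m) ↔
      ∃ J : Finset I, m ∣ ∏ i ∈ J, p i := by
  classical
  haveI : ∀ i, NeZero (p i) := fun i => ⟨(hp i).ne_zero⟩
  constructor
  · rintro ⟨G, hfin, rfl⟩
    haveI := Fintype.ofFinite G
    -- choose a witness index for each nonzero element of G
    have hwit : ∀ x : {x : G // (x : ∀ i, ZMod (p i)) ≠ 0}, ∃ i, (x.1 : ∀ i, ZMod (p i)) i ≠ 0 := by
      rintro ⟨x, hx⟩
      by_contra hc
      push_neg at hc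
      exact hx (funext hc)
    let f : {x : G // (x : ∀ i, ZMod (p i)) ≠ 0} → I := fun x => (hwit x).choose
    have hf : ∀ x, (x.1 : ∀ i, ZMod (p i)) (f x) ≠ 0 := fun x => (hwit x).choose_spec
    let J : Finset I := Finset.image f Finset.univ
    refine ⟨J, ?_⟩
    -- restriction homomorphism
    let φ : G →+ (∀ i : J, ZMod (p i)) :=
      { toFun := fun x i => (x : ∀ i, ZMod (p i)) i
        map_zero' := rfl
        map_add' := fun x y => rfl }
    have hinj : Function.Injective φ := by
      rw [injective_iff_map_eq_zero]
      intro x hx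
      by_contra hne
      have hx0 : (x : ∀ i, ZMod (p i)) ≠ 0 := fun h => hne (Subtype.ext h)
      have hmem : f ⟨x, hx0⟩ ∈ J := Finset.mem_image_of_mem f (Finset.mem_univ _)
      have := congrFun hx ⟨f ⟨x, hx0⟩, hmem⟩
      exact hf ⟨x, hx0⟩ this
    have h1 : Nat.card G = Nat.card φ.range := Nat.card_congr (Equiv.ofInjective φ hinj)
    have h2 : Nat.card φ.range ∣ Nat.card (∀ i : J, ZMod (p i)) :=
      AddSubgroup.card_addSubgroup_dvd_card φ.range
    have h3 : Nat.card (∀ i : J, ZMod (p i)) = ∏ i ∈ J, p i := by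
      rw [Nat.card_pi]
      simp only [Nat.card_zmod]
      exact Finset.prod_coe_sort J p
    rw [h1, ← h3]
    exact h2
  · rintro ⟨J, hJ⟩
    obtain ⟨K, hKJ, rfl⟩ := exists_subset_prod_eq p hp J m hm hJ
    -- the subgroup of elements supported on K
    let G : AddSubgroup (∀ i, ZMod (p i)) :=
      { carrier := {x | ∀ i ∉ K, x i = 0}
        zero_mem' := fun i _ => rfl
        add_mem' := by
          intro x y hx hy i hi
          simp [hx i hi, hy i hi]
        neg_mem' := by
          intro x hx i hi
          simp [hx i hi] }
    let e : G → (∀ i : K, ZMod (p i)) := fun x i => (x : ∀ i, ZMod (p i)) i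
    have hbij : Function.Bijective e := by
      constructor
      · intro x y hxy
        ext i
        by_cases hi : i ∈ K
        · exact congrFun hxy ⟨i, hi⟩
        · rw [x.2 i hi, y.2 i hi]
      · intro y
        refine ⟨⟨fun i => if h : i ∈ K then y ⟨i, h⟩ else 0, fun i hi => dif_neg hi⟩, ?_⟩
        funext i
        exact dif_pos i.2
    have hfin : Finite G := Finite.of_injective e hbij.1
    refine ⟨G, hfin, ?_⟩
    have h3 : Nat.card (∀ i : K, ZMod (p i)) = ∏ i ∈ K, p i := by
      rw [Nat.card_pi]
      simp only [Nat.card_zmod]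
      exact Finset.prod_coe_sort K p
    rw [← h3]
    exact Nat.card_eq_of_bijective e hbij
end

section
/- With Γ = SL(3,ℚ) *_Σ SL(3,K) and Λ = Λ₁ * Λ₂ as in the context: for every g ∈ Γ ∖ Λ, the orbit of the coset gΛ ∈ Γ/Λ under left translation by Λ is infinite, i.e. the set { λgΛ : λ ∈ Λ } ⊆ Γ/Λ is infinite. -/
open Matrix

/-- The matrix `A = [[1,0,0],[1,q,0],[1,0,q⁻¹]]` as an element of `SL(3,F)`. -/
def AmatSL (F : Type) [Field F] [CharZero F] (q : ℚ) (hq : q ≠ 0) :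
    Matrix.SpecialLinearGroup (Fin 3) F :=
  ⟨!![1, 0, 0; 1, (q : F), 0; 1, 0, (q : F)⁻¹], by
    have hq' : (q : F) ≠ 0 := by exact_mod_cast hq
    simp [Matrix.det_fin_three, Matrix.vecHead, Matrix.vecTail]
    field_simp⟩

/-- The upper unitriangular matrix `[[1,a,b],[0,1,c],[0,0,1]]` with integer entries
as an element of `SL(3,F)`. -/
def unitriSL (F : Type) [Field F] (a b c : ℤ) : Matrix.SpecialLinearGroup (Fin 3) F :=
  ⟨!![1, (a : F), (b : F); 0, 1, (c : F); 0, 0, 1], by simp [Matrix.det_fin_three, Matrix.vecHead, Matrix.vecTail]⟩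

lemma unitriSL_mul (F : Type) [Field F] (a b c a' b' c' : ℤ) :
    unitriSL F a b c * unitriSL F a' b' c'
      = unitriSL F (a + a') (b + b' + a * c') (c + c') := by
  apply Subtype.ext
  show (unitriSL F a b c).val * (unitriSL F a' b' c').val = _
  ext i j
  fin_cases i <;> fin_cases j <;>
    simp [unitriSL, Matrix.mul_apply, Fin.sum_univ_three, Matrix.vecHead, Matrix.vecTail] <;> push_cast <;> ring

/-- The group `Λᵢ` of upper unitriangular matrices with integer entries,
as a subgroup of `SL(3,F)`. -/
def unitriSubgroup (F : Type) [Field F] : Subgroup (Matrix.SpecialLinearGroup (Fin 3) F) where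
  carrier := {M | ∃ a b c : ℤ, M = unitriSL F a b c}
  one_mem' := ⟨0, 0, 0, by
    apply Subtype.ext
    show (1 : Matrix (Fin 3) (Fin 3) F) = _
    ext i j
    fin_cases i <;> fin_cases j <;> simp [unitriSL, Matrix.vecHead, Matrix.vecTail]⟩
  mul_mem' := by
    rintro _ _ ⟨a, b, c, rfl⟩ ⟨a', b', c', rfl⟩
    exact ⟨a + a', b + b' + a * c', c + c', (unitriSL_mul F a b c a' b' c').symm ▸ rfl⟩
  inv_mem' := by
    rintro _ ⟨a, b, c, rfl⟩
    refine ⟨-a, a * c - b, -c, ?_⟩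
    rw [inv_eq_iff_mul_eq_one, unitriSL_mul]
    apply Subtype.ext
    show (unitriSL F _ _ _).val = (1 : Matrix (Fin 3) (Fin 3) F)
    ext i j
    fin_cases i <;> fin_cases j <;> simp [unitriSL, Matrix.vecHead, Matrix.vecTail] <;> push_cast <;> ring

/-- The pair of factors `Γ₁ = SL(3,ℚ)` (index `false`) and `Γ₂ = SL(3,K)` (index `true`). -/
def SLfam (K : Type) [Field K] : Bool → Type
  | false => Matrix.SpecialLinearGroup (Fin 3) ℚ
  | true => Matrix.SpecialLinearGroup (Fin 3) K

instance (K : Type) [Field K] : (i : Bool) → Group (SLfam K i)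
  | false => inferInstanceAs (Group (Matrix.SpecialLinearGroup (Fin 3) ℚ))
  | true => inferInstanceAs (Group (Matrix.SpecialLinearGroup (Fin 3) K))

/-- The element `A`, in each of the two factors. -/
def AmatFam (K : Type) [Field K] [CharZero K] (q : ℚ) (hq : q ≠ 0) :
    (i : Bool) → SLfam K i
  | false => AmatSL ℚ q hq
  | true => AmatSL K q hq

/-- The embeddings of `Σ = ℤ` into the two factors, sending the generator to `A`. -/
def sigmaMaps (K : Type) [Field K] [CharZero K] (q : ℚ) (hq : q ≠ 0) :
    (i : Bool) → Multiplicative ℤ →* SLfam K i :=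
  fun i => zpowersHom (SLfam K i) (AmatFam K q hq i)

/-- The amalgamated free product `Γ = SL(3,ℚ) *_Σ SL(3,K)`. -/
abbrev AmalGamma (K : Type) [Field K] [CharZero K] (q : ℚ) (hq : q ≠ 0) : Type :=
  Monoid.PushoutI (sigmaMaps K q hq)

/-- The canonical embeddings `Γᵢ → Γ`. -/
def amalInc (K : Type) [Field K] [CharZero K] (q : ℚ) (hq : q ≠ 0) (i : Bool) :
    SLfam K i →* AmalGamma K q hq :=
  Monoid.PushoutI.of (φ := sigmaMaps K q hq) i

/-- The subgroup of `Γᵢ` corresponding to `Λᵢ`, the integer unitriangular matrices. -/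
def unitriFam (K : Type) [Field K] : (i : Bool) → Subgroup (SLfam K i)
  | false => unitriSubgroup ℚ
  | true => unitriSubgroup K

/-- The subgroup `Λ = Λ₁ * Λ₂` of `Γ` generated by the images of `Λ₁` and `Λ₂`. -/
def amalLambda (K : Type) [Field K] [CharZero K] (q : ℚ) (hq : q ≠ 0) :
    Subgroup (AmalGamma K q hq) :=
  ((unitriFam K false).map (amalInc K q hq false)) ⊔ ((unitriFam K true).map (amalInc K q hq true))

/-- The subgroup `Σ = {Aᵏ} ≤ Γ` (the common image of the two copies of `Σ`). -/
def amalSigma (K : Type) [Field K] [CharZero K] (q : ℚ) (hq : q ≠ 0) :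
    Subgroup (AmalGamma K q hq) :=
  Subgroup.zpowers (amalInc K q hq false (AmatFam K q hq false))

noncomputable section

def tq (q : ℚ) (k : ℤ) : ℚ := (q^k - 1)/(q-1)
def sq' (q : ℚ) (k : ℤ) : ℚ := q * (q^(-k) - 1)/(1-q)

def Mk (q : ℚ) (hq0 : q ≠ 0) (k : ℤ) : Matrix.SpecialLinearGroup (Fin 3) ℚ :=
  ⟨!![1, 0, 0; tq q k, q^k, 0; sq' q k, 0, q^(-k)], by
    simp [Matrix.det_fin_three, Matrix.vecHead, Matrix.vecTail, _root_.zpow_neg]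
    exact mul_inv_cancel₀ (zpow_ne_zero _ hq0)⟩

lemma Mk_mul_A (q : ℚ) (hq0 : q ≠ 0) (hq1 : q ≠ 1) (k : ℤ) :
    Mk q hq0 k * AmatSL ℚ q hq0 = Mk q hq0 (k+1) := by
  have h1 : q - 1 ≠ 0 := sub_ne_zero.2 hq1
  have h2 : (1:ℚ) - q ≠ 0 := sub_ne_zero.2 (Ne.symm hq1)
  apply Subtype.ext
  show (Mk q hq0 k).val * (AmatSL ℚ q hq0).val = _
  ext i j
  fin_cases i <;> fin_cases j <;>
    simp [Mk, AmatSL, Matrix.mul_apply, Fin.sum_univ_three, tq, sq', Matrix.vecHead,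
      Matrix.vecTail, zpow_add₀ hq0, _root_.zpow_neg] <;>
    field_simp <;> ring

lemma A_zpow (q : ℚ) (hq0 : q ≠ 0) (hq1 : q ≠ 1) (k : ℤ) :
    (AmatSL ℚ q hq0)^k = Mk q hq0 k := by
  have h0 : (AmatSL ℚ q hq0)^(0:ℤ) = Mk q hq0 0 := by
    rw [zpow_zero]
    apply Subtype.ext
    show (1 : Matrix (Fin 3) (Fin 3) ℚ) = _
    ext i j
    fin_cases i <;> fin_cases j <;> simp [Mk, tq, sq', Matrix.vecHead, Matrix.vecTail]
  induction k using Int.induction_on with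
  | zero => exact h0
  | succ n ih => rw [_root_.zpow_add_one, ih, Mk_mul_A q hq0 hq1]
  | pred n ih =>
    rw [_root_.zpow_sub_one, ih]
    have := Mk_mul_A q hq0 hq1 (-(n:ℤ)-1)
    simp only [sub_add_cancel] at this
    rw [← this]
    group

lemma q_zpow_eq_one (q : ℚ) (hq0 : q ≠ 0) (hq1 : q ≠ 1) (hqm1 : q ≠ -1)
    (k : ℤ) (h : q^k = 1) : k = 0 := by
  have habs : |q|^k = 1 := by
    have h2 : |q ^ k| = |q| ^ k := map_zpow₀ (absHom : ℚ →*₀ ℚ) q k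
    rw [← h2, h, abs_one]
  have h0 : (0:ℚ) < |q| := abs_pos.2 hq0
  have h1' : |q| ≠ 1 := by
    intro hh
    rcases (abs_eq (le_of_lt one_pos)).1 hh with h | h
    · exact hq1 h
    · exact hqm1 h
  apply zpow_right_injective₀ h0 h1'
  simpa using habs

lemma unitri_zero (F : Type) [Field F] : unitriSL F 0 0 0 = 1 := by
  apply Subtype.ext
  show _ = (1 : Matrix (Fin 3) (Fin 3) F)
  ext i j
  fin_cases i <;> fin_cases j <;> simp [unitriSL, Matrix.vecHead, Matrix.vecTail]

lemma sq'_ne_zero (q : ℚ) (hq0 : q ≠ 0) (hq1 : q ≠ 1) (hqm1 : q ≠ -1) (k : ℤ) (hk : k ≠ 0) :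
    sq' q k ≠ 0 := by
  have h1 : q ^ (-k) ≠ 1 := fun hh => hk (by
    have := q_zpow_eq_one q hq0 hq1 hqm1 (-k) hh; omega)
  have h2 : (1:ℚ) - q ≠ 0 := sub_ne_zero.2 (Ne.symm hq1)
  exact div_ne_zero (mul_ne_zero hq0 (sub_ne_zero.2 h1)) h2

lemma tq_ne_zero (q : ℚ) (hq0 : q ≠ 0) (hq1 : q ≠ 1) (hqm1 : q ≠ -1) (k : ℤ) (hk : k ≠ 0) :
    tq q k ≠ 0 := by
  have h1 : q ^ k ≠ 1 := fun hh => hk (q_zpow_eq_one q hq0 hq1 hqm1 k hh)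
  exact div_ne_zero (sub_ne_zero.2 h1) (sub_ne_zero.2 hq1)

lemma conj_fix (q : ℚ) (hq0 : q ≠ 0) (hq1 : q ≠ 1) (hqm1 : q ≠ -1)
    (k : ℤ) (a b c a' b' c' : ℤ) (hk : k ≠ 0)
    (h : Mk q hq0 k * unitriSL ℚ a' b' c' = unitriSL ℚ a b c * Mk q hq0 k) :
    a = 0 ∧ b = 0 ∧ c = 0 := by
  have ht := tq_ne_zero q hq0 hq1 hqm1 k hk
  have hs := sq'_ne_zero q hq0 hq1 hqm1 k hk
  have hQ0 : q ^ k ≠ 0 := zpow_ne_zero _ hq0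
  have hQ0' : q ^ (-k) ≠ 0 := zpow_ne_zero _ hq0
  have hv : (Mk q hq0 k).val * (unitriSL ℚ a' b' c').val
      = (unitriSL ℚ a b c).val * (Mk q hq0 k).val := congrArg Subtype.val h
  have E : ∀ i j, ((Mk q hq0 k).val * (unitriSL ℚ a' b' c').val) i j
      = ((unitriSL ℚ a b c).val * (Mk q hq0 k).val) i j := fun i j => by rw [hv]
  have e10 := E 1 0
  have e21 := E 2 1
  have e01 := E 0 1
  have e22 := E 2 2
  have e02 := E 0 2
  simp [Mk, unitriSL, Matrix.mul_apply, Fin.sum_univ_three] at e10 e21 e01 e22 e02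
  have hc : c = 0 := e10.resolve_right hs
  have ha' : a' = 0 := e21.resolve_left hs
  have hb' : b' = 0 := e22.resolve_left hs
  subst ha' hb'
  have ha : (a:ℚ) = 0 := by
    rcases mul_eq_zero.1 (show (a:ℚ) * q ^ k = 0 by push_cast at e01; linarith) with h | h
    · exact h
    · exact absurd h hQ0
  have hb : (b:ℚ) = 0 := by
    rcases mul_eq_zero.1 (show (b:ℚ) * (q ^ k)⁻¹ = 0 by push_cast at e02; linarith) with h | h
    · exact h
    · exact absurd h (inv_ne_zero hQ0)
  refine ⟨by exact_mod_cast ha, by exact_mod_cast hb, hc⟩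

section Transfer
variable (F : Type) [Field F] [CharZero F]

/-- entrywise cast map `SL₃ℚ → SL₃F` -/
def mapQ : Matrix.SpecialLinearGroup (Fin 3) ℚ →* Matrix.SpecialLinearGroup (Fin 3) F :=
  Matrix.SpecialLinearGroup.map (Rat.castHom F)

lemma mapQ_inj : Function.Injective (mapQ F) := by
  intro x y h
  apply Subtype.ext
  ext i j
  have := congrArg Subtype.val h
  have h2 := congrFun (congrFun this i) j
  simp [mapQ, Matrix.SpecialLinearGroup.map_apply_coe, RingHom.mapMatrix_apply] at h2
  exact_mod_cast h2

lemma mapQ_A (q : ℚ) (hq0 : q ≠ 0) : mapQ F (AmatSL ℚ q hq0) = AmatSL F q hq0 := by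
  apply Subtype.ext
  ext i j
  simp only [mapQ, Matrix.SpecialLinearGroup.map_apply_coe, RingHom.mapMatrix_apply, Matrix.map_apply]
  fin_cases i <;> fin_cases j <;>
    simp [mapQ, AmatSL, Matrix.SpecialLinearGroup.map, Matrix.vecHead, Matrix.vecTail]

lemma mapQ_unitri (a b c : ℤ) : mapQ F (unitriSL ℚ a b c) = unitriSL F a b c := by
  apply Subtype.ext
  ext i j
  simp only [mapQ, Matrix.SpecialLinearGroup.map_apply_coe, RingHom.mapMatrix_apply, Matrix.map_apply]
  fin_cases i <;> fin_cases j <;>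
    simp [mapQ, unitriSL, Matrix.SpecialLinearGroup.map, Matrix.vecHead, Matrix.vecTail]

/-- Conjugation by a nonzero power of `A` never fixes the integer unitriangular group
except trivially. -/
lemma conj_fix_F (q : ℚ) (hq0 : q ≠ 0) (hq1 : q ≠ 1) (hqm1 : q ≠ -1)
    (k : ℤ) (a b c a' b' c' : ℤ) (hk : k ≠ 0)
    (h : (AmatSL F q hq0)^k * unitriSL F a' b' c' = unitriSL F a b c * (AmatSL F q hq0)^k) :
    a = 0 ∧ b = 0 ∧ c = 0 := by
  apply conj_fix q hq0 hq1 hqm1 k a b c a' b' c' hk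
  apply mapQ_inj F
  rw [_root_.map_mul, _root_.map_mul, mapQ_unitri, mapQ_unitri, ← A_zpow q hq0 hq1, map_zpow, mapQ_A]
  exact h

/-- `A^k` is upper unitriangular only for `k = 0`. -/
lemma Azpow_eq_unitri (q : ℚ) (hq0 : q ≠ 0) (hq1 : q ≠ 1) (hqm1 : q ≠ -1)
    (k : ℤ) (a b c : ℤ) (h : (AmatSL F q hq0)^k = unitriSL F a b c) : k = 0 := by
  have h2 : (AmatSL ℚ q hq0)^k = unitriSL ℚ a b c := by
    apply mapQ_inj F
    rw [map_zpow, mapQ_A, mapQ_unitri]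
    exact h
  rw [A_zpow q hq0 hq1] at h2
  have := congrFun (congrFun (congrArg Subtype.val h2) 1) 1
  simp [Mk, unitriSL] at this
  exact q_zpow_eq_one q hq0 hq1 hqm1 k this

lemma Azpow_injective (q : ℚ) (hq0 : q ≠ 0) (hq1 : q ≠ 1) (hqm1 : q ≠ -1) :
    Function.Injective (fun k : ℤ => (AmatSL F q hq0)^k) := by
  intro j k h
  simp only [] at h
  have h2 : (AmatSL F q hq0)^(j - k) = unitriSL F 0 0 0 := by
    rw [unitri_zero, _root_.zpow_sub, h, mul_inv_cancel]
  have := Azpow_eq_unitri F q hq0 hq1 hqm1 _ 0 0 0 h2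
  omega

end Transfer

end

namespace AmalAux
open Monoid Monoid.PushoutI

variable (K : Type) [Field K] [CharZero K] (q : ℚ) (hq0 : q ≠ 0)

/-- The base subgroup `Σ ≤ Γ`. -/
def Bsub : Subgroup (AmalGamma K q hq0) := (Monoid.PushoutI.base (sigmaMaps K q hq0)).range

/-- The factor subgroups `Γᵢ ≤ Γ`. -/
def Rng (i : Bool) : Subgroup (AmalGamma K q hq0) := (amalInc K q hq0 i).range

/-- The subgroups `Λᵢ ≤ Γ`. -/
def Lsub (i : Bool) : Subgroup (AmalGamma K q hq0) := (unitriFam K i).map (amalInc K q hq0 i)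

lemma phi_inj (hq1 : q ≠ 1) (hqm1 : q ≠ -1) :
    ∀ i, Function.Injective (sigmaMaps K q hq0 i) := by
  intro i
  cases i
  · intro x y h
    have h2 : AmatSL ℚ q hq0 ^ x.toAdd = AmatSL ℚ q hq0 ^ y.toAdd := h
    have := Azpow_injective ℚ q hq0 hq1 hqm1 h2
    exact Multiplicative.toAdd.injective this
  · intro x y h
    have h2 : AmatSL K q hq0 ^ x.toAdd = AmatSL K q hq0 ^ y.toAdd := h
    have := Azpow_injective K q hq0 hq1 hqm1 h2
    exact Multiplicative.toAdd.injective this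

lemma amalInc_inj (hq1 : q ≠ 1) (hqm1 : q ≠ -1) (i : Bool) :
    Function.Injective (amalInc K q hq0 i) :=
  Monoid.PushoutI.of_injective (phi_inj K q hq0 hq1 hqm1) i

lemma base_le_Rng (i : Bool) : Bsub K q hq0 ≤ Rng K q hq0 i := by
  rintro x ⟨s, rfl⟩
  exact ⟨sigmaMaps K q hq0 i s, (Monoid.PushoutI.of_apply_eq_base (sigmaMaps K q hq0) i s)⟩

/-- Letters of alternating words: elements of `Γᵢ ∖ Σ`. -/
def Alt (l : List (Bool × AmalGamma K q hq0)) : Prop :=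
  l.Chain' (fun p q => p.1 ≠ q.1) ∧ ∀ p ∈ l, p.2 ∈ Rng K q hq0 p.1 ∧ p.2 ∉ Bsub K q hq0

/-- Product of a list of letters. -/
def prodA (l : List (Bool × AmalGamma K q hq0)) : AmalGamma K q hq0 := (l.map Prod.snd).prod

lemma prodA_nil : prodA K q hq0 [] = 1 := rfl

lemma prodA_cons (p : Bool × AmalGamma K q hq0) (l : List (Bool × AmalGamma K q hq0)) :
    prodA K q hq0 (p :: l) = p.2 * prodA K q hq0 l := by
  simp [prodA]

lemma prodA_append (l₁ l₂ : List (Bool × AmalGamma K q hq0)) :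
    prodA K q hq0 (l₁ ++ l₂) = prodA K q hq0 l₁ * prodA K q hq0 l₂ := by
  simp [prodA]

/-- Any alternating word lifts to a reduced `CoprodI` word. -/
lemma exW (hq1 : q ≠ 1) (hqm1 : q ≠ -1) (l : List (Bool × AmalGamma K q hq0)) (hl : Alt K q hq0 l) :
    ∃ w : Monoid.CoprodI.Word (SLfam K),
      Monoid.PushoutI.Reduced (sigmaMaps K q hq0) w ∧
      Monoid.PushoutI.ofCoprodI (φ := sigmaMaps K q hq0) w.prod = prodA K q hq0 l ∧
      w.toList.map Sigma.fst = l.map Prod.fst := by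
  induction l with
  | nil => exact ⟨.empty, by rintro g hg; simp [Monoid.CoprodI.Word.empty] at hg,
      by simp [prodA_nil, Monoid.CoprodI.Word.prod_empty], rfl⟩
  | cons p l ih =>
    obtain ⟨w, hred, hprod, hmap⟩ := ih ⟨(List.isChain_cons.1 hl.1).2,
      fun x hx => hl.2 x (List.mem_cons_of_mem _ hx)⟩
    obtain ⟨hpR, hpB⟩ := hl.2 p (List.mem_cons_self)
    obtain ⟨m, hm⟩ := hpR
    have hm1 : m ≠ 1 := by
      rintro rfl
      exact hpB (by rw [← hm, _root_.map_one]; exact one_mem _)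
    have hfst : w.fstIdx ≠ some p.1 := by
      rw [Monoid.CoprodI.Word.fstIdx, ← List.head?_map, hmap, List.head?_map]
      cases l with
      | nil => simp
      | cons r t =>
        have := (List.isChain_cons.1 hl.1).1 r rfl
        simp [Ne.symm this]
    refine ⟨Monoid.CoprodI.Word.cons m w hfst hm1, ?_, ?_, ?_⟩
    · intro g hg
      rcases List.mem_cons.1 hg with h | h
      · subst h
        rintro ⟨s, hs⟩
        apply hpB
        have hs' : sigmaMaps K q hq0 p.1 s = m := hs
        refine ⟨s, ?_⟩
        rw [← hm, ← hs']
        exact (Monoid.PushoutI.of_apply_eq_base (sigmaMaps K q hq0) p.1 s).symm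
      · exact hred g h
    · rw [Monoid.CoprodI.Word.prod_cons p.1 m w hm1 hfst, prodA_cons,
        map_mul (Monoid.PushoutI.ofCoprodI (φ := sigmaMaps K q hq0)),
        Monoid.PushoutI.ofCoprodI_of, hprod]
      exact congrArg (· * prodA K q hq0 l) hm
    · show p.1 :: _ = _
      simp [hmap]

/-- K1a: a nonempty alternating word has product outside `Σ`. -/
lemma prodA_notin_B (hq1 : q ≠ 1) (hqm1 : q ≠ -1) (l : List (Bool × AmalGamma K q hq0))
    (hl : Alt K q hq0 l) (hne : l ≠ []) : prodA K q hq0 l ∉ Bsub K q hq0 := by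
  obtain ⟨w, hred, hprod, hmap⟩ := exW K q hq0 hq1 hqm1 l hl
  intro hB
  have hemp := Monoid.PushoutI.Reduced.eq_empty_of_mem_range (phi_inj K q hq0 hq1 hqm1) hred
    (by rw [hprod]; exact hB)
  rw [hemp] at hmap
  rcases l with _ | ⟨a, t⟩
  · exact hne rfl
  · simp [Monoid.CoprodI.Word.empty] at hmap

/-- K1b: alternating words with equal product have equal type lists. -/
lemma alt_types_eq (hq1 : q ≠ 1) (hqm1 : q ≠ -1) (l l' : List (Bool × AmalGamma K q hq0))
    (hl : Alt K q hq0 l) (hl' : Alt K q hq0 l') (h : prodA K q hq0 l = prodA K q hq0 l') :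
    l.map Prod.fst = l'.map Prod.fst := by
  obtain ⟨d⟩ := Monoid.PushoutI.NormalWord.transversal_nonempty (sigmaMaps K q hq0) (phi_inj K q hq0 hq1 hqm1)
  obtain ⟨w, hred, hprod, hmap⟩ := exW K q hq0 hq1 hqm1 l hl
  obtain ⟨w', hred', hprod', hmap'⟩ := exW K q hq0 hq1 hqm1 l' hl'
  obtain ⟨n, hn1, hn2⟩ := Monoid.PushoutI.Reduced.exists_normalWord_prod_eq d hred
  obtain ⟨n', hn'1, hn'2⟩ := Monoid.PushoutI.Reduced.exists_normalWord_prod_eq d hred'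
  have : n = n' := Monoid.PushoutI.NormalWord.prod_injective (by
    rw [hn1, hn'1, hprod, hprod', h])
  rw [← hmap, ← hn2, ← hmap', ← hn'2, this]

lemma chain'_of_fst_eq (l l' : List (Bool × AmalGamma K q hq0))
    (h : l'.map Prod.fst = l.map Prod.fst)
    (hc : l.Chain' (fun p q => p.1 ≠ q.1)) : l'.Chain' (fun p q => p.1 ≠ q.1) := by
  have h1 : (l.map Prod.fst).Chain' (· ≠ ·) := (List.isChain_map _).2 hc
  rw [← h] at h1
  exact (List.isChain_map _).1 h1

lemma Alt_append_left (l₁ l₂ : List (Bool × AmalGamma K q hq0))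
    (h : Alt K q hq0 (l₁ ++ l₂)) : Alt K q hq0 l₁ :=
  ⟨(List.isChain_append.1 h.1).1, fun p hp => h.2 p (List.mem_append_left _ hp)⟩

/-- K2: the last letters of alternating words with equal products agree up to `Σ`. -/
lemma last_match (hq1 : q ≠ 1) (hqm1 : q ≠ -1) (u v : List (Bool × AmalGamma K q hq0))
    (i : Bool) (x y : AmalGamma K q hq0)
    (hu : Alt K q hq0 (u ++ [(i, x)])) (hv : Alt K q hq0 (v ++ [(i, y)]))
    (h : prodA K q hq0 (u ++ [(i, x)]) = prodA K q hq0 (v ++ [(i, y)])) :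
    x * y⁻¹ ∈ Bsub K q hq0 := by
  by_contra hxy
  have hx := hu.2 (i, x) (List.mem_append_right _ (List.mem_singleton_self _))
  have hy := hv.2 (i, y) (List.mem_append_right _ (List.mem_singleton_self _))
  have hxyR : x * y⁻¹ ∈ Rng K q hq0 i := mul_mem hx.1 (inv_mem hy.1)
  have halt : Alt K q hq0 (u ++ [(i, x * y⁻¹)]) := by
    refine ⟨chain'_of_fst_eq K q hq0 _ _ (by simp) hu.1, ?_⟩
    intro p hp
    rcases List.mem_append.1 hp with h' | h'
    · exact hu.2 p (List.mem_append_left _ h')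
    · rw [List.mem_singleton.1 h']
      exact ⟨hxyR, hxy⟩
  have hprod : prodA K q hq0 (u ++ [(i, x * y⁻¹)]) = prodA K q hq0 v := by
    have h2 : prodA K q hq0 u * x = prodA K q hq0 v * y := by
      simpa [prodA_append, prodA_cons, prodA_nil, mul_assoc] using h
    simp only [prodA_append, prodA_cons, prodA_nil, mul_one]
    rw [← mul_assoc, h2, mul_assoc, mul_inv_cancel, mul_one]
  have h3 := alt_types_eq K q hq0 hq1 hqm1 _ _ halt
    (Alt_append_left K q hq0 v [(i,y)] hv) hprod
  have h4 := alt_types_eq K q hq0 hq1 hqm1 _ _ hu hv h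
  simp at h3 h4
  have := congrArg List.length h3
  have := congrArg List.length h4
  simp at *
  omega

/-- inverse-reverse of a list of letters -/
def invRev (l : List (Bool × AmalGamma K q hq0)) : List (Bool × AmalGamma K q hq0) :=
  (l.map (fun p => (p.1, p.2⁻¹))).reverse

lemma invRev_fst (l : List (Bool × AmalGamma K q hq0)) :
    (invRev K q hq0 l).map Prod.fst = (l.map Prod.fst).reverse := by
  simp [invRev, List.map_reverse, Function.comp]

lemma Alt_invRev (l : List (Bool × AmalGamma K q hq0)) (hl : Alt K q hq0 l) :
    Alt K q hq0 (invRev K q hq0 l) := by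
  constructor
  · rw [invRev, List.Chain', List.isChain_reverse]
    apply (List.isChain_map _).2
    exact List.IsChain.imp (fun a b h => Ne.symm h) hl.1
  · intro p hp
    simp only [invRev, List.mem_reverse, List.mem_map] at hp
    obtain ⟨r, hr, rfl⟩ := hp
    obtain ⟨h1, h2⟩ := hl.2 r hr
    exact ⟨inv_mem h1, fun hB => h2 (by simpa using inv_mem hB)⟩

lemma prodA_invRev (l : List (Bool × AmalGamma K q hq0)) :
    prodA K q hq0 (invRev K q hq0 l) = (prodA K q hq0 l)⁻¹ := by
  induction l with
  | nil => simp [invRev, prodA_nil]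
  | cons p l ih =>
    have : invRev K q hq0 (p :: l) = invRev K q hq0 l ++ [(p.1, p.2⁻¹)] := by
      simp [invRev]
    rw [this, prodA_append, ih, prodA_cons, prodA_cons, prodA_nil]
    simp [mul_comm]

/-- conjugating all letters by an element of `Σ` -/
lemma Alt_conj (b : AmalGamma K q hq0) (hb : b ∈ Bsub K q hq0)
    (l : List (Bool × AmalGamma K q hq0)) (hl : Alt K q hq0 l) :
    Alt K q hq0 (l.map (fun p => (p.1, b⁻¹ * p.2 * b))) := by
  constructor
  · exact chain'_of_fst_eq K q hq0 _ _ (by simp [Function.comp]) hl.1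
  · intro p hp
    simp only [List.mem_map] at hp
    obtain ⟨r, hr, rfl⟩ := hp
    obtain ⟨h1, h2⟩ := hl.2 r hr
    refine ⟨mul_mem (mul_mem (inv_mem (base_le_Rng K q hq0 r.1 hb)) h1)
      (base_le_Rng K q hq0 r.1 hb), ?_⟩
    intro hB
    apply h2
    have : r.2 = b * (b⁻¹ * r.2 * b) * b⁻¹ := by group
    rw [this]
    exact mul_mem (mul_mem hb hB) (inv_mem hb)

lemma prodA_conj (b : AmalGamma K q hq0) (l : List (Bool × AmalGamma K q hq0)) :
    prodA K q hq0 (l.map (fun p => (p.1, b⁻¹ * p.2 * b))) = b⁻¹ * prodA K q hq0 l * b := by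
  induction l with
  | nil => simp [prodA_nil]
  | cons p l ih =>
    simp only [List.map_cons, prodA_cons, ih]
    group

/-- Lists of letters from `Λ₁ ∪ Λ₂`. -/
def IsLamList (l : List (Bool × AmalGamma K q hq0)) : Prop :=
  l.Chain' (fun p q => p.1 ≠ q.1) ∧ ∀ p ∈ l, p.2 ∈ Lsub K q hq0 p.1 ∧ p.2 ≠ 1

lemma Lsub_inter_B (hq1 : q ≠ 1) (hqm1 : q ≠ -1) (i : Bool) (x : AmalGamma K q hq0)
    (hx : x ∈ Lsub K q hq0 i) (hxB : x ∈ Bsub K q hq0) : x = 1 := by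
  obtain ⟨u, hu, rfl⟩ := hx
  obtain ⟨s, hs⟩ := hxB
  have hs2 : amalInc K q hq0 i (sigmaMaps K q hq0 i s) = amalInc K q hq0 i u := by
    show Monoid.PushoutI.of (φ := sigmaMaps K q hq0) i ((sigmaMaps K q hq0 i) s) = _
    rw [Monoid.PushoutI.of_apply_eq_base (sigmaMaps K q hq0) i s]
    exact hs
  have hu2 : sigmaMaps K q hq0 i s = u := amalInc_inj K q hq0 hq1 hqm1 i hs2
  have hk : s.toAdd = 0 := by
    cases i
    · obtain ⟨a, b, c, rfl⟩ := hu
      exact Azpow_eq_unitri ℚ q hq0 hq1 hqm1 s.toAdd a b c hu2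
    · obtain ⟨a, b, c, rfl⟩ := hu
      exact Azpow_eq_unitri K q hq0 hq1 hqm1 s.toAdd a b c hu2
  have hs1 : s = 1 := by
    have := Multiplicative.toAdd.injective (a₁ := s) (a₂ := 1) (by simpa using hk)
    exact this
  rw [← hu2, hs1]
  simp

lemma lam_list_alt (hq1 : q ≠ 1) (hqm1 : q ≠ -1) (l : List (Bool × AmalGamma K q hq0))
    (hl : IsLamList K q hq0 l) : Alt K q hq0 l := by
  refine ⟨hl.1, fun p hp => ?_⟩
  obtain ⟨h1, h2⟩ := hl.2 p hp
  refine ⟨?_, fun hB => h2 (Lsub_inter_B K q hq0 hq1 hqm1 p.1 p.2 h1 hB)⟩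
  obtain ⟨u, _, hu⟩ := h1
  exact ⟨u, hu⟩

/-- appending one `Λ`-letter to a `Λ`-list -/
lemma lam_snoc (l : List (Bool × AmalGamma K q hq0)) (hl : IsLamList K q hq0 l)
    (j : Bool) (y : AmalGamma K q hq0) (hy : y ∈ Lsub K q hq0 j) :
    ∃ l', IsLamList K q hq0 l' ∧ prodA K q hq0 l' = prodA K q hq0 l * y := by
  induction l using List.reverseRecOn with
  | nil =>
    by_cases hy1 : y = 1
    · exact ⟨[], ⟨List.isChain_nil, by simp⟩, by simp [prodA_nil, hy1]⟩
    · exact ⟨[(j, y)], ⟨List.isChain_singleton _, by simp [hy, hy1]⟩,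
        by simp [prodA_cons, prodA_nil]⟩
  | append_singleton l₀ p ih =>
    by_cases hij : p.1 = j
    · have hp := hl.2 p (List.mem_append_right _ (List.mem_singleton_self _))
      by_cases hw1 : p.2 * y = 1
      · refine ⟨l₀, ⟨(List.isChain_append.1 hl.1).1,
          fun r hr => hl.2 r (List.mem_append_left _ hr)⟩, ?_⟩
        rw [prodA_append, prodA_cons, prodA_nil, mul_one, mul_assoc, hw1, mul_one]
      · refine ⟨l₀ ++ [(p.1, p.2 * y)], ⟨chain'_of_fst_eq K q hq0 _ _ (by simp) hl.1, ?_⟩, ?_⟩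
        · intro r hr
          rcases List.mem_append.1 hr with h' | h'
          · exact hl.2 r (List.mem_append_left _ h')
          · rw [List.mem_singleton.1 h']
            exact ⟨mul_mem hp.1 (hij ▸ hy), hw1⟩
        · simp [prodA_append, prodA_cons, prodA_nil, mul_assoc]
    · by_cases hy1 : y = 1
      · exact ⟨l₀ ++ [p], hl, by simp [hy1]⟩
      · refine ⟨(l₀ ++ [p]) ++ [(j, y)], ⟨?_, ?_⟩, ?_⟩
        · rw [List.Chain', List.isChain_append]
          exact ⟨hl.1, List.isChain_singleton _, by simp [hij]⟩
        · intro r hr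
          rcases List.mem_append.1 hr with h' | h'
          · exact hl.2 r h'
          · rw [List.mem_singleton.1 h']
            exact ⟨hy, hy1⟩
        · simp [prodA_append, prodA_cons, prodA_nil, mul_assoc]

/-- Characterization of `Λ` as products of alternating `Λ`-letters. -/
lemma lam_mem (x : AmalGamma K q hq0) :
    x ∈ amalLambda K q hq0 ↔ ∃ l, IsLamList K q hq0 l ∧ prodA K q hq0 l = x := by
  constructor
  · intro hx
    have hsup : amalLambda K q hq0
        = Subgroup.closure ((Lsub K q hq0 false : Set (AmalGamma K q hq0)) ∪ Lsub K q hq0 true) := by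
      rw [Subgroup.closure_union, Subgroup.closure_eq, Subgroup.closure_eq]
      rfl
    rw [hsup] at hx
    induction hx using Subgroup.closure_induction_right with
    | one => exact ⟨[], ⟨List.isChain_nil, by simp⟩, rfl⟩
    | mul_right x hx y hy ih =>
      obtain ⟨l, hl, hpl⟩ := ih
      rcases hy with hy | hy
      · obtain ⟨l', h1, h2⟩ := lam_snoc K q hq0 l hl false y hy
        exact ⟨l', h1, by rw [h2, hpl]⟩
      · obtain ⟨l', h1, h2⟩ := lam_snoc K q hq0 l hl true y hy
        exact ⟨l', h1, by rw [h2, hpl]⟩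
    | mul_inv_cancel x hx y hy ih =>
      obtain ⟨l, hl, hpl⟩ := ih
      rcases hy with hy | hy
      · obtain ⟨l', h1, h2⟩ := lam_snoc K q hq0 l hl false y⁻¹ (inv_mem hy)
        exact ⟨l', h1, by rw [h2, hpl]⟩
      · obtain ⟨l', h1, h2⟩ := lam_snoc K q hq0 l hl true y⁻¹ (inv_mem hy)
        exact ⟨l', h1, by rw [h2, hpl]⟩
  · rintro ⟨l, hl, rfl⟩
    induction l with
    | nil => exact one_mem _
    | cons p l ih =>
      rw [prodA_cons]
      refine mul_mem ?_ (ih ⟨(List.isChain_cons.1 hl.1).2,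
        fun r hr => hl.2 r (List.mem_cons_of_mem _ hr)⟩)
      have hp := (hl.2 p (List.mem_cons_self)).1
      cases hp1 : p.1
      · exact Subgroup.mem_sup_left (by rw [← hp1]; exact hp)
      · exact Subgroup.mem_sup_right (by rw [← hp1]; exact hp)

lemma lam_inter_B (hq1 : q ≠ 1) (hqm1 : q ≠ -1) (x : AmalGamma K q hq0)
    (hx : x ∈ amalLambda K q hq0) (hxB : x ∈ Bsub K q hq0) : x = 1 := by
  obtain ⟨l, hl, rfl⟩ := (lam_mem K q hq0 x).1 hx
  rcases l with _ | ⟨p, t⟩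
  · rfl
  · exact absurd hxB (prodA_notin_B K q hq0 hq1 hqm1 _
      (lam_list_alt K q hq0 hq1 hqm1 _ hl) (by simp))

/-- absorbing one factor-element into an alternating word -/
lemma absorb (l : List (Bool × AmalGamma K q hq0)) (hl : Alt K q hq0 l) :
    ∀ (j : Bool) (y : AmalGamma K q hq0), y ∈ Rng K q hq0 j →
    ∃ l' b', Alt K q hq0 l' ∧ b' ∈ Bsub K q hq0 ∧
      prodA K q hq0 l * y = prodA K q hq0 l' * b' := by
  induction l using List.reverseRecOn with
  | nil =>
    intro j y hy
    by_cases hyB : y ∈ Bsub K q hq0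
    · exact ⟨[], y, ⟨List.isChain_nil, by simp⟩, hyB, by simp [prodA_nil]⟩
    · exact ⟨[(j, y)], 1, ⟨List.isChain_singleton _, by simp [hy, hyB]⟩, one_mem _,
        by simp [prodA_cons, prodA_nil]⟩
  | append_singleton l₀ p ih =>
    intro j y hy
    have hp := hl.2 p (List.mem_append_right _ (List.mem_singleton_self _))
    by_cases hij : p.1 = j
    · by_cases hwB : p.2 * y ∈ Bsub K q hq0
      · obtain ⟨l', b', h1, h2, h3⟩ := ih (Alt_append_left K q hq0 l₀ [p] hl) p.1 (p.2 * y)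
          (mul_mem hp.1 (hij ▸ hy))
        refine ⟨l', b', h1, h2, ?_⟩
        rw [prodA_append, prodA_cons, prodA_nil, mul_one, mul_assoc, h3]
      · refine ⟨l₀ ++ [(p.1, p.2 * y)], 1, ⟨chain'_of_fst_eq K q hq0 _ _ (by simp) hl.1, ?_⟩,
          one_mem _, ?_⟩
        · intro r hr
          rcases List.mem_append.1 hr with h' | h'
          · exact hl.2 r (List.mem_append_left _ h')
          · rw [List.mem_singleton.1 h']
            exact ⟨mul_mem hp.1 (hij ▸ hy), hwB⟩
        · simp [prodA_append, prodA_cons, prodA_nil, mul_assoc]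
    · by_cases hyB : y ∈ Bsub K q hq0
      · exact ⟨l₀ ++ [p], y, hl, hyB, rfl⟩
      · refine ⟨(l₀ ++ [p]) ++ [(j, y)], 1, ⟨?_, ?_⟩, one_mem _, ?_⟩
        · rw [List.Chain', List.isChain_append]
          exact ⟨hl.1, List.isChain_singleton _, by simp [hij]⟩
        · intro r hr
          rcases List.mem_append.1 hr with h' | h'
          · exact hl.2 r h'
          · rw [List.mem_singleton.1 h']
            exact ⟨hy, hyB⟩
        · simp [prodA_append, prodA_cons, prodA_nil, mul_assoc]

/-- every element of `Γ` has a reduced decomposition -/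
lemma exists_decomp (g : AmalGamma K q hq0) :
    ∃ l b, Alt K q hq0 l ∧ b ∈ Bsub K q hq0 ∧ g = prodA K q hq0 l * b := by
  have hgen : g ∈ Subgroup.closure
      (Set.range (amalInc K q hq0 false) ∪ Set.range (amalInc K q hq0 true)) := by
    induction g using Monoid.PushoutI.induction_on with
    | of i x =>
      apply Subgroup.subset_closure
      cases i
      · exact Or.inl ⟨x, rfl⟩
      · exact Or.inr ⟨x, rfl⟩
    | base h =>
      apply Subgroup.subset_closure
      exact Or.inl ⟨sigmaMaps K q hq0 false h,
        Monoid.PushoutI.of_apply_eq_base (sigmaMaps K q hq0) false h⟩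
    | mul x y hx hy => exact mul_mem hx hy
  induction hgen using Subgroup.closure_induction_right with
  | one => exact ⟨[], 1, ⟨List.isChain_nil, by simp⟩, one_mem _, by simp [prodA_nil]⟩
  | mul_right x hx y hy ih =>
    obtain ⟨l, b, h1, h2, h3⟩ := ih
    have hy' : ∃ j, y ∈ Rng K q hq0 j := by
      rcases hy with ⟨m, rfl⟩ | ⟨m, rfl⟩
      exacts [⟨false, ⟨m, rfl⟩⟩, ⟨true, ⟨m, rfl⟩⟩]
    obtain ⟨j, hyR⟩ := hy'
    obtain ⟨l', b', h1', h2', h3'⟩ := absorb K q hq0 l h1 j (b * y)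
      (mul_mem (base_le_Rng K q hq0 j h2) hyR)
    exact ⟨l', b', h1', h2', by rw [h3, mul_assoc, h3']⟩
  | mul_inv_cancel x hx y hy ih =>
    obtain ⟨l, b, h1, h2, h3⟩ := ih
    have hy' : ∃ j, y⁻¹ ∈ Rng K q hq0 j := by
      rcases hy with ⟨m, rfl⟩ | ⟨m, rfl⟩
      exacts [⟨false, inv_mem ⟨m, rfl⟩⟩, ⟨true, inv_mem ⟨m, rfl⟩⟩]
    obtain ⟨j, hyR⟩ := hy'
    obtain ⟨l', b', h1', h2', h3'⟩ := absorb K q hq0 l h1 j (b * y⁻¹)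
      (mul_mem (base_le_Rng K q hq0 j h2) hyR)
    exact ⟨l', b', h1', h2', by rw [h3, mul_assoc, h3']⟩

lemma Lsub_le_lam (i : Bool) : Lsub K q hq0 i ≤ amalLambda K q hq0 := by
  cases i
  · exact le_sup_left (b := (unitriFam K true).map (amalInc K q hq0 true))
  · exact le_sup_right (a := (unitriFam K false).map (amalInc K q hq0 false))

/-- The main induction: an element all of whose "two-sided" conjugation conditions hold
lies in `Λ`. -/
lemma main (hq1 : q ≠ 1) (hqm1 : q ≠ -1) (l : List (Bool × AmalGamma K q hq0)) :
    ∀ b ∈ Bsub K q hq0, Alt K q hq0 l →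
    (∀ c : Bool, ∃ ν ∈ Lsub K q hq0 c, ν ≠ 1 ∧
      (prodA K q hq0 l * b)⁻¹ * ν * (prodA K q hq0 l * b) ∈ amalLambda K q hq0) →
    prodA K q hq0 l * b ∈ amalLambda K q hq0 := by
  induction l using List.reverseRecOn with
  | nil =>
    rintro b ⟨s, rfl⟩ _ hcond
    obtain ⟨ν, hνL, hν1, hνconj⟩ := hcond true
    rw [prodA_nil, one_mul] at hνconj ⊢
    set bb := Monoid.PushoutI.base (sigmaMaps K q hq0) s with hbbdef
    obtain ⟨u, hu, hui⟩ := hνL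
    have hbase : bb = amalInc K q hq0 true (sigmaMaps K q hq0 true s) := by
      show _ = Monoid.PushoutI.of (φ := sigmaMaps K q hq0) true ((sigmaMaps K q hq0 true) s)
      rw [Monoid.PushoutI.of_apply_eq_base (sigmaMaps K q hq0) true s]
    set h := bb⁻¹ * ν * bb with hhdef
    have hh1 : h ≠ 1 := by
      intro hh
      apply hν1
      have : ν = bb * h * bb⁻¹ := by rw [hhdef]; group
      rw [this, hh]; group
    have hhR : h ∈ Rng K q hq0 true := by
      have hbbR : bb ∈ Rng K q hq0 true := base_le_Rng K q hq0 true ⟨s, rfl⟩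
      exact mul_mem (mul_mem (inv_mem hbbR) ⟨u, hui⟩) hbbR
    have hhB : h ∉ Bsub K q hq0 := fun hB => hh1 (lam_inter_B K q hq0 hq1 hqm1 h hνconj hB)
    obtain ⟨m, hm, hpm⟩ := (lam_mem K q hq0 h).1 hνconj
    have htypes := alt_types_eq K q hq0 hq1 hqm1 m [(true, h)]
      (lam_list_alt K q hq0 hq1 hqm1 m hm)
      ⟨List.isChain_singleton _, by simp [hhR, hhB]⟩
      (by rw [hpm]; simp [prodA_cons, prodA_nil])
    rcases m with _ | ⟨pz, t⟩
    · simp at htypes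
    · simp at htypes
      obtain ⟨hpz1, ht⟩ := htypes
      subst ht
      have hz : pz.2 ∈ Lsub K q hq0 true ∧ pz.2 ≠ 1 := by
        have := hm.2 pz (List.mem_cons_self)
        rwa [hpz1] at this
      have hzh : h = pz.2 := by rw [← hpm]; simp [prodA_cons, prodA_nil]
      obtain ⟨u', hu', hui'⟩ := hz.1
      -- the equation in SL(3,K)
      have heq : amalInc K q hq0 true ((sigmaMaps K q hq0 true s)⁻¹ * u * (sigmaMaps K q hq0 true s))
          = amalInc K q hq0 true u' := by
        rw [_root_.map_mul, _root_.map_mul, map_inv, ← hbase, hui, hui', ← hhdef, hzh]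
      have heq2 : (sigmaMaps K q hq0 true s)⁻¹ * u * (sigmaMaps K q hq0 true s) = u' :=
        amalInc_inj K q hq0 hq1 hqm1 true heq
      by_cases hk : s.toAdd = 0
      · have hs1 : s = 1 := by
          have := Multiplicative.toAdd.injective (a₁ := s) (a₂ := 1) (by simpa using hk)
          exact this
        rw [hbbdef, hs1, _root_.map_one]
        exact one_mem _
      · exfalso
        obtain ⟨ua, ub, uc, huv⟩ := hu
        obtain ⟨va, vb, vc, hvv⟩ := hu'
        have hphi : sigmaMaps K q hq0 true s = (AmatSL K q hq0) ^ s.toAdd := rfl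
        have hE : (AmatSL K q hq0) ^ s.toAdd * unitriSL K va vb vc
            = unitriSL K ua ub uc * (AmatSL K q hq0) ^ s.toAdd := by
          rw [← hvv, ← huv, ← heq2, hphi]
          show (AmatSL K q hq0)^s.toAdd * ((AmatSL K q hq0 ^ s.toAdd)⁻¹ * (show Matrix.SpecialLinearGroup (Fin 3) K from u) * AmatSL K q hq0 ^ s.toAdd) = (show Matrix.SpecialLinearGroup (Fin 3) K from u) * AmatSL K q hq0 ^ s.toAdd
          rw [← mul_assoc, ← mul_assoc, mul_inv_cancel, one_mul]
        obtain ⟨h1, h2, h3⟩ := conj_fix_F K q hq0 hq1 hqm1 s.toAdd ua ub uc va vb vc hk hE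
        apply hν1
        rw [hui.symm, huv, h1, h2, h3, unitri_zero]; exact _root_.map_one _
  | append_singleton l₀ p ih =>
    intro b hb hl hcond
    obtain ⟨p₀, rest, hcons⟩ := List.exists_cons_of_ne_nil
      (l := l₀ ++ [p]) (by simp)
    obtain ⟨ν, hνL, hν1, hνconj⟩ := hcond (!p₀.1)
    have hνR : ν ∈ Rng K q hq0 (!p₀.1) := by
      obtain ⟨u, _, hui⟩ := hνL
      exact ⟨u, hui⟩
    have hνB : ν ∉ Bsub K q hq0 :=
      fun hB => hν1 (Lsub_inter_B K q hq0 hq1 hqm1 _ ν hνL hB)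
    set g := prodA K q hq0 (l₀ ++ [p]) * b with hgdef
    set L1 := invRev K q hq0 (l₀ ++ [p]) ++ (!p₀.1, ν) :: (l₀ ++ [p]) with hL1def
    have haltL1 : Alt K q hq0 L1 := by
      constructor
      · rw [hL1def, List.Chain', List.isChain_append]
        refine ⟨(Alt_invRev K q hq0 _ hl).1, ?_, ?_⟩
        · rw [List.isChain_cons]
          refine ⟨?_, hl.1⟩
          intro y hy
          rw [hcons] at hy
          simp at hy
          subst hy
          simp
        · intro x hx y hy
          rw [invRev, List.getLast?_reverse, hcons] at hx
          simp at hx hy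
          subst hx
          subst hy
          simp
      · intro r hr
        rw [hL1def] at hr
        rcases List.mem_append.1 hr with h' | h'
        · exact (Alt_invRev K q hq0 _ hl).2 r h'
        · rcases List.mem_cons.1 h' with h'' | h''
          · rw [h'']
            exact ⟨hνR, hνB⟩
          · exact hl.2 r h''
    have hprodL1 : prodA K q hq0 L1
        = (prodA K q hq0 (l₀ ++ [p]))⁻¹ * ν * prodA K q hq0 (l₀ ++ [p]) := by
      rw [hL1def, prodA_append, prodA_cons, prodA_invRev]
      group
    set C := L1.map (fun r => (r.1, b⁻¹ * r.2 * b)) with hCdef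
    have haltC : Alt K q hq0 C := Alt_conj K q hq0 b hb L1 haltL1
    have hCg : prodA K q hq0 C = g⁻¹ * ν * g := by
      rw [hCdef, prodA_conj, hprodL1, hgdef]
      group
    obtain ⟨m, hm, hpm⟩ := (lam_mem K q hq0 _).1 hνconj
    have hpmC : prodA K q hq0 m = prodA K q hq0 C := by rw [hpm, hCg, hgdef]
    have hCsnoc : C = ((invRev K q hq0 (l₀ ++ [p]) ++ (!p₀.1, ν) :: l₀).map
        (fun r => (r.1, b⁻¹ * r.2 * b))) ++ [(p.1, b⁻¹ * p.2 * b)] := by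
      have hlists : L1 = (invRev K q hq0 (l₀ ++ [p]) ++ (!p₀.1, ν) :: l₀) ++ [p] := by
        rw [hL1def]
        simp
      rw [hCdef, hlists, List.map_append]
      simp
    have htypes := alt_types_eq K q hq0 hq1 hqm1 m C
      (lam_list_alt K q hq0 hq1 hqm1 m hm) haltC hpmC
    rcases List.eq_nil_or_concat m with rfl | ⟨m₀, pz, rfl⟩
    · exfalso
      apply hν1
      have h1 : (1 : AmalGamma K q hq0) = g⁻¹ * ν * g := by
        rw [← hCg, ← hpmC, prodA_nil]
      have : ν = g * (g⁻¹ * ν * g) * g⁻¹ := by group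
      rw [this, ← h1]
      group
    · obtain ⟨i', z⟩ := pz
      rw [List.concat_eq_append] at hm hpmC htypes
      have hlast1 : (((m₀ ++ [(i', z)]).map Prod.fst)).getLast? = some i' := by
        simp
      have hlast2 : ((C.map Prod.fst)).getLast? = some p.1 := by
        rw [hCsnoc, List.map_append]
        rw [show (List.map Prod.fst [(p.1, b⁻¹ * p.2 * b)]) = [p.1] from rfl]
        exact List.getLast?_concat
      rw [htypes, hlast2] at hlast1
      have hi' : i' = p.1 := (Option.some.inj hlast1).symm
      subst hi'
      have hzmem := hm.2 (p.1, z) (List.mem_append_right _ (List.mem_singleton_self _))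
      have hmatch : (b⁻¹ * p.2 * b) * z⁻¹ ∈ Bsub K q hq0 := by
        apply last_match K q hq0 hq1 hqm1
          ((invRev K q hq0 (l₀ ++ [p]) ++ (!p₀.1, ν) :: l₀).map (fun r => (r.1, b⁻¹ * r.2 * b)))
          m₀ p.1 (b⁻¹ * p.2 * b) z (hCsnoc ▸ haltC)
          (lam_list_alt K q hq0 hq1 hqm1 _ hm)
        rw [← hCsnoc]
        exact hpmC.symm
      set s' := (b⁻¹ * p.2 * b) * z⁻¹ with hs'def
      have hgz : g * z⁻¹ = prodA K q hq0 l₀ * (b * s') := by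
        rw [hgdef, prodA_append, prodA_cons, prodA_nil, hs'def]
        group
    -- apply the induction hypothesis
      have hIH := ih (b * s') (mul_mem hb hmatch) (Alt_append_left K q hq0 l₀ [p] hl) ?_
      · have hgeq : prodA K q hq0 (l₀ ++ [p]) * b = prodA K q hq0 l₀ * (b * s') * z := by
          rw [← hgz, hgdef]
          group
        rw [hgdef, hgeq]
        exact mul_mem hIH (Lsub_le_lam K q hq0 p.1 hzmem.1)
      · intro c'
        obtain ⟨ν', h1, h2, h3⟩ := hcond c'
        refine ⟨ν', h1, h2, ?_⟩
        rw [← hgz]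
        have hrw : (g * z⁻¹)⁻¹ * ν' * (g * z⁻¹) = z * (g⁻¹ * ν' * g) * z⁻¹ := by
          group
        rw [hrw]
        exact mul_mem (mul_mem (Lsub_le_lam K q hq0 p.1 hzmem.1) h3)
          (inv_mem (Lsub_le_lam K q hq0 p.1 hzmem.1))

lemma unitri_n_ne_one (F : Type) [Field F] [CharZero F] (m : ℤ) (hm : m ≠ 0) :
    unitriSL F m 0 0 ≠ 1 := by
  intro h
  have h2 := congrFun (congrFun (congrArg Subtype.val h) 0) 1
  simp [unitriSL] at h2
  exact hm h2

lemma unitri_inv_eq (F : Type) [Field F] (n : ℤ) :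
    (unitriSL F n 0 0)⁻¹ = unitriSL F (-n) 0 0 := by
  apply inv_eq_of_mul_eq_one_right
  rw [unitriSL_mul]
  simp [unitri_zero]

lemma exists_nu (hq1 : q ≠ 1) (hqm1 : q ≠ -1) (g : AmalGamma K q hq0)
    (hfin : (Set.range fun l : amalLambda K q hq0 =>
      (QuotientGroup.mk ((l : AmalGamma K q hq0) * g) :
        AmalGamma K q hq0 ⧸ amalLambda K q hq0)).Finite) (c : Bool) :
    ∃ ν ∈ Lsub K q hq0 c, ν ≠ 1 ∧ g⁻¹ * ν * g ∈ amalLambda K q hq0 := by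
  cases c
  · -- c = false, factor SL(3,ℚ)
    set u : ℤ → AmalGamma K q hq0 := fun n => amalInc K q hq0 false (unitriSL ℚ n 0 0) with hu
    have humem : ∀ n : ℤ, u n ∈ Lsub K q hq0 false :=
      fun n => ⟨unitriSL ℚ n 0 0, ⟨n, 0, 0, rfl⟩, rfl⟩
    have hMaps : Set.MapsTo (fun n : ℤ =>
        (QuotientGroup.mk (u n * g) : AmalGamma K q hq0 ⧸ amalLambda K q hq0)) Set.univ
        (Set.range fun l : amalLambda K q hq0 =>
          (QuotientGroup.mk ((l : AmalGamma K q hq0) * g) :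
            AmalGamma K q hq0 ⧸ amalLambda K q hq0)) := by
      intro n _
      exact ⟨⟨u n, Lsub_le_lam K q hq0 false (humem n)⟩, rfl⟩
    obtain ⟨n, -, n', -, hne, heq⟩ :=
      Set.infinite_univ.exists_ne_map_eq_of_mapsTo hMaps hfin
    have hmem2 : (u n * g)⁻¹ * (u n' * g) ∈ amalLambda K q hq0 := QuotientGroup.eq.1 heq
    refine ⟨(u n)⁻¹ * u n', ?_, ?_, ?_⟩
    · have : (u n)⁻¹ * u n' = amalInc K q hq0 false (unitriSL ℚ (n' - n) 0 0) := by
        rw [hu]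
        simp only []
        erw [← map_inv, unitri_inv_eq, ← _root_.map_mul, unitriSL_mul]
        norm_num
        rw [sub_eq_add_neg, add_comm]
      rw [this]
      exact ⟨unitriSL ℚ (n' - n) 0 0, ⟨n' - n, 0, 0, rfl⟩, rfl⟩
    · intro hone
      have : u n = u n' := by
        rwa [inv_mul_eq_one] at hone
      rw [hu] at this
      simp only [] at this
      have h2 := amalInc_inj K q hq0 hq1 hqm1 false this
      have h3 : (n : ℚ) = (n' : ℚ) := by
        have := congrFun (congrFun (congrArg Subtype.val h2) 0) 1
        simpa [unitriSL] using this
      exact hne (by exact_mod_cast h3)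
    · have : g⁻¹ * ((u n)⁻¹ * u n') * g = (u n * g)⁻¹ * (u n' * g) := by group
      rw [this]
      exact hmem2
  · -- c = true, factor SL(3,K)
    set u : ℤ → AmalGamma K q hq0 := fun n => amalInc K q hq0 true (unitriSL K n 0 0) with hu
    have humem : ∀ n : ℤ, u n ∈ Lsub K q hq0 true :=
      fun n => ⟨unitriSL K n 0 0, ⟨n, 0, 0, rfl⟩, rfl⟩
    have hMaps : Set.MapsTo (fun n : ℤ =>
        (QuotientGroup.mk (u n * g) : AmalGamma K q hq0 ⧸ amalLambda K q hq0)) Set.univ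
        (Set.range fun l : amalLambda K q hq0 =>
          (QuotientGroup.mk ((l : AmalGamma K q hq0) * g) :
            AmalGamma K q hq0 ⧸ amalLambda K q hq0)) := by
      intro n _
      exact ⟨⟨u n, Lsub_le_lam K q hq0 true (humem n)⟩, rfl⟩
    obtain ⟨n, -, n', -, hne, heq⟩ :=
      Set.infinite_univ.exists_ne_map_eq_of_mapsTo hMaps hfin
    have hmem2 : (u n * g)⁻¹ * (u n' * g) ∈ amalLambda K q hq0 := QuotientGroup.eq.1 heq
    refine ⟨(u n)⁻¹ * u n', ?_, ?_, ?_⟩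
    · have : (u n)⁻¹ * u n' = amalInc K q hq0 true (unitriSL K (n' - n) 0 0) := by
        rw [hu]
        simp only []
        erw [← map_inv, unitri_inv_eq, ← _root_.map_mul, unitriSL_mul]
        norm_num
        rw [sub_eq_add_neg, add_comm]
      rw [this]
      exact ⟨unitriSL K (n' - n) 0 0, ⟨n' - n, 0, 0, rfl⟩, rfl⟩
    · intro hone
      have : u n = u n' := by
        rwa [inv_mul_eq_one] at hone
      rw [hu] at this
      simp only [] at this
      have h2 := amalInc_inj K q hq0 hq1 hqm1 true this
      have h3 : (n : K) = (n' : K) := by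
        have := congrFun (congrFun (congrArg Subtype.val h2) 0) 1
        simpa [unitriSL] using this
      exact hne (by exact_mod_cast h3)
    · have : g⁻¹ * ((u n)⁻¹ * u n') * g = (u n * g)⁻¹ * (u n' * g) := by group
      rw [this]
      exact hmem2

end AmalAux

/-- With `Γ = SL(3,ℚ) *_Σ SL(3,K)` and `Λ = Λ₁ * Λ₂` as above:
for every `g ∈ Γ ∖ Λ`, the orbit of the coset `gΛ ∈ Γ/Λ` under left translation
by `Λ` is infinite. -/
theorem lambda_orbits_on_quotient_infinite
    (K : Type) [Field K] [CharZero K] [Countable K]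
    (hKQ : ¬ Function.Surjective ((↑) : ℚ → K))
    (q : ℚ) (hq0 : q ≠ 0) (hq1 : q ≠ 1) (hqm1 : q ≠ -1)
    (g : AmalGamma K q hq0) (hg : g ∉ amalLambda K q hq0) :
    Set.Infinite (Set.range fun l : amalLambda K q hq0 =>
      (QuotientGroup.mk ((l : AmalGamma K q hq0) * g) :
        AmalGamma K q hq0 ⧸ amalLambda K q hq0)) := by
  by_contra hfin
  rw [Set.not_infinite] at hfin
  apply hg
  obtain ⟨l, b, h1, h2, h3⟩ := AmalAux.exists_decomp K q hq0 g
  rw [h3]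
  apply AmalAux.main K q hq0 hq1 hqm1 l b h2 h1
  intro c
  obtain ⟨ν, hν1, hν2, hν3⟩ := AmalAux.exists_nu K q hq0 hq1 hqm1 g hfin c
  exact ⟨ν, hν1, hν2, by rw [← h3]; exact hν3⟩
end

section
/- With Γ = SL(3,ℚ) *_Σ SL(3,K) and Λ = Λ₁ * Λ₂ as in the context: for every g ∈ Γ one has Σ ∩ gΛg⁻¹ = {e}. Equivalently, every orbit of Σ acting by left translation on Γ/Λ is infinite; equivalently, there is no finite index subgroup Σ₀ ≤ Σ and no g ∈ Γ with gΣ₀g⁻¹ ⊆ Λ. -/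
open Matrix

/-! ### Auxiliary results -/

/-- Entrywise cast of `A` from `ℚ` to `K`. -/
lemma map_AmatSL (K : Type) [Field K] [CharZero K] (q : ℚ) (hq : q ≠ 0) :
    Matrix.SpecialLinearGroup.map (Rat.castHom K) (AmatSL ℚ q hq) = AmatSL K q hq := by
  apply Subtype.ext
  show (Rat.castHom K).mapMatrix (AmatSL ℚ q hq).val = (AmatSL K q hq).val
  ext i j
  fin_cases i <;> fin_cases j <;>
    simp [AmatSL, Matrix.SpecialLinearGroup.map_apply_coe, RingHom.mapMatrix_apply, Matrix.map_apply,
      Matrix.vecHead, Matrix.vecTail]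

lemma map_unitriSL (K : Type) [Field K] [CharZero K] (a b c : ℤ) :
    Matrix.SpecialLinearGroup.map (Rat.castHom K) (unitriSL ℚ a b c) = unitriSL K a b c := by
  apply Subtype.ext
  show (Rat.castHom K).mapMatrix (unitriSL ℚ a b c).val = (unitriSL K a b c).val
  ext i j
  fin_cases i <;> fin_cases j <;>
    simp [unitriSL, Matrix.SpecialLinearGroup.map_apply_coe, RingHom.mapMatrix_apply, Matrix.map_apply,
      Matrix.vecHead, Matrix.vecTail]

lemma unitri_cube (K : Type) [Field K] (a b c : ℤ) :
    ((unitriSL K a b c).val - 1) ^ 3 = 0 := by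
  have h : ((unitriSL K a b c).val - 1) = !![0, (a:K), (b:K); 0, 0, (c:K); 0, 0, 0] := by
    ext i j
    fin_cases i <;> fin_cases j <;>
      simp [unitriSL, Matrix.one_apply, Matrix.sub_apply, Matrix.vecHead, Matrix.vecTail]
  rw [h]
  ext i j
  fin_cases i <;> fin_cases j <;>
    simp [pow_succ, Matrix.mul_apply, Fin.sum_univ_three, Matrix.vecHead, Matrix.vecTail]

lemma Amat_mulVec (K : Type) [Field K] [CharZero K] (q : ℚ) (hq : q ≠ 0) :
    (AmatSL K q hq).val *ᵥ ![0, 1, 0] = (q : K) • ![0, 1, 0] := by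
  ext j
  fin_cases j <;>
    simp [AmatSL, Matrix.mulVec, dotProduct, Fin.sum_univ_three,
      Matrix.vecHead, Matrix.vecTail]

lemma sl_inv_mulVec {K : Type} [Field K] (g : Matrix.SpecialLinearGroup (Fin 3) K)
    (v : Fin 3 → K) (μ : K) (hμ : μ ≠ 0) (h : g.val *ᵥ v = μ • v) :
    (g⁻¹).val *ᵥ v = μ⁻¹ • v := by
  have h1 : (g⁻¹).val * g.val = 1 := by
    rw [← Matrix.SpecialLinearGroup.coe_mul, inv_mul_cancel,
      Matrix.SpecialLinearGroup.coe_one]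
  have h2 : μ • ((g⁻¹).val *ᵥ v) = v := by
    rw [← Matrix.mulVec_smul, ← h, Matrix.mulVec_mulVec, h1, Matrix.one_mulVec]
  calc (g⁻¹).val *ᵥ v = μ⁻¹ • (μ • ((g⁻¹).val *ᵥ v)) := by
        rw [smul_smul, inv_mul_cancel₀ hμ, one_smul]
    _ = μ⁻¹ • v := by rw [h2]

lemma sl_zpow_mulVec {K : Type} [Field K] (g : Matrix.SpecialLinearGroup (Fin 3) K)
    (v : Fin 3 → K) (μ : K) (hμ : μ ≠ 0) (h : g.val *ᵥ v = μ • v) (k : ℤ) :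
    (g ^ k).val *ᵥ v = μ ^ k • v := by
  induction k using Int.induction_on with
  | zero => simp [Matrix.one_mulVec]
  | succ n ih =>
    rw [_root_.zpow_add_one, Matrix.SpecialLinearGroup.coe_mul, ← Matrix.mulVec_mulVec, h,
      Matrix.mulVec_smul, ih, smul_smul]
    congr 1
    rw [zpow_add_one₀ hμ]
    ring
  | pred n ih =>
    rw [_root_.zpow_sub_one, Matrix.SpecialLinearGroup.coe_mul, ← Matrix.mulVec_mulVec,
      sl_inv_mulVec g v μ hμ h, Matrix.mulVec_smul, ih, smul_smul]
    congr 1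
    rw [zpow_sub_one₀ hμ]
    ring

/-- If a power of `A` is conjugate (inside `SL(3,K)`) to an integer unitriangular matrix,
then that power is zero. -/
lemma zpow_eq_conj_unitri {K : Type} [Field K] [CharZero K] (q : ℚ) (hq : q ≠ 0)
    (hq1 : q ≠ 1) (hqm1 : q ≠ -1) (k : ℤ) (h : Matrix.SpecialLinearGroup (Fin 3) K)
    (a b c : ℤ) (heq : (AmatSL K q hq) ^ k = h * unitriSL K a b c * h⁻¹) : k = 0 := by
  set S := (AmatSL K q hq) ^ k with hS
  set u := unitriSL K a b c with hu
  have hmul : S * h = h * u := by rw [heq]; group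
  have hM : S.val * h.val = h.val * u.val := by
    have := congrArg Subtype.val hmul
    simpa using this
  have h1 : (S.val - 1) * h.val = h.val * (u.val - 1) := by
    rw [sub_mul, mul_sub, hM, one_mul, mul_one]
  have h2 : (S.val - 1)^2 * h.val = h.val * (u.val - 1)^2 := by
    rw [sq, sq, mul_assoc, h1, ← mul_assoc, h1, mul_assoc]
  have h3 : (S.val - 1)^3 * h.val = h.val * (u.val - 1)^3 := by
    rw [pow_succ (S.val - 1) 2, pow_succ (u.val - 1) 2, mul_assoc, h1, ← mul_assoc, h2, mul_assoc]
  have hinv : h.val * (h⁻¹).val = 1 := by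
    rw [← Matrix.SpecialLinearGroup.coe_mul, mul_inv_cancel, Matrix.SpecialLinearGroup.coe_one]
  have hzero : (S.val - 1)^3 = 0 := by
    have h4 : (S.val - 1)^3 * (h.val * (h⁻¹).val) = h.val * (u.val - 1)^3 * (h⁻¹).val := by
      rw [← mul_assoc, h3]
    rw [hinv, mul_one, hu, unitri_cube, mul_zero, zero_mul] at h4
    exact h4
  have hqK : (q : K) ≠ 0 := by exact_mod_cast hq
  have hv : S.val *ᵥ ![0,1,0] = ((q:K)^k) • ![0,1,0] :=
    sl_zpow_mulVec _ _ _ hqK (Amat_mulVec K q hq) k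
  set μ := (q : K) ^ k - 1 with hμdef
  have hstep : (S.val - 1) *ᵥ ![0,1,0] = μ • ![0,1,0] := by
    rw [Matrix.sub_mulVec, hv, Matrix.one_mulVec, hμdef, sub_smul, one_smul]
  have hstep2 : (S.val - 1)^2 *ᵥ ![0,1,0] = (μ*μ) • ![0,1,0] := by
    rw [sq, ← Matrix.mulVec_mulVec, hstep, Matrix.mulVec_smul, hstep, smul_smul]
  have hstep3 : (0 : Matrix (Fin 3) (Fin 3) K) *ᵥ ![0,1,0] = (μ*μ*μ) • ![0,1,0] := by
    rw [← hzero, pow_succ, ← Matrix.mulVec_mulVec, hstep, Matrix.mulVec_smul, hstep2, smul_smul]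
    congr 1
    ring
  have hμ3 : μ * μ * μ = 0 := by
    have := congrFun hstep3 1
    simpa [Matrix.zero_mulVec] using this.symm
  have hμ0 : μ = 0 := by
    rcases mul_eq_zero.mp hμ3 with h' | h'
    · rcases mul_eq_zero.mp h' with h'' | h'' <;> exact h''
    · exact h'
  have hqk : (q:K)^k = 1 := by rwa [hμdef, sub_eq_zero] at hμ0
  have hqkQ : q ^ k = 1 := by
    have : ((q ^ k : ℚ) : K) = ((1:ℚ):K) := by push_cast; exact hqk
    exact_mod_cast this
  have habs' : |q ^ k| = |q| ^ k := map_zpow₀ (absHom : ℚ →*₀ ℚ) q k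
  have habs : |q| ^ k = 1 := by rw [← habs', hqkQ, abs_one]
  have h01 : |q| ≠ 1 := by
    intro he
    rcases (abs_eq (by norm_num : (0:ℚ) ≤ 1)).mp he with h' | h'
    · exact hq1 h'
    · exact hqm1 h'
  exact (zpow_eq_one_iff_right₀ (abs_nonneg q) h01).mp habs

/-- The projections of the two factors to `SL(3,K)`. -/
def slMapFam (K : Type) [Field K] [CharZero K] :
    (i : Bool) → SLfam K i →* Matrix.SpecialLinearGroup (Fin 3) K
  | false => Matrix.SpecialLinearGroup.map (Rat.castHom K)
  | true => MonoidHom.id _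

/-- With `Γ = SL(3,ℚ) *_Σ SL(3,K)` and `Λ = Λ₁ * Λ₂` as above:
for every `g ∈ Γ` one has `Σ ∩ gΛg⁻¹ = {e}`; equivalently every orbit of `Σ` acting by
left translation on `Γ/Λ` is infinite, and no finite index subgroup of `Σ` can be
conjugated into `Λ`. -/
theorem sigma_meets_conjugates_of_lambda_trivially
    (K : Type) [Field K] [CharZero K] [Countable K]
    (hKQ : ¬ Function.Surjective ((↑) : ℚ → K))
    (q : ℚ) (hq0 : q ≠ 0) (hq1 : q ≠ 1) (hqm1 : q ≠ -1)
    (g : AmalGamma K q hq0) :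
    amalSigma K q hq0 ⊓
      (amalLambda K q hq0).map (MulAut.conj g).toMonoidHom = ⊥ := by
  have hcompat : ∀ i, (slMapFam K i).comp (sigmaMaps K q hq0 i)
      = zpowersHom _ (AmatSL K q hq0) := by
    intro i
    refine MonoidHom.ext_mint ?_
    cases i
    · simp only [MonoidHom.comp_apply, slMapFam, sigmaMaps, AmatFam, zpowersHom_apply,
        toAdd_ofAdd, zpow_one]
      exact (congrArg (Matrix.SpecialLinearGroup.map (Rat.castHom K)) (zpow_one (AmatSL ℚ q hq0))).trans (map_AmatSL K q hq0)
    · simp only [MonoidHom.comp_apply, slMapFam, sigmaMaps, AmatFam, zpowersHom_apply,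
        toAdd_ofAdd, zpow_one]
      exact zpow_one (AmatSL K q hq0)
  set π : AmalGamma K q hq0 →* Matrix.SpecialLinearGroup (Fin 3) K :=
    Monoid.PushoutI.lift (slMapFam K) (zpowersHom _ (AmatSL K q hq0)) hcompat with hπ
  have hΛ : amalLambda K q hq0 ≤ (unitriSubgroup K).comap π := by
    rw [amalLambda, sup_le_iff]
    constructor <;> rw [Subgroup.map_le_iff_le_comap] <;> intro m hm
    · obtain ⟨a, b, c, rfl⟩ := hm
      show π (amalInc K q hq0 false (unitriSL ℚ a b c)) ∈ unitriSubgroup K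
      erw [hπ, amalInc, Monoid.PushoutI.lift_of]
      exact ⟨a, b, c, map_unitriSL K a b c⟩
    · show π (amalInc K q hq0 true m) ∈ unitriSubgroup K
      rw [hπ, amalInc, Monoid.PushoutI.lift_of]
      exact hm
  rw [eq_bot_iff]
  intro x hx
  rw [Subgroup.mem_inf] at hx
  obtain ⟨hs, hc⟩ := hx
  rw [amalSigma, Subgroup.mem_zpowers_iff] at hs
  obtain ⟨k, hk⟩ := hs
  obtain ⟨y, hy, hxy⟩ := hc
  have hπA : π (amalInc K q hq0 false (AmatFam K q hq0 false)) = AmatSL K q hq0 := by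
    rw [hπ, amalInc, Monoid.PushoutI.lift_of]
    exact map_AmatSL K q hq0
  have hπx1 : π x = (AmatSL K q hq0) ^ k := by rw [← hk, map_zpow, hπA]
  obtain ⟨a, b, c, huy⟩ := hΛ hy
  have hπx2 : π x = π g * unitriSL K a b c * (π g)⁻¹ := by
    rw [← hxy]
    simp only [MulEquiv.coe_toMonoidHom, MulAut.conj_apply]
    rw [_root_.map_mul, _root_.map_mul, _root_.map_inv, huy]
  have hk0 : k = 0 := by
    refine zpow_eq_conj_unitri q hq0 hq1 hqm1 k (π g) a b c ?_
    rw [← hπx1, hπx2]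
  rw [Subgroup.mem_bot, ← hk, hk0, zpow_zero]
end

section
/- Let Γ = Γ₁ *_Σ Γ₂ be an amalgamated free product of groups along a common subgroup Σ, and let G ≤ Γ be a subgroup. Then sup{ |g| : g ∈ G } < ∞ if and only if there exist h ∈ Γ and i ∈ {1,2} such that hGh⁻¹ ⊆ Γᵢ. -/
namespace AmalgTree

variable {Λ : Type*} [DecidableEq Λ]

private theorem bool_ne_iff {a b : Bool} : ¬ a = b ↔ a = !b := by
  cases a <;> cases b <;> simp

/-- Similarity function on (reversed) lists: `2 * (common prefix length) + (type bonus)`. -/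
def Hfun (τ : Λ → Bool) : Bool → List Λ → Bool → List Λ → ℕ
  | a, [], b, [] => if a = b then 1 else 0
  | a, [], _b, y :: _M => if τ y = a then 1 else 0
  | _a, x :: _L, b, [] => if τ x = b then 1 else 0
  | a, x :: L, b, y :: M =>
    if x = y then 2 + Hfun τ a L b M else if τ x = τ y then 1 else 0

variable {τ : Λ → Bool}

theorem Hfun_symm : ∀ (a : Bool) (L : List Λ) (b : Bool) (M : List Λ),
    Hfun τ a L b M = Hfun τ b M a L
  | _, [], _, [] => by simp [Hfun, eq_comm]
  | _, [], _, _ :: _ => by simp [Hfun]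
  | _, _ :: _, _, [] => by simp [Hfun]
  | a, x :: L, b, y :: M => by
    simp only [Hfun]
    by_cases h : x = y
    · subst h; simp [Hfun_symm a L b M]
    · simp only [h, Ne.symm h, if_false, eq_comm]

theorem Hfun_le_left : ∀ (a : Bool) (L : List Λ) (b : Bool) (M : List Λ),
    Hfun τ a L b M ≤ 2 * L.length + 1
  | _, [], _, [] => by simp only [Hfun]; split <;> simp
  | _, [], _, _ :: _ => by simp only [Hfun]; split <;> simp
  | _, x :: L, _, [] => by simp only [Hfun, List.length_cons]; split <;> omega
  | a, x :: L, b, y :: M => by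
    simp only [Hfun, List.length_cons]
    have := Hfun_le_left a L b M
    split
    · omega
    · split <;> omega

theorem Hfun_le_right (a : Bool) (L : List Λ) (b : Bool) (M : List Λ) :
    Hfun τ a L b M ≤ 2 * M.length + 1 := by
  rw [Hfun_symm]; exact Hfun_le_left b M a L

/-- Ultrametric-type inequality for the similarity. -/
theorem Hfun_ultra : ∀ (c : Bool) (K : List Λ) (a : Bool) (L : List Λ) (b : Bool) (M : List Λ),
    min (Hfun τ a L c K) (Hfun τ c K b M) ≤ Hfun τ a L b M
  | c, [], a, [], b, [] => by
    simp only [Hfun]; split_ifs <;> simp_all [bool_ne_iff]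
  | c, [], a, [], b, y :: M => by
    simp only [Hfun]; split_ifs <;> simp_all [bool_ne_iff]
  | c, [], a, x :: L, b, [] => by
    simp only [Hfun]; split_ifs <;> simp_all [bool_ne_iff]
  | c, [], a, x :: L, b, y :: M => by
    simp only [Hfun]
    split_ifs <;> simp_all [bool_ne_iff] <;> omega
  | c, z :: K, a, [], b, [] => by
    simp only [Hfun]; split_ifs <;> simp_all [bool_ne_iff]
  | c, z :: K, a, [], b, y :: M => by
    simp only [Hfun]
    have h2 := Hfun_le_right (τ := τ) c K b M
    split_ifs <;> simp_all [bool_ne_iff] <;> omega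
  | c, z :: K, a, x :: L, b, [] => by
    simp only [Hfun]
    have h2 := Hfun_le_left (τ := τ) a L c K
    split_ifs <;> simp_all [bool_ne_iff] <;> omega
  | c, z :: K, a, x :: L, b, y :: M => by
    simp only [Hfun]
    have hu := Hfun_ultra c K a L b M
    have h2 := Hfun_le_left (τ := τ) a L c K
    have h3 := Hfun_le_right (τ := τ) c K b M
    split_ifs <;> simp_all [bool_ne_iff] <;> omega

end AmalgTree

namespace AmalgTree

variable {Λ : Type*} [DecidableEq Λ] {τ : Λ → Bool}

theorem Hfun_same : ∀ (a b : Bool) (K : List Λ),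
    Hfun τ a K b K = 2 * K.length + (if a = b then 1 else 0)
  | a, b, [] => by simp [Hfun]
  | a, b, x :: K => by
    rw [Hfun, if_pos rfl, Hfun_same a b K, List.length_cons]; ring

theorem Hfun_prefix : ∀ (P : List Λ) (a b : Bool) (X Y : List Λ),
    Hfun τ a (P ++ X) b (P ++ Y) = 2 * P.length + Hfun τ a X b Y
  | [], a, b, X, Y => by simp
  | z :: P, a, b, X, Y => by
    rw [List.cons_append, List.cons_append, Hfun, if_pos rfl, Hfun_prefix P a b X Y,
      List.length_cons]
    ring

theorem Hfun_big_eq : ∀ (a : Bool) (L : List Λ) (b : Bool) (M : List Λ),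
    L.length + M.length + 1 ≤ Hfun τ a L b M → a = b ∧ L = M
  | a, [], b, [] => by simp only [Hfun]; split <;> simp_all
  | a, [], b, y :: M => by simp only [Hfun]; split <;> simp <;> omega
  | a, x :: L, b, [] => by simp only [Hfun]; split <;> simp <;> omega
  | a, x :: L, b, y :: M => by
    simp only [Hfun, List.length_cons]
    split
    · next h =>
      subst h
      intro hle
      have := Hfun_big_eq a L b M (by omega)
      simp [this.1, this.2]
    · split <;> omega

/-- The tree metric on `Bool × List Λ`; the lists are in "reversed" (root-first)
order inside `Hfun`, so `Dfun` takes ordinary lists. -/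
def Dfun (τ : Λ → Bool) (p q : Bool × List Λ) : ℕ :=
  p.2.length + q.2.length + 1 - Hfun τ p.1 p.2.reverse q.1 q.2.reverse

theorem Dfun_add_Hfun (p q : Bool × List Λ) :
    Dfun τ p q + Hfun τ p.1 p.2.reverse q.1 q.2.reverse =
      p.2.length + q.2.length + 1 := by
  have h := Hfun_le_left (τ := τ) p.1 p.2.reverse q.1 q.2.reverse
  have h2 := Hfun_le_right (τ := τ) p.1 p.2.reverse q.1 q.2.reverse
  rw [List.length_reverse] at h
  rw [List.length_reverse] at h2
  simp only [Dfun]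
  omega

theorem Dfun_symm (p q : Bool × List Λ) : Dfun τ p q = Dfun τ q p := by
  simp only [Dfun, Hfun_symm p.1]; omega

@[simp]
theorem Dfun_self (p : Bool × List Λ) : Dfun τ p p = 0 := by
  simp only [Dfun]
  rw [Hfun_same, if_pos rfl, List.length_reverse]
  omega

theorem eq_of_Dfun_eq_zero {p q : Bool × List Λ} (h : Dfun τ p q = 0) : p = q := by
  have h2 := Dfun_add_Hfun (τ := τ) p q
  rw [h, zero_add] at h2
  have h3 := Hfun_big_eq p.1 p.2.reverse q.1 q.2.reverse
    (by rw [h2]; simp)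
  have h4 : p.2 = q.2 := by
    have := h3.2
    simpa using congrArg List.reverse this
  rcases p with ⟨a, L⟩; rcases q with ⟨b, M⟩
  simp_all [h3.1]

/-- The four-point (0-hyperbolicity) condition. -/
theorem Dfun_four_point (p q r s : Bool × List Λ) :
    Dfun τ p q + Dfun τ r s ≤
      max (Dfun τ p r + Dfun τ q s) (Dfun τ p s + Dfun τ q r) := by
  rcases p with ⟨a, P⟩; rcases q with ⟨b, Q⟩; rcases r with ⟨c, R⟩; rcases s with ⟨e, S⟩
  have u1 := Hfun_ultra (τ := τ) c R.reverse a P.reverse b Q.reverse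
  have u2 := Hfun_ultra (τ := τ) e S.reverse a P.reverse b Q.reverse
  have u3 := Hfun_ultra (τ := τ) a P.reverse c R.reverse e S.reverse
  have u4 := Hfun_ultra (τ := τ) b Q.reverse c R.reverse e S.reverse
  have i1 := Dfun_add_Hfun (τ := τ) (a, P) (b, Q)
  have i2 := Dfun_add_Hfun (τ := τ) (a, P) (c, R)
  have i3 := Dfun_add_Hfun (τ := τ) (a, P) (e, S)
  have i4 := Dfun_add_Hfun (τ := τ) (b, Q) (c, R)
  have i5 := Dfun_add_Hfun (τ := τ) (b, Q) (e, S)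
  have i6 := Dfun_add_Hfun (τ := τ) (c, R) (e, S)
  have s1 := Hfun_symm (τ := τ) a P.reverse c R.reverse
  have s2 := Hfun_symm (τ := τ) a P.reverse e S.reverse
  have s3 := Hfun_symm (τ := τ) b Q.reverse c R.reverse
  have s4 := Hfun_symm (τ := τ) b Q.reverse e S.reverse
  simp only at *
  rw [le_max_iff]
  rcases min_le_iff.mp u1 with h1 | h1 <;>
  rcases min_le_iff.mp u2 with h2 | h2 <;>
  rcases min_le_iff.mp u3 with h3 | h3 <;>
  rcases min_le_iff.mp u4 with h4 | h4 <;>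
  omega

theorem Dfun_triangle (p q r : Bool × List Λ) :
    Dfun τ p r ≤ Dfun τ p q + Dfun τ q r := by
  have h := Dfun_four_point (τ := τ) p r q q
  have h2 := Dfun_symm (τ := τ) r q
  simp only [Dfun_self] at h
  omega

theorem Dfun_strip (a b : Bool) (L M : List Λ) (z : Λ) :
    Dfun τ (a, L ++ [z]) (b, M ++ [z]) = Dfun τ (a, L) (b, M) := by
  simp only [Dfun, List.reverse_append, List.reverse_cons, List.reverse_nil,
    List.nil_append, List.cons_append, List.length_append, List.length_cons,
    List.length_nil, Hfun, if_pos rfl, if_true, eq_self_iff_true]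
  omega

/-- The "end type" of a list : type of its last letter, or default. -/
def endType (τ : Λ → Bool) (b : Bool) (M : List Λ) : Bool :=
  (M.getLast?.map τ).getD b

theorem Dfun_nil_left (a b : Bool) (M : List Λ) :
    Dfun τ (a, []) (b, M) = M.length + (if endType τ b M = a then 0 else 1) := by
  rcases h : M.reverse with _ | ⟨t, K⟩
  · have : M = [] := by simpa using congrArg List.reverse h
    subst this
    simp only [Dfun, endType, Hfun, List.reverse_nil, List.length_nil]
    rcases Bool.decEq a b with hb | hb <;> simp_all [eq_comm]
  · have hgl : M.getLast? = some t := by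
      rw [← List.head?_reverse, h]; rfl
    simp only [Dfun, endType, h, hgl, List.length_nil, List.reverse_nil, Hfun, Option.map_some,
      Option.getD_some]
    have hlen : M.length = K.length + 1 := by
      have := congrArg List.length h
      simpa using this
    rcases Bool.decEq (τ t) a with hb | hb <;> simp_all [eq_comm]

theorem even_disp {a : Bool} {M : List Λ}
    (hchain : M.Chain' fun s t => τ s ≠ τ t)
    (hhead : ∀ x, M.head? = some x → τ x ≠ a) :
    Even (Dfun τ (a, []) (a, M)) := by
  rw [Dfun_nil_left]
  induction M generalizing a with
  | nil => simp [endType]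
  | cons x M ih =>
    rcases M with _ | ⟨y, M'⟩
    · have hx : τ x ≠ a := hhead x rfl
      simp only [endType, List.getLast?_singleton, Option.map_some, Option.getD_some,
        List.length_cons, List.length_nil, if_neg hx]
      exact ⟨1, by simp [hx]⟩
    · have hchain' : (y :: M').Chain' fun s t => τ s ≠ τ t := hchain.tail
      have hxy : τ x ≠ τ y := (List.isChain_cons_cons.mp hchain).1
      have hx : τ x ≠ a := hhead x rfl
      have hxa : τ x = !a := bool_ne_iff.mp hx
      have h1 : τ x = !(τ y) := bool_ne_iff.mp hxy
      have hy2 : τ y = a := by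
        cases hb : τ y <;> cases hc : a <;> simp_all
      have hy : τ y ≠ !a := by
        rw [hy2]; cases a <;> simp
      have ih' := ih (a := !a) hchain' (fun z hz => by
        simp only [List.head?_cons, Option.some.injEq] at hz
        subst hz; exact hy)
      have hend : endType τ (!a) (y :: M') = endType τ a (x :: y :: M') := by
        simp [endType, List.getLast?]
      rw [← hend]
      by_cases he : endType τ (!a) (y :: M') = a
      · rw [if_pos he]
        rw [if_neg (show ¬ endType τ (!a) (y :: M') = !a by
          rw [he]; cases a <;> simp)] at ih'
        rw [Nat.even_iff] at ih' ⊢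
        simp only [List.length_cons] at ih' ⊢
        omega
      · rw [if_neg he]
        rw [if_pos (bool_ne_iff.mp he)] at ih'
        rw [Nat.even_iff] at ih' ⊢
        simp only [List.length_cons] at ih' ⊢
        omega

end AmalgTree

namespace AmalgTree

variable {Λ : Type*} [DecidableEq Λ] {τ : Λ → Bool}

theorem Dfun_same_list (a b : Bool) (L : List Λ) : Dfun τ (a, L) (b, L) ≤ 1 := by
  simp only [Dfun]
  rw [Hfun_same, List.length_reverse]
  split <;> omega

theorem Dfun_cons_left {t : Λ} {b : Bool} (h : τ t = b) (a : Bool) (M : List Λ) :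
    Dfun τ (a, t :: M) (b, M) = 1 := by
  simp only [Dfun, List.reverse_cons]
  have h2 : Hfun τ a (M.reverse ++ [t]) b M.reverse =
      2 * M.reverse.length + Hfun τ a [t] b [] := by
    conv_lhs => rw [show M.reverse = M.reverse ++ ([] : List Λ) by simp]
    rw [show (M.reverse ++ ([] : List Λ)) ++ [t] = M.reverse ++ [t] by simp]
    exact Hfun_prefix M.reverse a b [t] []
  rw [h2]
  have h3 : Hfun τ a [t] b [] = 1 := by
    show (if τ t = b then 1 else 0) = 1
    rw [if_pos h]
  rw [h3]
  simp only [List.length_reverse, List.length_cons]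
  omega

theorem Dfun_concat_ne {z z' : Λ} (h : z ≠ z') (a b : Bool) (L M : List Λ) :
    Dfun τ (a, L ++ [z]) (b, M ++ [z']) =
      L.length + M.length + 2 + (if τ z = τ z' then 0 else 1) := by
  simp only [Dfun, List.reverse_append, List.reverse_cons, List.reverse_nil,
    List.nil_append, List.cons_append, List.length_append, List.length_cons,
    List.length_nil, Hfun, if_neg h]
  have hb := Hfun_le_left (τ := τ) a (L ++ [z]).reverse b (M ++ [z']).reverse
  split <;> omega

end AmalgTree

namespace AmalgTree

variable {Λ : Type*} [DecidableEq Λ] {τ : Λ → Bool}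

theorem endType_cons (a : Bool) (z : Λ) (rest : List Λ) :
    endType τ a (z :: rest) = endType τ (τ z) rest := by
  rcases rest with _ | ⟨w, rest'⟩
  · rfl
  · simp [endType, List.getLast?]

theorem endType_concat (b : Bool) (z : Λ) (M : List Λ) :
    endType τ b (M ++ [z]) = τ z := by
  simp [endType, List.getLast?_concat]

theorem endType_nil (b : Bool) : endType τ b ([] : List Λ) = b := rfl

end AmalgTree
namespace AmalgProof
open Monoid Monoid.PushoutI Monoid.PushoutI.NormalWord Monoid.CoprodI Function AmalgTree

variable {B : Type} [Group B] {Γfam : Bool → Type} [∀ i, Group (Γfam i)]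
  {ψ : ∀ i, B →* Γfam i} [∀ i, DecidableEq (Γfam i)]
  (d : NormalWord.Transversal ψ)

/-- The tail list of the normal form of `x` relative to `a` : the canonical
representative data of the right coset `(of a).range * x`. -/
noncomputable def tl (a : Bool) (x : PushoutI ψ) : List ((i : Bool) × Γfam i) :=
  ((NormalWord.equivPair a (NormalWord.equiv (d := d) x)).tail).toList

/-- The vertex of the Bass-Serre tree associated to the coset `(of a).range * x`. -/
noncomputable def nu (a : Bool) (x : PushoutI ψ) : Bool × List ((i : Bool) × Γfam i) :=
  (a, tl d a x)

/-- Product of a list of letters. -/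
def TT (l : List ((i : Bool) × Γfam i)) : PushoutI ψ :=
  (l.map fun z => of (φ := ψ) z.1 z.2).prod

@[simp] theorem TT_nil : TT ([] : List ((i : Bool) × Γfam i)) = (1 : PushoutI ψ) := rfl

theorem TT_cons (z : (i : Bool) × Γfam i) (l : List ((i : Bool) × Γfam i)) :
    TT (ψ := ψ) (z :: l) = of (φ := ψ) z.1 z.2 * TT l := by
  simp [TT]

theorem TT_concat (l : List ((i : Bool) × Γfam i)) (z : (i : Bool) × Γfam i) :
    TT (ψ := ψ) (l ++ [z]) = TT l * of (φ := ψ) z.1 z.2 := by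
  simp [TT]

theorem equiv_apply (x : PushoutI ψ) :
    NormalWord.equiv (d := d) x = x • (NormalWord.empty : NormalWord d) := rfl

theorem equiv_symm_apply (w : NormalWord d) :
    (NormalWord.equiv (d := d)).symm w = w.prod := rfl

theorem tl_of_mul (a : Bool) (γ : Γfam a) (x : PushoutI ψ) :
    tl d a (of (φ := ψ) a γ * x) = tl d a x := by
  have h1 : NormalWord.equiv (d := d) (of (φ := ψ) a γ * x)
      = of (φ := ψ) a γ • NormalWord.equiv (d := d) x := by
    rw [equiv_apply, equiv_apply, mul_smul]
  rw [tl, h1, NormalWord.summand_smul_def, Equiv.apply_symm_apply]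
  rfl

theorem ofCoprodI_wordProd (w : Word Γfam) :
    ofCoprodI (φ := ψ) w.prod = TT w.toList := by
  rw [Word.prod, TT, MonoidHom.map_list_prod, List.map_map]
  rfl

theorem exists_decomp (a : Bool) (x : PushoutI ψ) :
    ∃ γ : Γfam a, x = of (φ := ψ) a γ * TT (tl d a x) := by
  set w := NormalWord.equiv (d := d) x with hw
  set p := NormalWord.equivPair a w with hp
  refine ⟨p.head, ?_⟩
  have h1 : NormalWord.equiv (d := d) (of (φ := ψ) a p.head⁻¹ * x)
      = (NormalWord.equivPair a).symm { p with head := 1 } := by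
    rw [equiv_apply, mul_smul, ← equiv_apply, ← hw, NormalWord.summand_smul_def, ← hp,
      inv_mul_cancel]
  have h2 : of (φ := ψ) a p.head⁻¹ * x = ((NormalWord.equivPair a).symm
      { p with head := 1 } : NormalWord d).prod := by
    rw [← h1, ← equiv_symm_apply, Equiv.symm_apply_apply]
  have h3 : ((NormalWord.equivPair a).symm { p with head := 1 } : NormalWord d).prod
      = ofCoprodI (φ := ψ) p.tail.prod := by
    show (NormalWord.rcons a { p with head := 1 }).prod = _
    rw [NormalWord.prod]
    simp only [NormalWord.rcons, Word.equivPair_symm,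
      Subgroup.IsComplement.equiv_one (d.compl a) (Subgroup.one_mem _) (d.one_mem a)]
    rw [show ((⟨1, Subgroup.one_mem _⟩ : (ψ a).range)) = (1 : (ψ a).range) from rfl]
    rw [map_one, map_one, one_mul]
    congr 1
    rw [Word.rcons, dif_pos rfl]
  have h4 : tl d a x = p.tail.toList := rfl
  rw [h4, ← ofCoprodI_wordProd, ← h3, ← h2, map_inv]
  group

theorem tl_TT (w : Word Γfam) (hnorm : ∀ i g, ⟨i, g⟩ ∈ w.toList → g ∈ d.set i)
    (a : Bool) (ha : w.fstIdx ≠ some a) :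
    tl d a (TT w.toList) = w.toList := by
  set W : NormalWord d := ⟨w, 1, hnorm⟩ with hWdef
  have hW : TT (ψ := ψ) w.toList = W.prod := by
    rw [NormalWord.prod, ← ofCoprodI_wordProd]
    show _ = base ψ 1 * _
    rw [map_one, one_mul]
  have he : NormalWord.equiv (d := d) (TT w.toList) = W := by
    rw [hW, equiv_apply]
    exact NormalWord.prod_smul_empty W
  rw [tl, he]
  show (Word.equivPair a (CoprodI.of (ψ a W.head) • W.toWord)).tail.toList = _
  have hh : W.head = 1 := rfl
  rw [hh, map_one, map_one, one_smul]
  show (Word.equivPair a w).tail.toList = _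
  rw [Word.equivPair_eq_of_fstIdx_ne ha]

theorem mul_inv_mem_of_tl_eq {a : Bool} {x y : PushoutI ψ} (h : tl d a x = tl d a y) :
    x * y⁻¹ ∈ (of (φ := ψ) a).range := by
  obtain ⟨γ, hγ⟩ := exists_decomp d a x
  obtain ⟨δ, hδ⟩ := exists_decomp d a y
  refine ⟨γ * δ⁻¹, ?_⟩
  rw [map_mul, map_inv, hγ, hδ, h]
  group

theorem tl_eq_of_eq_mul {a : Bool} {x y : PushoutI ψ} (u : Γfam a)
    (h : x = of (φ := ψ) a u * y) : tl d a x = tl d a y := by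
  rw [h, tl_of_mul]

end AmalgProof
namespace AmalgProof
open Monoid Monoid.PushoutI Monoid.PushoutI.NormalWord Monoid.CoprodI Function AmalgTree

variable {B : Type} [Group B] {Γfam : Bool → Type} [∀ i, Group (Γfam i)]
  {ψ : ∀ i, B →* Γfam i} [∀ i, DecidableEq (Γfam i)]
  (d : NormalWord.Transversal ψ)

theorem toList_eq (a : Bool) (x : PushoutI ψ) :
    (NormalWord.equiv (d := d) x).toList = tl d a x ∨
      ∃ g : Γfam a, (NormalWord.equiv (d := d) x).toList = ⟨a, g⟩ :: tl d a x := by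
  set w := NormalWord.equiv (d := d) x with hw
  set p := NormalWord.equivPair a w with hp
  have hr : w = (NormalWord.equivPair a).symm p :=
    ((NormalWord.equivPair a).symm_apply_apply w).symm
  have key : ((NormalWord.equivPair a).symm p : NormalWord d).toList
      = (Word.rcons ⟨((((d.compl a).equiv p.head)).2 : Γfam a), p.tail, p.fstIdx_ne⟩).toList :=
    rfl
  have htl : tl d a x = p.tail.toList := rfl
  by_cases hone : ((((d.compl a).equiv p.head)).2 : Γfam a) = 1
  · left
    rw [hr, key, htl, Word.rcons, dif_pos hone]
  · right
    refine ⟨(((d.compl a).equiv p.head)).2, ?_⟩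
    rw [hr, key, htl, Word.rcons, dif_neg hone]
    rfl

theorem dist_nu_le_one (a b : Bool) (z : PushoutI ψ) :
    Dfun Sigma.fst (nu d a z) (nu d b z) ≤ 1 := by
  by_cases hab : a = b
  · subst hab
    rw [Dfun_self (τ := Sigma.fst) (nu d a z)]
    omega
  · rcases toList_eq d a z with h1 | ⟨g1, h1⟩ <;> rcases toList_eq d b z with h2 | ⟨g2, h2⟩
    · have h3 : tl d a z = tl d b z := by rw [← h1, ← h2]
      show Dfun Sigma.fst (a, tl d a z) (b, tl d b z) ≤ 1
      rw [h3]
      exact Dfun_same_list a b _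
    · have h3 : tl d a z = ⟨b, g2⟩ :: tl d b z := by rw [← h1, ← h2]
      show Dfun Sigma.fst (a, tl d a z) (b, tl d b z) ≤ 1
      rw [h3, Dfun_cons_left (τ := Sigma.fst) rfl a (tl d b z)]
    · have h3 : tl d b z = ⟨a, g1⟩ :: tl d a z := by rw [← h1, ← h2]
      show Dfun Sigma.fst (a, tl d a z) (b, tl d b z) ≤ 1
      rw [h3, Dfun_symm, Dfun_cons_left (τ := Sigma.fst) rfl b (tl d a z)]
    · exfalso
      have h3 := h1.symm.trans h2
      simp only [List.cons.injEq, Sigma.mk.inj_iff] at h3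
      exact hab h3.1.1

/-- Adjacency of cosets. -/
def Rel (p q : Bool × PushoutI ψ) : Prop :=
  ∃ (u : Γfam p.1) (v : Γfam q.1),
    p.2 * q.2⁻¹ = (of (φ := ψ) p.1 u)⁻¹ * of (φ := ψ) q.1 v

theorem Rel.symm {p q : Bool × PushoutI ψ} (h : Rel p q) : Rel q p := by
  obtain ⟨u, v, huv⟩ := h
  refine ⟨v, u, ?_⟩
  have h2 : q.2 * p.2⁻¹ = (p.2 * q.2⁻¹)⁻¹ := by group
  rw [h2, huv]
  group

theorem rel_dist {p q : Bool × PushoutI ψ} (h : Rel p q) :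
    Dfun Sigma.fst (nu d p.1 p.2) (nu d q.1 q.2) ≤ 1 := by
  obtain ⟨u, v, huv⟩ := h
  have hz : of (φ := ψ) p.1 u * p.2 = of (φ := ψ) q.1 v * q.2 := by
    have hp2 : p.2 = (of (φ := ψ) p.1 u)⁻¹ * of (φ := ψ) q.1 v * q.2 := by
      rw [← huv]; group
    rw [hp2]; group
  have h1 : tl d p.1 p.2 = tl d p.1 (of (φ := ψ) p.1 u * p.2) := (tl_of_mul d _ _ _).symm
  have h2 : tl d q.1 q.2 = tl d q.1 (of (φ := ψ) p.1 u * p.2) := by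
    rw [hz, tl_of_mul]
  show Dfun Sigma.fst (p.1, tl d p.1 p.2) (q.1, tl d q.1 q.2) ≤ 1
  rw [h1, h2]
  exact dist_nu_le_one d p.1 q.1 _

/-- Walks of a given length in the coset graph. -/
def Walk : ℕ → (Bool × PushoutI ψ) → (Bool × PushoutI ψ) → Prop
  | 0, p, q => nu d p.1 p.2 = nu d q.1 q.2
  | n+1, p, q => ∃ r, Rel p r ∧ Walk n r q

theorem walk_dist {n : ℕ} : ∀ {p q : Bool × PushoutI ψ}, Walk d n p q →
    Dfun Sigma.fst (nu d p.1 p.2) (nu d q.1 q.2) ≤ n := by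
  induction n with
  | zero => intro p q h; rw [show nu d p.1 p.2 = nu d q.1 q.2 from h, Dfun_self]
  | succ n ih =>
    rintro p q ⟨r, hrel, hw⟩
    calc Dfun Sigma.fst (nu d p.1 p.2) (nu d q.1 q.2)
        ≤ Dfun Sigma.fst (nu d p.1 p.2) (nu d r.1 r.2)
          + Dfun Sigma.fst (nu d r.1 r.2) (nu d q.1 q.2) := Dfun_triangle _ _ _
      _ ≤ n + 1 := by
          have := rel_dist d hrel
          have := ih hw
          omega

theorem nu_eq_elim {a b : Bool} {x y : PushoutI ψ} (h : nu d a x = nu d b y) :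
    a = b ∧ tl d a x = tl d b y := by
  have h1 : a = b := congrArg Prod.fst h
  subst h1
  exact ⟨rfl, congrArg Prod.snd h⟩

theorem nu_eq_intro {a b : Bool} {x y : PushoutI ψ} (h1 : a = b)
    (h2 : tl d a x = tl d b y) : nu d a x = nu d b y := by
  subst h1
  show (a, tl d a x) = (a, tl d a y)
  rw [h2]

theorem rel_congr {p p' r : Bool × PushoutI ψ} (h1 : p.1 = p'.1)
    (h2 : tl d p.1 p.2 = tl d p'.1 p'.2) (h : Rel p r) : Rel p' r := by
  obtain ⟨u, v, huv⟩ := h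
  rcases p with ⟨a, x⟩; rcases p' with ⟨a', x'⟩
  dsimp at h1 h2 ⊢
  subst h1
  obtain ⟨w, hwmem⟩ := mul_inv_mem_of_tl_eq d h2.symm
  refine ⟨u * w⁻¹, v, ?_⟩
  have hx' : x' = of (φ := ψ) a w * x := by
    rw [hwmem]; group
  rw [hx', map_mul, map_inv]
  rw [show of (φ := ψ) a w * x * r.2⁻¹ = of (φ := ψ) a w * (x * r.2⁻¹) by group, huv]
  group

theorem walk_congr {n : ℕ} : ∀ {p p' q : Bool × PushoutI ψ}, p.1 = p'.1 →
    tl d p.1 p.2 = tl d p'.1 p'.2 → Walk d n p q → Walk d n p' q := by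
  induction n with
  | zero =>
    intro p p' q h1 h2 h
    show nu d p'.1 p'.2 = nu d q.1 q.2
    have hn : nu d p.1 p.2 = nu d p'.1 p'.2 := nu_eq_intro d h1 h2
    rw [← hn]; exact h
  | succ n _ =>
    rintro p p' q h1 h2 ⟨r, hrel, hw⟩
    exact ⟨r, rel_congr d h1 h2 hrel, hw⟩

theorem walk_append {m : ℕ} : ∀ {n : ℕ} {p r q : Bool × PushoutI ψ},
    Walk d m p r → Walk d n r q → Walk d (m + n) p q := by
  induction m with
  | zero =>
    intro n p r q h1 h2
    have h3 : nu d p.1 p.2 = nu d r.1 r.2 := h1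
    obtain ⟨h4, h5⟩ := nu_eq_elim d h3
    rw [show 0 + n = n by omega]
    exact walk_congr d h4.symm h5.symm h2
  | succ m ih =>
    rintro n p r q ⟨s, hrel, hw⟩ h2
    rw [show m + 1 + n = (m + n) + 1 by omega]
    exact ⟨s, hrel, ih hw h2⟩

theorem walk_snoc {n : ℕ} : ∀ {p q r : Bool × PushoutI ψ},
    Walk d n p q → Rel q r → Walk d (n + 1) p r := by
  induction n with
  | zero =>
    intro p q r h1 h2
    have h3 : nu d p.1 p.2 = nu d q.1 q.2 := h1
    obtain ⟨h4, h5⟩ := nu_eq_elim d h3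
    refine ⟨r, ?_, rfl⟩
    exact rel_congr d h4.symm h5.symm h2
  | succ n ih =>
    rintro p q r ⟨s, hrel, hw⟩ h2
    exact ⟨s, hrel, ih hw h2⟩

theorem walk_symm {n : ℕ} : ∀ {p q : Bool × PushoutI ψ}, Walk d n p q → Walk d n q p := by
  induction n with
  | zero => intro p q h; exact (h : nu d p.1 p.2 = nu d q.1 q.2).symm
  | succ n ih =>
    rintro p q ⟨r, hrel, hw⟩
    exact walk_snoc d (ih hw) hrel.symm

theorem walk_translate (g : PushoutI ψ) {n : ℕ} :
    ∀ {p q : Bool × PushoutI ψ}, Walk d n p q →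
      Walk d n (p.1, p.2 * g) (q.1, q.2 * g) := by
  induction n with
  | zero =>
    intro p q h
    have h3 : nu d p.1 p.2 = nu d q.1 q.2 := h
    obtain ⟨h4, h5⟩ := nu_eq_elim d h3
    show nu d p.1 (p.2 * g) = nu d q.1 (q.2 * g)
    rw [← h4] at h5
    obtain ⟨u, hu⟩ := mul_inv_mem_of_tl_eq d h5
    have h6 : p.2 * g = of (φ := ψ) p.1 u * (q.2 * g) := by
      rw [hu]; group
    refine nu_eq_intro d h4 ?_
    rw [← h4]
    exact tl_eq_of_eq_mul d u h6
  | succ n ih =>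
    rintro p q ⟨r, ⟨u, v, huv⟩, hw⟩
    refine ⟨(r.1, r.2 * g), ⟨u, v, ?_⟩, ih hw⟩
    show p.2 * g * (r.2 * g)⁻¹ = _
    rw [show p.2 * g * (r.2 * g)⁻¹ = p.2 * r.2⁻¹ by group, huv]

theorem walk_mid {k : ℕ} : ∀ {n : ℕ} {p q : Bool × PushoutI ψ}, Walk d n p q → k ≤ n →
    ∃ r, Walk d k p r ∧ Walk d (n - k) r q := by
  induction k with
  | zero =>
    intro n p q h _
    exact ⟨p, rfl, h⟩
  | succ k ih =>
    intro n p q h hk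
    rcases n with _ | n
    · omega
    obtain ⟨s, hrel, hw⟩ := h
    obtain ⟨r, h1, h2⟩ := ih hw (by omega)
    refine ⟨r, ⟨s, hrel, h1⟩, ?_⟩
    rw [show n + 1 - (k + 1) = n - k by omega]
    exact h2

end AmalgProof
namespace AmalgProof
open Monoid Monoid.PushoutI Monoid.PushoutI.NormalWord Monoid.CoprodI Function AmalgTree

variable {B : Type} [Group B] {Γfam : Bool → Type} [∀ i, Group (Γfam i)]
  {ψ : ∀ i, B →* Γfam i} [∀ i, DecidableEq (Γfam i)]
  (d : NormalWord.Transversal ψ)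

theorem tl_word (a : Bool) (x : PushoutI ψ) :
    ∃ w : Word Γfam, w.toList = tl d a x ∧ w.fstIdx ≠ some a ∧
      (∀ i g, ⟨i, g⟩ ∈ w.toList → g ∈ d.set i) :=
  ⟨(NormalWord.equivPair a (NormalWord.equiv (d := d) x)).tail, rfl,
    (NormalWord.equivPair a (NormalWord.equiv (d := d) x)).fstIdx_ne,
    (NormalWord.equivPair a (NormalWord.equiv (d := d) x)).normalized⟩

theorem word_cons (w : Word Γfam) {z : (i : Bool) × Γfam i}
    {rest : List ((i : Bool) × Γfam i)} (h : w.toList = z :: rest) :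
    ∃ w' : Word Γfam, w'.toList = rest ∧ w'.fstIdx ≠ some z.1 := by
  have hchain := w.chain_ne
  rw [h] at hchain
  refine ⟨⟨rest, fun l hl => w.ne_one l (by rw [h]; exact List.mem_cons_of_mem _ hl),
    hchain.tail⟩, rfl, ?_⟩
  rw [Word.fstIdx_ne_iff]
  intro l hl
  exact (List.isChain_cons.mp hchain).1 l hl

theorem word_dropLast (w : Word Γfam) {L' : List ((i : Bool) × Γfam i)}
    {z : (i : Bool) × Γfam i} (h : w.toList = L' ++ [z]) (a : Bool)
    (ha : w.fstIdx ≠ some a) :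
    ∃ w' : Word Γfam, w'.toList = L' ∧ w'.fstIdx ≠ some a := by
  refine ⟨⟨L', fun l hl => w.ne_one l (by rw [h]; exact List.mem_append_left _ hl),
    w.chain_ne.prefix (by rw [h]; exact ⟨[z], rfl⟩)⟩, rfl, ?_⟩
  rcases L' with _ | ⟨t, L''⟩
  · intro hcon; exact nomatch (show (none : Option Bool) = some a from hcon)
  · have h2 : w.fstIdx = some t.1 := by
      rw [Word.fstIdx, h]
      rfl
    intro hcon
    apply ha
    rw [h2, ← hcon]
    rfl

theorem peel : ∀ (l : List ((i : Bool) × Γfam i)) (a : Bool) (x : PushoutI ψ),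
    tl d a x = l →
    ∃ (c : Bool) (y : PushoutI ψ), Walk d l.length (a, x) (c, y) ∧ tl d c y = [] ∧
      c = endType Sigma.fst a l := by
  intro l
  induction l with
  | nil =>
    intro a x hx
    exact ⟨a, x, (show nu d a x = nu d a x from rfl), hx, rfl⟩
  | cons z rest ih =>
    intro a x hx
    obtain ⟨w, hwl, hwfst, hwnorm⟩ := tl_word d a x
    rw [hx] at hwl
    obtain ⟨w', hw'l, hw'fst⟩ := word_cons w hwl
    have htl1 : tl d z.1 (TT (ψ := ψ) rest) = rest := by
      have h := tl_TT d w' (fun i g hg => hwnorm i g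
        (by rw [hwl]; exact List.mem_cons_of_mem _ (hw'l ▸ hg))) z.1 hw'fst
      rw [hw'l] at h
      exact h
    obtain ⟨γ, hγ⟩ := exists_decomp d a x
    have hrel : Rel (a, x) (z.1, TT (ψ := ψ) rest) := by
      refine ⟨γ⁻¹, z.2, ?_⟩
      show x * (TT (ψ := ψ) rest)⁻¹ = (of (φ := ψ) a γ⁻¹)⁻¹ * of (φ := ψ) z.1 z.2
      rw [map_inv, inv_inv, hγ, hx, TT_cons]
      group
    obtain ⟨c, y, hwalk, hy, hc⟩ := ih z.1 (TT (ψ := ψ) rest) htl1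
    refine ⟨c, y, ⟨(z.1, TT (ψ := ψ) rest), hrel, hwalk⟩, hy, ?_⟩
    rw [hc, endType_cons]

theorem walk_exists (n : ℕ) : ∀ (a : Bool) (x : PushoutI ψ) (b : Bool) (y : PushoutI ψ),
    (tl d a x).length + (tl d b y).length = n →
    Walk d (Dfun Sigma.fst (nu d a x) (nu d b y)) (a, x) (b, y) := by
  induction n using Nat.strong_induction_on with
  | _ n ih =>
  intro a x b y hn
  have hnu1 : nu d a x = (a, tl d a x) := rfl
  have hnu2 : nu d b y = (b, tl d b y) := rfl
  by_cases hcommon : ∃ (L' M' : List ((i : Bool) × Γfam i)) (z : (i : Bool) × Γfam i),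
      tl d a x = L' ++ [z] ∧ tl d b y = M' ++ [z]
  · obtain ⟨L', M', z, hL, hM⟩ := hcommon
    -- strip the common last letter and use the induction hypothesis
    obtain ⟨γ, hγ⟩ := exists_decomp d a x
    obtain ⟨δ, hδ⟩ := exists_decomp d b y
    set g : PushoutI ψ := of (φ := ψ) z.1 z.2 with hg
    have hx' : x * g⁻¹ = of (φ := ψ) a γ * TT L' := by
      rw [hγ, hL, TT_concat, ← hg]; group
    have hy' : y * g⁻¹ = of (φ := ψ) b δ * TT M' := by
      rw [hδ, hM, TT_concat, ← hg]; group
    -- compute the tails of the stripped elements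
    obtain ⟨w, hwl, hwfst, hwnorm⟩ := tl_word d a x
    rw [hL] at hwl
    obtain ⟨wx, hwxl, hwxfst⟩ := word_dropLast w hwl a hwfst
    have htlx : tl d a (x * g⁻¹) = L' := by
      rw [hx', tl_of_mul]
      have h := tl_TT d wx (fun i gg hgg => hwnorm i gg
        (by rw [hwl]; exact List.mem_append_left _ (hwxl ▸ hgg))) a hwxfst
      rw [hwxl] at h
      exact h
    obtain ⟨v, hvl, hvfst, hvnorm⟩ := tl_word d b y
    rw [hM] at hvl
    obtain ⟨wy, hwyl, hwyfst⟩ := word_dropLast v hvl b hvfst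
    have htly : tl d b (y * g⁻¹) = M' := by
      rw [hy', tl_of_mul]
      have h := tl_TT d wy (fun i gg hgg => hvnorm i gg
        (by rw [hvl]; exact List.mem_append_left _ (hwyl ▸ hgg))) b hwyfst
      rw [hwyl] at h
      exact h
    have hlen : L'.length + M'.length < n := by
      rw [← hn, hL, hM]
      simp only [List.length_append, List.length_cons, List.length_nil]
      omega
    have hw := ih (L'.length + M'.length) hlen a (x * g⁻¹) b (y * g⁻¹)
      (by rw [htlx, htly])
    have htr := walk_translate d g hw
    simp only [inv_mul_cancel_right] at htr
    have hDeq : Dfun Sigma.fst (nu d a (x * g⁻¹)) (nu d b (y * g⁻¹))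
        = Dfun Sigma.fst (nu d a x) (nu d b y) := by
      show Dfun Sigma.fst (a, tl d a (x * g⁻¹)) (b, tl d b (y * g⁻¹))
        = Dfun Sigma.fst (a, tl d a x) (b, tl d b y)
      rw [htlx, htly, hL, hM, Dfun_strip]
    rw [← hDeq]
    exact htr
  · -- no common last letter: peel both sides completely
    obtain ⟨c₁, x₁, w1, hx₁, hc₁⟩ := peel d (tl d a x) a x rfl
    obtain ⟨c₂, y₁, w2, hy₁, hc₂⟩ := peel d (tl d b y) b y rfl
    have hD : Dfun Sigma.fst (nu d a x) (nu d b y) =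
        (tl d a x).length + (tl d b y).length + (if c₁ = c₂ then 0 else 1) := by
      rw [hnu1, hnu2]
      rcases List.eq_nil_or_concat (tl d a x) with hL | ⟨L', z, hL⟩ <;>
        rcases List.eq_nil_or_concat (tl d b y) with hM | ⟨M', z', hM⟩
      · rw [hL, hM, Dfun_nil_left, hc₁, hc₂, hL, hM, endType_nil, endType_nil]
        simp only [List.length_nil]
        by_cases hab : a = b
        · rw [if_pos hab.symm, if_pos hab]
        · rw [if_neg (fun hh => hab hh.symm), if_neg hab]
      · rw [List.concat_eq_append] at hM
        rw [hL, hM, Dfun_nil_left, hc₁, hc₂, hL, hM, endType_nil, endType_concat]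
        simp only [List.length_nil, List.length_append, List.length_cons]
        have hite : (if z'.1 = a then (0:ℕ) else 1) = (if a = z'.1 then 0 else 1) := by
          by_cases hz : z'.1 = a
          · rw [if_pos hz, if_pos hz.symm]
          · rw [if_neg hz, if_neg (fun hh => hz hh.symm)]
        omega
      · rw [List.concat_eq_append] at hL
        rw [hL, hM, Dfun_symm, Dfun_nil_left, hc₁, hc₂, hL, hM, endType_nil, endType_concat]
        simp only [List.length_nil, List.length_append, List.length_cons]
      · rw [List.concat_eq_append] at hL hM
        have hzz : z ≠ z' := by
          intro hzz
          exact hcommon ⟨L', M', z', by rw [← hzz] at hM ⊢; exact ⟨hL, hM⟩⟩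
        rw [hL, hM, Dfun_concat_ne hzz, hc₁, hc₂, hL, hM, endType_concat, endType_concat]
        simp only [List.length_append, List.length_cons, List.length_nil]
        omega
    rw [hD]
    by_cases hc : c₁ = c₂
    · rw [if_pos hc]
      have w2' : Walk d (tl d b y).length (c₁, x₁) (b, y) := by
        refine walk_congr d ?_ ?_ (walk_symm d w2)
        · exact hc.symm
        · show tl d c₂ y₁ = tl d c₁ x₁
          rw [hy₁, hx₁]
      have := walk_append d w1 w2'
      rw [show (tl d a x).length + (tl d b y).length + 0
          = (tl d a x).length + (tl d b y).length by omega]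
      exact this
    · rw [if_neg hc]
      obtain ⟨γ₁, hγ₁⟩ := exists_decomp d c₁ x₁
      obtain ⟨δ₁, hδ₁⟩ := exists_decomp d c₂ y₁
      rw [hx₁, TT_nil, mul_one] at hγ₁
      rw [hy₁, TT_nil, mul_one] at hδ₁
      have hrel : Rel (c₁, x₁) (c₂, y₁) := by
        refine ⟨γ₁⁻¹, δ₁⁻¹, ?_⟩
        show x₁ * y₁⁻¹ = (of (φ := ψ) c₁ γ₁⁻¹)⁻¹ * of (φ := ψ) c₂ δ₁⁻¹
        rw [map_inv, map_inv, inv_inv, hγ₁, hδ₁]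
      have hwalk := walk_append d (walk_snoc d w1 hrel) (walk_symm d w2)
      rw [show (tl d a x).length + (tl d b y).length + 1
          = (tl d a x).length + 1 + (tl d b y).length by omega]
      exact hwalk

theorem walk_zero {p q : Bool × PushoutI ψ} (h : nu d p.1 p.2 = nu d q.1 q.2) :
    Walk d 0 p q := h

theorem walk_cons {n : ℕ} {p r q : Bool × PushoutI ψ} (h1 : Rel p r) (h2 : Walk d n r q) :
    Walk d (n + 1) p q := ⟨r, h1, h2⟩

theorem nu_def (a : Bool) (x : PushoutI ψ) : nu d a x = (a, tl d a x) := rfl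

attribute [irreducible] tl nu AmalgTree.Dfun AmalgTree.Hfun Walk

theorem dist_le_of_translate (a b : Bool) (x y g : PushoutI ψ) :
    Dfun Sigma.fst (nu d a (x * g)) (nu d b (y * g)) ≤
      Dfun Sigma.fst (nu d a x) (nu d b y) := by
  have hw := walk_exists d ((tl d a x).length + (tl d b y).length) a x b y rfl
  have htr := walk_translate d g hw
  exact walk_dist d htr

theorem dist_invariant (a b : Bool) (x y g : PushoutI ψ) :
    Dfun Sigma.fst (nu d a (x * g)) (nu d b (y * g))
      = Dfun Sigma.fst (nu d a x) (nu d b y) := by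
  refine le_antisymm (dist_le_of_translate d a b x y g) ?_
  have h := dist_le_of_translate d a b (x * g) (y * g) g⁻¹
  simp only [mul_inv_cancel_right] at h
  exact h

end AmalgProof
namespace AmalgProof
open Monoid Monoid.PushoutI Monoid.PushoutI.NormalWord Monoid.CoprodI Function AmalgTree

variable {B : Type} [Group B] {Γfam : Bool → Type} [∀ i, Group (Γfam i)]
  {ψ : ∀ i, B →* Γfam i} [∀ i, DecidableEq (Γfam i)]
  (d : NormalWord.Transversal ψ)

theorem tl_one (a : Bool) : tl d a (1 : PushoutI ψ) = [] := by
  have h := tl_TT d Word.empty (by simp [Word.empty]) a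
    (by rw [Word.fstIdx]; simp [Word.empty])
  simp only [Word.empty] at h
  rw [← h, TT_nil]

/-- Displacement of the base vertex under right multiplication. -/
noncomputable def disp (g : PushoutI ψ) : ℕ :=
  Dfun Sigma.fst (nu d true 1) (nu d true g)

theorem walk_disp (g : PushoutI ψ) : Walk d (disp d g) (true, 1) (true, g) :=
  walk_exists d ((tl d true (1 : PushoutI ψ)).length + (tl d true g).length) true 1 true g rfl

theorem disp_one : disp d (1 : PushoutI ψ) = 0 := Dfun_self _

theorem disp_letter (i : Bool) (γ : Γfam i) : disp d (of (φ := ψ) i γ) ≤ 2 := by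
  have rel1 : Rel ((true, 1) : Bool × PushoutI ψ) (i, 1) := by
    refine ⟨1, 1, ?_⟩
    show (1 : PushoutI ψ) * 1⁻¹ = (of (φ := ψ) true 1)⁻¹ * of (φ := ψ) i 1
    simp
  have rel2 : Rel ((i, 1) : Bool × PushoutI ψ) (true, of (φ := ψ) i γ) := by
    refine ⟨γ, 1, ?_⟩
    show (1 : PushoutI ψ) * (of (φ := ψ) i γ)⁻¹ = (of (φ := ψ) i γ)⁻¹ * of (φ := ψ) true 1
    simp
  have hwalk : Walk d 2 (true, 1) (true, of (φ := ψ) i γ) :=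
    walk_cons d rel1 (walk_cons d rel2 (walk_zero d rfl))
  exact walk_dist d hwalk

theorem disp_mul (x y : PushoutI ψ) : disp d (x * y) ≤ disp d x + disp d y := by
  unfold disp
  have htri := Dfun_triangle (τ := (Sigma.fst : ((i : Bool) × Γfam i) → Bool))
    (nu d true 1) (nu d true y) (nu d true (x * y))
  have hinv := dist_invariant d true true 1 x y
  rw [one_mul] at hinv
  omega

theorem disp_list (l : List (PushoutI ψ))
    (hl : ∀ x ∈ l, ∃ i : Bool, x ∈ (of (φ := ψ) i).range) :
    disp d l.prod ≤ 2 * l.length := by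
  induction l with
  | nil => simp [disp_one]
  | cons z rest ih =>
    obtain ⟨i, γ, hγ⟩ := hl z List.mem_cons_self
    have h1 := disp_mul d z rest.prod
    have h2 : disp d z ≤ 2 := by rw [← hγ]; exact disp_letter d i γ
    have h3 := ih (fun x hx => hl x (List.mem_cons_of_mem _ hx))
    rw [List.prod_cons]
    calc disp d (z * rest.prod) ≤ disp d z + disp d rest.prod := h1
      _ ≤ 2 + 2 * rest.length := by omega
      _ = 2 * (z :: rest).length := by simp [List.length_cons]; ring

theorem disp_even (g : PushoutI ψ) : Even (disp d g) := by
  obtain ⟨w, hwl, hwfst, _⟩ := tl_word d true g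
  have hchain : (tl d true g).Chain' fun s t => s.fst ≠ t.fst := hwl ▸ w.chain_ne
  have hhead : ∀ x : (i : Bool) × Γfam i, (tl d true g).head? = some x → x.fst ≠ true := by
    intro x hx
    have := Word.fstIdx_ne_iff.mp hwfst x (by rw [hwl]; exact hx)
    exact fun hc => this hc.symm
  have h := even_disp (τ := (Sigma.fst : ((i : Bool) × Γfam i) → Bool))
    (a := true) (M := tl d true g) hchain hhead
  have hd : disp d g = Dfun Sigma.fst (true, ([] : List ((i : Bool) × Γfam i)))
      (true, tl d true g) := by
    show Dfun Sigma.fst (nu d true 1) (nu d true g) = _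
    rw [nu_def, nu_def, tl_one]
  rw [hd]
  exact h

end AmalgProof
namespace AmalgProof
open Monoid Monoid.PushoutI Monoid.PushoutI.NormalWord Monoid.CoprodI Function AmalgTree

variable {B : Type} [Group B] {Γfam : Bool → Type} [∀ i, Group (Γfam i)]
  {ψ : ∀ i, B →* Γfam i} [∀ i, DecidableEq (Γfam i)]
  (d : NormalWord.Transversal ψ)

include d in
theorem main_forward (G : Subgroup (PushoutI ψ)) (N : ℕ)
    (hN : ∀ g ∈ G, ∃ l : List (PushoutI ψ), l.length ≤ N ∧
      (∀ x ∈ l, ∃ i : Bool, x ∈ (of (φ := ψ) i).range) ∧ g = l.prod) :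
    ∃ (h : PushoutI ψ) (i : Bool), ∀ g ∈ G, h * g * h⁻¹ ∈ (of (φ := ψ) i).range := by
  classical
  have hdisp : ∀ g ∈ G, disp d g ≤ 2 * N := by
    intro g hg
    obtain ⟨l, hlen, hmem, hprod⟩ := hN g hg
    calc disp d g = disp d l.prod := by rw [hprod]
      _ ≤ 2 * l.length := disp_list d l hmem
      _ ≤ 2 * N := by omega
  set P : ℕ → Prop := fun n => ∃ g ∈ G, disp d g = n with hP
  set D := Nat.findGreatest P (2 * N) with hD
  have hmax : ∀ g ∈ G, disp d g ≤ D := fun g hg =>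
    Nat.le_findGreatest (hdisp g hg) ⟨g, hg, rfl⟩
  by_cases hall : ∀ g ∈ G, disp d g = 0
  · refine ⟨1, true, fun g hg => ?_⟩
    have h0 : Dfun Sigma.fst (nu d true 1) (nu d true g) = 0 := hall g hg
    obtain ⟨-, htl⟩ := nu_eq_elim d (eq_of_Dfun_eq_zero h0)
    obtain ⟨γ, hγ⟩ := mul_inv_mem_of_tl_eq d htl
    refine ⟨γ⁻¹, ?_⟩
    rw [map_inv, hγ]
    group
  · push_neg at hall
    obtain ⟨g₀, hg₀G, hg₀⟩ := hall
    have hPD : P D := Nat.findGreatest_spec (hdisp g₀ hg₀G) ⟨g₀, hg₀G, rfl⟩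
    obtain ⟨gs, hgsG, hgsD⟩ := hPD
    obtain ⟨q, hq⟩ := disp_even d gs
    have hq2 : D = q + q := by rw [← hgsD, hq]
    have hwalk : Walk d D (true, 1) (true, gs) := by
      rw [← hgsD]; exact walk_disp d gs
    obtain ⟨m, w1, w2⟩ := walk_mid d hwalk (show q ≤ D by omega)
    rw [show D - q = q by omega] at w2
    obtain ⟨c, u⟩ := m
    have dm1 : Dfun Sigma.fst (nu d true 1) (nu d c u) ≤ q := walk_dist d w1
    have dm2 : Dfun Sigma.fst (nu d c u) (nu d true gs) ≤ q := walk_dist d w2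
    have hgs2q : Dfun Sigma.fst (nu d true 1) (nu d true gs) = q + q := by
      rw [show Dfun Sigma.fst (nu d true 1) (nu d true gs) = disp d gs from rfl, hq]
    have htri0 := Dfun_triangle (τ := (Sigma.fst : ((i : Bool) × Γfam i) → Bool))
      (nu d true 1) (nu d c u) (nu d true gs)
    have dm1' : Dfun Sigma.fst (nu d true 1) (nu d c u) = q := by omega
    have dm2' : Dfun Sigma.fst (nu d c u) (nu d true gs) = q := by omega
    have claim : ∀ h ∈ G, Dfun Sigma.fst (nu d true h) (nu d c u) ≤ q := by
      intro h hh
      have hfp := Dfun_four_point (τ := (Sigma.fst : ((i : Bool) × Γfam i) → Bool))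
        (nu d true h) (nu d c u) (nu d true 1) (nu d true gs)
      have b1 : Dfun Sigma.fst (nu d true h) (nu d true 1) ≤ q + q := by
        rw [Dfun_symm]
        have h1 : Dfun Sigma.fst (nu d true 1) (nu d true h) = disp d h := rfl
        have := hmax h hh
        omega
      have b3 : Dfun Sigma.fst (nu d true h) (nu d true gs) ≤ q + q := by
        have hinv := dist_invariant d true true h gs h⁻¹
        rw [mul_inv_cancel] at hinv
        have hdd : Dfun Sigma.fst (nu d true 1) (nu d true (gs * h⁻¹))
            = disp d (gs * h⁻¹) := rfl
        have := hmax _ (mul_mem hgsG (inv_mem hh))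
        omega
      have b4 : Dfun Sigma.fst (nu d c u) (nu d true 1) = q := by
        rw [Dfun_symm]; exact dm1'
      have hmaxle : max (Dfun Sigma.fst (nu d true h) (nu d true 1)
            + Dfun Sigma.fst (nu d c u) (nu d true gs))
          (Dfun Sigma.fst (nu d true h) (nu d true gs)
            + Dfun Sigma.fst (nu d c u) (nu d true 1)) ≤ (q + q) + q :=
        max_le (by omega) (by omega)
      omega
    refine ⟨u, c, fun g hgG => ?_⟩
    suffices hs : ∀ g ∈ G, u * g⁻¹ * u⁻¹ ∈ (of (φ := ψ) c).range by
      have := hs g⁻¹ (inv_mem hgG)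
      rw [inv_inv] at this
      exact this
    intro g hg
    have A1 : Dfun Sigma.fst (nu d true g) (nu d c (u * g)) = q := by
      have hinv := dist_invariant d true c 1 u g
      rw [one_mul] at hinv
      exact hinv.trans dm1'
    have A2 : Dfun Sigma.fst (nu d c (u * g)) (nu d true (gs * g)) = q :=
      (dist_invariant d c true u gs g).trans dm2'
    have A3 : Dfun Sigma.fst (nu d true g) (nu d true (gs * g)) = q + q := by
      have hinv := dist_invariant d true true 1 gs g
      rw [one_mul] at hinv
      exact hinv.trans hgs2q
    have B1 : Dfun Sigma.fst (nu d true g) (nu d c u) ≤ q := claim g hg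
    have B2 : Dfun Sigma.fst (nu d true (gs * g)) (nu d c u) ≤ q :=
      claim _ (mul_mem hgsG hg)
    have htri2 := Dfun_triangle (τ := (Sigma.fst : ((i : Bool) × Γfam i) → Bool))
      (nu d true g) (nu d c u) (nu d true (gs * g))
    have hsymm1 := Dfun_symm (τ := (Sigma.fst : ((i : Bool) × Γfam i) → Bool))
      (nu d c u) (nu d true g)
    have hsymm2 := Dfun_symm (τ := (Sigma.fst : ((i : Bool) × Γfam i) → Bool))
      (nu d c u) (nu d true (gs * g))
    have hsymm3 := Dfun_symm (τ := (Sigma.fst : ((i : Bool) × Γfam i) → Bool))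
      (nu d c (u * g)) (nu d true g)
    have hsymm4 := Dfun_symm (τ := (Sigma.fst : ((i : Bool) × Γfam i) → Bool))
      (nu d c (u * g)) (nu d true (gs * g))
    have hfp2 := Dfun_four_point (τ := (Sigma.fst : ((i : Bool) × Γfam i) → Bool))
      (nu d c u) (nu d c (u * g)) (nu d true g) (nu d true (gs * g))
    have hmax2 : max (Dfun Sigma.fst (nu d c u) (nu d true g)
          + Dfun Sigma.fst (nu d c (u * g)) (nu d true (gs * g)))
        (Dfun Sigma.fst (nu d c u) (nu d true (gs * g))
          + Dfun Sigma.fst (nu d c (u * g)) (nu d true g)) ≤ q + q :=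
      max_le (by omega) (by omega)
    have hzero : Dfun Sigma.fst (nu d c u) (nu d c (u * g)) = 0 := by omega
    obtain ⟨-, htl⟩ := nu_eq_elim d (eq_of_Dfun_eq_zero hzero)
    have hmem := mul_inv_mem_of_tl_eq d htl
    rw [mul_inv_rev, ← mul_assoc] at hmem
    exact hmem

theorem exists_letter_list (x : PushoutI ψ) :
    ∃ l : List (PushoutI ψ), (∀ z ∈ l, ∃ i : Bool, z ∈ (of (φ := ψ) i).range) ∧
      x = l.prod := by
  induction x using PushoutI.induction_on with
  | of i g =>
    refine ⟨[of (φ := ψ) i g], ?_, by simp⟩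
    intro z hz
    simp only [List.mem_singleton] at hz
    exact ⟨i, g, hz.symm⟩
  | base h =>
    refine ⟨[base ψ h], ?_, by simp⟩
    intro z hz
    simp only [List.mem_singleton] at hz
    exact ⟨true, ψ true h, by rw [hz]; exact of_apply_eq_base ψ true h⟩
  | mul x y ihx ihy =>
    obtain ⟨lx, hlxr, hlxp⟩ := ihx
    obtain ⟨ly, hlyr, hlyp⟩ := ihy
    refine ⟨lx ++ ly, ?_, by rw [List.prod_append, ← hlxp, ← hlyp]⟩
    intro z hz
    rcases List.mem_append.mp hz with hz | hz
    · exact hlxr z hz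
    · exact hlyr z hz

end AmalgProof

open Monoid

/-- Let `Γ = Γ₁ *_Σ Γ₂` be an amalgamated free product (realized as the
pushout of two injective maps `ψ i : Σ →* Γᵢ`, the two factors being indexed by `i : Bool`)
and let `G ≤ Γ` be a subgroup.  Then the reduced-expression lengths of the elements of `G`
are uniformly bounded (equivalently: there is an `N` such that every element of `G` is a
product of at most `N` elements of `Γ₁ ∪ Γ₂`) if and only if some conjugate `hGh⁻¹` of `G`
is contained in one of the factors `Γᵢ`. -/
theorem bounded_length_iff_conjugate_into_factor
    (B : Type) [Group B] (Γfam : Bool → Type) [∀ i, Group (Γfam i)]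
    (ψ : ∀ i, B →* Γfam i) (hinj : ∀ i, Function.Injective (ψ i))
    (G : Subgroup (Monoid.PushoutI ψ)) :
    (∃ N : ℕ, ∀ g ∈ G, ∃ l : List (Monoid.PushoutI ψ), l.length ≤ N ∧
        (∀ x ∈ l, ∃ i : Bool, x ∈ (Monoid.PushoutI.of (φ := ψ) i).range) ∧ g = l.prod) ↔
      ∃ (h : Monoid.PushoutI ψ) (i : Bool), ∀ g ∈ G,
        h * g * h⁻¹ ∈ (Monoid.PushoutI.of (φ := ψ) i).range := by
  classical
  obtain ⟨d⟩ := Monoid.PushoutI.NormalWord.transversal_nonempty ψ hinj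
  constructor
  · rintro ⟨N, hN⟩
    exact AmalgProof.main_forward d G N hN
  · rintro ⟨h, i, hcon⟩
    obtain ⟨l1, hl1r, hl1p⟩ := AmalgProof.exists_letter_list (ψ := ψ) h⁻¹
    obtain ⟨l2, hl2r, hl2p⟩ := AmalgProof.exists_letter_list (ψ := ψ) h
    refine ⟨l1.length + 1 + l2.length, fun g hg => ?_⟩
    obtain ⟨γ, hγ⟩ := hcon g hg
    refine ⟨l1 ++ [Monoid.PushoutI.of (φ := ψ) i γ] ++ l2, ?_, ?_, ?_⟩
    · simp only [List.length_append, List.length_cons, List.length_nil]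
      omega
    · intro x hx
      simp only [List.mem_append, List.mem_singleton] at hx
      rcases hx with (hx | hx) | hx
      · exact hl1r x hx
      · exact ⟨i, γ, hx.symm⟩
      · exact hl2r x hx
    · rw [List.prod_append, List.prod_append, List.prod_singleton, ← hl1p, ← hl2p, hγ]
      group
end

section
/- Let Γ = Γ₁ *_Σ Γ₂ be an amalgamated free product of groups along a common subgroup Σ, let i ∈ {1,2}, and let G ≤ Γᵢ be a subgroup such that G ⊀_{Γᵢ} Σ, i.e. there is no k ∈ Γᵢ for which G ∩ k⁻¹Σk has finite index in G. If g ∈ Γ satisfies gGg⁻¹ ⊆ Γᵢ, then g ∈ Γᵢ. -/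
open Monoid

open Monoid Monoid.PushoutI Monoid.PushoutI.NormalWord Monoid.CoprodI Function List

section Aux

variable {B : Type} [Group B] {Γfam : Bool → Type} [∀ i, Group (Γfam i)]
  {ψ : ∀ i, B →* Γfam i}

lemma auxB0 (hinj : ∀ i, Function.Injective (ψ i)) (i : Bool) (w : Word Γfam)
    (hred : PushoutI.Reduced ψ w) (hne : w.toList ≠ [])
    (hlast : (w.toList.getLast hne).1 ≠ i)
    (hmem : PushoutI.ofCoprodI (φ := ψ) w.prod ∈ (PushoutI.of (φ := ψ) i).range) : False := by
  obtain ⟨y, hy⟩ := hmem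
  by_cases hy' : y ∈ (ψ i).range
  · obtain ⟨b, rfl⟩ := hy'
    rw [of_apply_eq_base] at hy
    have := hred.eq_empty_of_mem_range hinj ⟨b, hy⟩
    rw [this] at hne
    exact hne rfl
  · have hy1 : y ≠ 1 := by rintro rfl; exact hy' (one_mem _)
    set w' : Word Γfam :=
      { toList := w.toList ++ [⟨i, y⁻¹⟩]
        ne_one := by
          intro l hl
          rcases List.mem_append.1 hl with hl | hl
          · exact w.ne_one l hl
          · simp only [List.mem_singleton] at hl
            subst hl
            simpa using hy1
        chain_ne := by
          rw [List.isChain_append]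
          refine ⟨w.chain_ne, List.isChain_singleton _, ?_⟩
          intro x hx z hz
          simp only [List.head?_cons, Option.mem_def, Option.some.injEq] at hz
          subst hz
          rw [List.getLast?_eq_getLast hne, Option.mem_def,
            Option.some.injEq] at hx
          subst hx
          exact hlast } with hw'
    have hred' : PushoutI.Reduced ψ w' := by
      intro l hl
      rcases List.mem_append.1 hl with hl | hl
      · exact hred l hl
      · simp only [List.mem_singleton] at hl
        subst hl
        intro h
        exact hy' (by simpa using inv_mem h)
    have hprod : w'.prod = w.prod * CoprodI.of y⁻¹ := by
      simp [Word.prod, hw']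
    have : PushoutI.ofCoprodI (φ := ψ) w'.prod ∈ (PushoutI.base ψ).range := by
      simp only [hprod, map_mul, map_inv, ofCoprodI_of, ← hy, mul_inv_cancel]
      exact one_mem _
    have := hred'.eq_empty_of_mem_range hinj this
    have : w'.toList = [] := by rw [this]; rfl
    simp [hw'] at this

/-- A reduced word of length at least two cannot have product in the range of `of i`. -/

lemma auxB (hinj : ∀ i, Function.Injective (ψ i)) (i : Bool) (w : Word Γfam)
    (hred : PushoutI.Reduced ψ w) (hlen : 2 ≤ w.toList.length)
    (hmem : PushoutI.ofCoprodI (φ := ψ) w.prod ∈ (PushoutI.of (φ := ψ) i).range) : False := by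
  have hne : w.toList ≠ [] := by
    intro h; rw [h] at hlen; simp at hlen
  by_cases hl : (w.toList.getLast hne).1 = i
  · -- drop the last letter
    have hdec : w.toList.dropLast ++ [w.toList.getLast hne] = w.toList :=
      List.dropLast_append_getLast hne
    set u : Word Γfam :=
      { toList := w.toList.dropLast
        ne_one := fun l hl => w.ne_one l (List.dropLast_subset _ hl)
        chain_ne := w.chain_ne.prefix (List.dropLast_prefix _) } with hu
    have hchain := w.chain_ne
    rw [← hdec, List.isChain_append] at hchain
    have hune : u.toList ≠ [] := by
      intro h
      have := congrArg List.length h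
      simp only [hu, List.length_dropLast, List.length_nil] at this
      omega
    have hulast : (u.toList.getLast hune).1 ≠ i := by
      have := hchain.2.2 (u.toList.getLast hune)
        (by rw [List.getLast?_eq_getLast hune]; rfl)
        (w.toList.getLast hne) (by simp)
      rw [hl] at this
      exact this
    have hured : PushoutI.Reduced ψ u := fun l hl => hred l (List.dropLast_subset _ hl)
    rcases hgl : w.toList.getLast hne with ⟨j, a⟩
    have hji : j = i := by rw [← hl, hgl]
    subst hji
    have hprod : w.prod = u.prod * CoprodI.of a := by
      rw [Word.prod, ← hdec, List.map_append, List.prod_append, hgl]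
      simp [Word.prod, hu]
    apply auxB0 hinj j u hured hune hulast
    have : PushoutI.ofCoprodI (φ := ψ) u.prod
        = PushoutI.ofCoprodI (φ := ψ) w.prod * (PushoutI.of (φ := ψ) j a)⁻¹ := by
      rw [hprod, map_mul, ofCoprodI_of, mul_inv_cancel_right]
    rw [this]
    exact mul_mem hmem (inv_mem ⟨a, rfl⟩)
  · exact auxB0 hinj i w hred hne hl hmem

lemma auxMain (hinj : ∀ i, Function.Injective (ψ i)) (i : Bool) (n : ℕ) :
    ∀ (w : Word Γfam), PushoutI.Reduced ψ w → w.toList.length ≤ n →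
    ∀ (G : Subgroup (Γfam i)),
    (∀ k : Γfam i, ∃ x ∈ G, k * x * k⁻¹ ∉ (ψ i).range) →
    (∀ x ∈ G, PushoutI.ofCoprodI (φ := ψ) w.prod * PushoutI.of (φ := ψ) i x *
      (PushoutI.ofCoprodI (φ := ψ) w.prod)⁻¹ ∈ (PushoutI.of (φ := ψ) i).range) →
    PushoutI.ofCoprodI (φ := ψ) w.prod ∈ (PushoutI.of (φ := ψ) i).range := by
  induction n with
  | zero =>
    intro w _ hlen G _ _
    have h0 : w.toList = [] := List.length_eq_zero_iff.1 (Nat.le_zero.1 hlen)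
    have : w.prod = 1 := by rw [Word.prod, h0]; simp
    rw [this, map_one]; exact one_mem _
  | succ n ih =>
    intro w hred hlen G hE hconj
    by_cases hne : w.toList = []
    · have : w.prod = 1 := by rw [Word.prod, hne]; simp
      rw [this, map_one]; exact one_mem _
    rcases hgl : w.toList.getLast hne with ⟨j, a⟩
    by_cases hji : j = i
    · subst hji
      -- peel off the last letter, which lies in factor `i`
      have hdec : w.toList.dropLast ++ [w.toList.getLast hne] = w.toList :=
        List.dropLast_append_getLast hne
      set u : Word Γfam :=
        { toList := w.toList.dropLast
          ne_one := fun l hl => w.ne_one l (List.dropLast_subset _ hl)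
          chain_ne := w.chain_ne.prefix (List.dropLast_prefix _) } with hu
      have hured : PushoutI.Reduced ψ u := fun l hl => hred l (List.dropLast_subset _ hl)
      have hulen : u.toList.length ≤ n := by
        have := List.length_dropLast (xs := w.toList)
        simp only [hu]
        omega
      have hprod : PushoutI.ofCoprodI (φ := ψ) w.prod
          = PushoutI.ofCoprodI (φ := ψ) u.prod * PushoutI.of (φ := ψ) j a := by
        rw [Word.prod, ← hdec, List.map_append, List.prod_append, hgl]
        simp [Word.prod, hu]
      set G' : Subgroup (Γfam j) := G.map (MulAut.conj a).toMonoidHom with hG'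
      have hE' : ∀ k : Γfam j, ∃ x ∈ G', k * x * k⁻¹ ∉ (ψ j).range := by
        intro k
        obtain ⟨x, hxG, hx⟩ := hE (k * a)
        refine ⟨a * x * a⁻¹, ⟨x, hxG, by simp [MulAut.conj_apply]⟩, ?_⟩
        intro h
        have heq2 : k * (a * x * a⁻¹) * k⁻¹ = k * a * x * (k * a)⁻¹ := by group
        exact hx (heq2 ▸ h)
      have hconj' : ∀ x ∈ G', PushoutI.ofCoprodI (φ := ψ) u.prod * PushoutI.of (φ := ψ) j x *
          (PushoutI.ofCoprodI (φ := ψ) u.prod)⁻¹ ∈ (PushoutI.of (φ := ψ) j).range := by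
        rintro x' ⟨x, hxG, rfl⟩
        have heq : PushoutI.ofCoprodI (φ := ψ) u.prod *
              PushoutI.of (φ := ψ) j ((MulAut.conj a).toMonoidHom x) *
              (PushoutI.ofCoprodI (φ := ψ) u.prod)⁻¹
            = PushoutI.ofCoprodI (φ := ψ) w.prod * PushoutI.of (φ := ψ) j x *
              (PushoutI.ofCoprodI (φ := ψ) w.prod)⁻¹ := by
          rw [hprod]
          simp only [MulEquiv.coe_toMonoidHom, MulAut.conj_apply, map_mul, map_inv, mul_inv_rev]
          group
        rw [heq]
        exact hconj x hxG
      have hu' := ih u hured hulen G' hE' hconj'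
      rw [hprod]
      exact mul_mem hu' ⟨a, rfl⟩
    · -- last letter not in factor `i`: contradiction
      obtain ⟨x, hxG, hx⟩ := hE 1
      simp only [one_mul, inv_one, mul_one] at hx
      have hx1 : x ≠ 1 := by rintro rfl; exact hx (one_mem _)
      set M : List (Σ i, Γfam i) :=
        w.toList.reverse.map (fun p => ⟨p.1, p.2⁻¹⟩) with hM
      have hMhead : M.head? = some ⟨j, a⁻¹⟩ := by
        rw [hM, List.head?_map, List.head?_reverse, List.getLast?_eq_getLast hne, hgl]
        rfl
      set W : Word Γfam :=
        { toList := w.toList ++ ⟨i, x⟩ :: M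
          ne_one := by
            intro l hl
            rcases List.mem_append.1 hl with hl | hl
            · exact w.ne_one l hl
            rcases List.mem_cons.1 hl with rfl | hl
            · exact hx1
            · rw [hM] at hl
              obtain ⟨p, hp, rfl⟩ := List.mem_map.1 hl
              have := w.ne_one p (List.mem_reverse.1 hp)
              simpa using this
          chain_ne := by
            rw [List.isChain_append]
            refine ⟨w.chain_ne, ?_, ?_⟩
            · rw [List.isChain_cons]
              constructor
              · intro b hb
                rw [hMhead, Option.mem_def, Option.some.injEq] at hb
                subst hb
                exact Ne.symm hji
              · rw [hM, List.isChain_map, List.isChain_reverse]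
                exact w.chain_ne.imp (fun a b h => Ne.symm h)
            · intro p hp q hq
              rw [List.getLast?_eq_getLast hne, Option.mem_def, Option.some.injEq] at hp
              rw [List.head?_cons, Option.mem_def, Option.some.injEq] at hq
              subst hp; subst hq
              rw [hgl]
              exact hji } with hW
      have hredW : PushoutI.Reduced ψ W := by
        intro l hl
        simp only [hW] at hl
        rcases List.mem_append.1 hl with hl | hl
        · exact hred l hl
        rcases List.mem_cons.1 hl with rfl | hl
        · exact hx
        · rw [hM] at hl
          obtain ⟨p, hp, rfl⟩ := List.mem_map.1 hl
          have := hred p (List.mem_reverse.1 hp)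
          intro h
          exact this (by simpa using inv_mem h)
      have hlenW : 2 ≤ W.toList.length := by
        have h1 : 1 ≤ w.toList.length := List.length_pos_iff.2 hne
        simp only [hW, List.length_append, List.length_cons]
        omega
      have hMprod : (M.map fun l => CoprodI.of l.2).prod = (w.prod)⁻¹ := by
        rw [Word.prod, List.prod_inv_reverse, hM]
        congr 1
        rw [List.map_map, List.map_map, ← List.map_reverse]
        apply List.map_congr_left
        intro p _
        simp
      have hWprod : PushoutI.ofCoprodI (φ := ψ) W.prod
          = PushoutI.ofCoprodI (φ := ψ) w.prod * PushoutI.of (φ := ψ) i x *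
            (PushoutI.ofCoprodI (φ := ψ) w.prod)⁻¹ := by
        have : W.prod = w.prod * CoprodI.of x * (M.map fun l => CoprodI.of l.2).prod := by
          rw [Word.prod, hW]
          simp only [List.map_append, List.prod_append, List.map_cons, List.prod_cons]
          rw [Word.prod, mul_assoc]
        rw [this, hMprod]
        simp [map_mul, map_inv, ofCoprodI_of]
      exact absurd (hWprod ▸ hconj x hxG) (fun h => auxB hinj i W hredW hlenW h)

end Aux

/-- Let `Γ = Γ₁ *_Σ Γ₂` be an amalgamated free product (realized as the
pushout of two injective maps `ψ i : Σ →* Γᵢ`, with the two factors `Γᵢ` indexed by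
`i : Bool`).  Let `G ≤ Γᵢ` be a subgroup such that `G ⊀_{Γᵢ} Σ`, i.e. no finite index
subgroup of `G` can be conjugated into `Σ` inside `Γᵢ`.  If `g ∈ Γ` satisfies
`g G g⁻¹ ⊆ Γᵢ`, then `g ∈ Γᵢ`. -/
theorem mem_factor_of_conj_subgroup_mem_factor
    (B : Type) [Group B] (Γfam : Bool → Type) [∀ i, Group (Γfam i)]
    (ψ : ∀ i, B →* Γfam i) (hinj : ∀ i, Function.Injective (ψ i))
    (i : Bool) (G : Subgroup (Γfam i))
    (hG : ¬ ∃ k : Γfam i,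
      (((ψ i).range.map (MulAut.conj k⁻¹).toMonoidHom).relIndex G ≠ 0))
    (g : Monoid.PushoutI ψ)
    (hconj : ∀ x ∈ G, g * Monoid.PushoutI.of (φ := ψ) i x * g⁻¹ ∈
      (Monoid.PushoutI.of (φ := ψ) i).range) :
    g ∈ (Monoid.PushoutI.of (φ := ψ) i).range := by
  classical
  obtain ⟨d⟩ := Monoid.PushoutI.NormalWord.transversal_nonempty ψ hinj
  have hE : ∀ k : Γfam i, ∃ x ∈ G, k * x * k⁻¹ ∉ (ψ i).range := by
    intro k
    by_contra hcon
    push_neg at hcon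
    apply hG
    refine ⟨k, ?_⟩
    have hle : G ≤ (ψ i).range.map (MulAut.conj k⁻¹).toMonoidHom := by
      intro x hx
      refine ⟨k * x * k⁻¹, hcon x hx, ?_⟩
      simp only [MulEquiv.coe_toMonoidHom, MulAut.conj_apply]
      group
    rw [Subgroup.relIndex_eq_one.2 hle]
    exact one_ne_zero
  set nw := (PushoutI.NormalWord.equiv (d := d)) g with hnw
  have h1 : PushoutI.NormalWord.prod nw = g :=
    (PushoutI.NormalWord.equiv (d := d)).symm_apply_apply g
  have hgeq : PushoutI.base ψ nw.head * PushoutI.ofCoprodI nw.toWord.prod = g := h1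
  have hredw : PushoutI.Reduced ψ nw.toWord := by
    rintro ⟨j, a⟩ hmem h
    have hset := nw.normalized j a hmem
    have hne1 := nw.toWord.ne_one _ hmem
    have h2 := (Subgroup.IsComplement.equiv_snd_eq_self_iff_mem (d.compl j) (one_mem _)).2 hset
    have h3 := (Subgroup.IsComplement.coe_equiv_snd_eq_one_iff_mem (d.compl j) (d.one_mem j)).2 h
    exact hne1 (by rw [← h2, h3])
  have hmain : ∀ x ∈ G, PushoutI.ofCoprodI (φ := ψ) nw.toWord.prod *
      PushoutI.of (φ := ψ) i x * (PushoutI.ofCoprodI (φ := ψ) nw.toWord.prod)⁻¹ ∈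
      (PushoutI.of (φ := ψ) i).range := by
    intro x hx
    have hb : PushoutI.base ψ nw.head = PushoutI.of (φ := ψ) i (ψ i nw.head) :=
      (PushoutI.of_apply_eq_base ψ i nw.head).symm
    have heq : PushoutI.ofCoprodI (φ := ψ) nw.toWord.prod * PushoutI.of (φ := ψ) i x *
        (PushoutI.ofCoprodI (φ := ψ) nw.toWord.prod)⁻¹
        = (PushoutI.of (φ := ψ) i (ψ i nw.head))⁻¹ *
          (g * PushoutI.of (φ := ψ) i x * g⁻¹) * PushoutI.of (φ := ψ) i (ψ i nw.head) := by
      rw [← hgeq, hb]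
      group
    rw [heq]
    exact mul_mem (mul_mem (inv_mem ⟨_, rfl⟩) (hconj x hx)) ⟨_, rfl⟩
  have hres := auxMain hinj i nw.toWord.toList.length nw.toWord hredw le_rfl G hE hmain
  rw [← hgeq]
  exact mul_mem ⟨ψ i nw.head, PushoutI.of_apply_eq_base ψ i nw.head⟩ hres
end

section
/- Let K be a field of characteristic zero and let Λ₂ ⊆ GL(3,K) denote the group of upper unitriangular 3×3 matrices with integer entries, {[[1,a,b],[0,1,c],[0,0,1]] : a,b,c ∈ ℤ}. If B ∈ GL(3,K) satisfies B⁻¹Λ₂B = Λ₂, then B is upper triangular. -/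
/-- The upper unitriangular matrix `[[1,a,b],[0,1,c],[0,0,1]]` with integer entries,
regarded as a matrix over a field `K` of characteristic zero. -/
def unitriMat (K : Type) [Field K] (a b c : ℤ) : Matrix (Fin 3) (Fin 3) K :=
  !![1, (a : K), (b : K); 0, 1, (c : K); 0, 0, 1]

lemma unitri_central (K : Type) [Field K] (x y z : ℤ) :
    unitriMat K 0 1 0 * unitriMat K x y z = unitriMat K x y z * unitriMat K 0 1 0 := by
  ext i j
  fin_cases i <;> fin_cases j <;>
    simp [unitriMat, Matrix.mul_apply, Fin.sum_univ_three, Matrix.vecHead,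
      Matrix.vecTail] <;> ring

/-- If `B ∈ GL(3,K)` normalizes the group `Λ₂` of integer upper
unitriangular matrices, i.e. `B⁻¹ Λ₂ B = Λ₂`, then `B` is upper triangular. -/
theorem upperTriangular_of_normalizes_unitriangular (K : Type) [Field K] [CharZero K]
    (B : Matrix (Fin 3) (Fin 3) K) (hB : IsUnit B.det)
    (hnorm : ∀ m : Matrix (Fin 3) (Fin 3) K,
      (∃ a b c : ℤ, B * m * B⁻¹ = unitriMat K a b c) ↔ ∃ a b c : ℤ, m = unitriMat K a b c) :
    B 1 0 = 0 ∧ B 2 0 = 0 ∧ B 2 1 = 0 := by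
  have h1 : B * B⁻¹ = 1 := Matrix.mul_nonsing_inv B hB
  have h2 : B⁻¹ * B = 1 := Matrix.nonsing_inv_mul B hB
  obtain ⟨a, b, c, hZ⟩ := (hnorm (unitriMat K 0 1 0)).mpr ⟨0, 1, 0, rfl⟩
  -- a general conjugation fact
  have hconj : ∀ X Y : Matrix (Fin 3) (Fin 3) K,
      (B * X * B⁻¹) * (B * Y * B⁻¹) = B * (X * Y) * B⁻¹ := by
    intro X Y
    calc (B * X * B⁻¹) * (B * Y * B⁻¹) = B * X * (B⁻¹ * B) * Y * B⁻¹ := by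
          simp only [Matrix.mul_assoc]
      _ = B * (X * Y) * B⁻¹ := by rw [h2]; simp only [Matrix.mul_assoc, Matrix.mul_one,
          Matrix.one_mul]
  -- B Z B⁻¹ commutes with all of Λ₂
  have hcomm : ∀ a' b' c' : ℤ,
      unitriMat K a b c * unitriMat K a' b' c'
        = unitriMat K a' b' c' * unitriMat K a b c := by
    intro a' b' c'
    set u := unitriMat K a' b' c' with hu
    have huB : B * (B⁻¹ * u * B) * B⁻¹ = u := by
      calc B * (B⁻¹ * u * B) * B⁻¹ = (B * B⁻¹) * u * (B * B⁻¹) := by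
            simp only [Matrix.mul_assoc]
        _ = u := by rw [h1, Matrix.one_mul, Matrix.mul_one]
    obtain ⟨a'', b'', c'', hm⟩ := (hnorm (B⁻¹ * u * B)).mp ⟨a', b', c', huB⟩
    have hu2 : u = B * unitriMat K a'' b'' c'' * B⁻¹ := by rw [← hm, huB]
    rw [← hZ, hu2, hconj, hconj, unitri_central]
  -- extract (a:K) = 0 and (c:K) = 0
  have hc : (c : K) = 0 := by
    have h := congrFun (congrFun (hcomm 1 0 0) 0) 2
    simp [unitriMat, Matrix.mul_apply, Fin.sum_univ_three, Matrix.vecHead,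
      Matrix.vecTail] at h
    exact_mod_cast h
  have ha : (a : K) = 0 := by
    have h := congrFun (congrFun (hcomm 0 0 1) 0) 2
    simp [unitriMat, Matrix.mul_apply, Fin.sum_univ_three, Matrix.vecHead,
      Matrix.vecTail, hc] at h
    exact_mod_cast h
  -- b ≠ 0 in K
  have hb : (b : K) ≠ 0 := by
    intro hb0
    have hone : unitriMat K a b c = (1 : Matrix (Fin 3) (Fin 3) K) := by
      rw [Matrix.one_fin_three]
      simp [unitriMat, ha, hb0, hc]
    rw [hone] at hZ
    have hZ1 : unitriMat K 0 1 0 = (1 : Matrix (Fin 3) (Fin 3) K) := by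
      have h3 : B * unitriMat K 0 1 0 = B := by
        have := congrArg (· * B) hZ
        simpa [Matrix.mul_assoc, h2] using this
      have := congrArg (fun M => B⁻¹ * M) h3
      simpa [← Matrix.mul_assoc, h2] using this
    have := congrFun (congrFun hZ1 0) 2
    simp [unitriMat, Matrix.one_fin_three] at this
  -- main relation: B * Z = E(0,b,0) * B
  have hmain : B * unitriMat K 0 1 0 = unitriMat K a b c * B := by
    have := congrArg (· * B) hZ
    simpa [Matrix.mul_assoc, h2] using this
  have e12 := congrFun (congrFun hmain 1) 2
  have e22 := congrFun (congrFun hmain 2) 2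
  have e01 := congrFun (congrFun hmain 0) 1
  simp [unitriMat, Matrix.mul_apply, Fin.sum_univ_three, Matrix.vecHead,
    Matrix.vecTail, ha, hc] at e12 e22 e01
  refine ⟨e12, e22, ?_⟩
  rcases e01 with h | h
  · exact absurd (by exact_mod_cast congrArg (Int.cast : ℤ → K) h) hb
  · exact h
end

section
/- Let K be a field of characteristic zero, q ∈ ℚ ∖ {0,1,−1}, A = [[1,0,0],[1,q,0],[1,0,q⁻¹]] ∈ GL(3,K), Σ = {Aᵏ : k ∈ ℤ}, and let Λ₂ ⊆ GL(3,K) denote the group of upper unitriangular 3×3 matrices with integer entries. If B ∈ GL(3,K) satisfies B⁻¹Λ₂B = Λ₂ and B⁻¹ΣB = Σ, then B is a scalar multiple of the identity matrix. -/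
/-- The matrix `A = [[1,0,0],[1,q,0],[1,0,q⁻¹]]` over `K`. -/
def Amat (K : Type) [Field K] (q : ℚ) : Matrix (Fin 3) (Fin 3) K :=
  !![1, 0, 0; 1, (q : K), 0; 1, 0, (q : K)⁻¹]

theorem Amat_pow_11 (K : Type) [Field K] (q : ℚ) (n : ℕ) :
    (Amat K q ^ n) 1 1 = (q : K) ^ n := by
  induction n with
  | zero => simp [Matrix.one_apply]
  | succ n ih =>
    rw [pow_succ, Matrix.mul_apply, Fin.sum_univ_three, ih]
    have h0 : (Amat K q) 0 1 = 0 := rfl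
    have h1 : (Amat K q) 1 1 = (q : K) := rfl
    have h2 : (Amat K q) 2 1 = 0 := rfl
    rw [h0, h1, h2]; ring

/-- If `B ∈ GL(3,K)` satisfies `B⁻¹ Λ₂ B = Λ₂` and `B⁻¹ Σ B = Σ`,
where `Λ₂` is the group of integer upper unitriangular matrices and `Σ = {Aᵏ : k ∈ ℤ}`,
then `B` is a scalar multiple of the identity matrix. -/
theorem scalar_of_normalizes_unitriangular_and_sigma (K : Type) [Field K] [CharZero K]
    (q : ℚ) (hq0 : q ≠ 0) (hq1 : q ≠ 1) (hqm1 : q ≠ -1)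
    (B : Matrix (Fin 3) (Fin 3) K) (hB : IsUnit B.det)
    (hlam : ∀ m : Matrix (Fin 3) (Fin 3) K,
      (∃ a b c : ℤ, B * m * B⁻¹ = unitriMat K a b c) ↔ ∃ a b c : ℤ, m = unitriMat K a b c)
    (hsig : ∀ m : Matrix (Fin 3) (Fin 3) K,
      (∃ k : ℤ, B * m * B⁻¹ = Amat K q ^ k) ↔ ∃ k : ℤ, m = Amat K q ^ k) :
    ∃ x : K, B = x • (1 : Matrix (Fin 3) (Fin 3) K) := by
  have hq0K : (q : K) ≠ 0 := by exact_mod_cast hq0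
  have hq1K : (q : K) ≠ 1 := by exact_mod_cast hq1
  have hqm1K : (q : K) ≠ -1 := by intro h; exact hqm1 (by exact_mod_cast h)
  set A := Amat K q with hAdef
  have hAdet : A.det = 1 := by
    simp [hAdef, Amat, Matrix.det_fin_three]
    exact mul_inv_cancel₀ hq0K
  have hA : IsUnit A.det := hAdet ▸ isUnit_one
  have hBB : B * B⁻¹ = 1 := Matrix.mul_nonsing_inv B hB
  have hBB' : B⁻¹ * B = 1 := Matrix.nonsing_inv_mul B hB
  have hAA : A * A⁻¹ = 1 := Matrix.mul_nonsing_inv A hA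
  have sand : ∀ m : Matrix (Fin 3) (Fin 3) K, B * (B⁻¹ * m * B) * B⁻¹ = m := by
    intro m
    have h1 : B * (B⁻¹ * m * B) * B⁻¹ = (B * B⁻¹) * m * (B * B⁻¹) := by
      simp only [mul_assoc]
    rw [h1, hBB, one_mul, mul_one]
  have ofConj : ∀ {m Y : Matrix (Fin 3) (Fin 3) K}, B * m * B⁻¹ = Y → B * m = Y * B := by
    intro m Y h
    have h2 := congrArg (fun X => X * B) h
    simp only [mul_assoc, hBB', mul_one] at h2
    exact h2
  have key : ∀ x t : K, x * t = x → t ≠ 1 → x = 0 := by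
    intro x t h ht
    by_contra hx
    exact ht (mul_left_cancel₀ hx (by rw [h, mul_one]))
  have hqi1K : (q : K)⁻¹ ≠ 1 := fun h => hq1K (by rw [← inv_inv (q : K), h, inv_one])
  have hq2 : ∀ x : K, x * (q : K)⁻¹ = x * (q : K) → x = 0 := by
    intro x hx
    by_contra hx0
    have h3 : ((q : K))⁻¹ = (q : K) := mul_left_cancel₀ hx0 hx
    have h4 : (q : K) * (q : K) = 1 := by
      nth_rewrite 2 [← h3]; exact mul_inv_cancel₀ hq0K
    rcases mul_self_eq_one_iff.mp h4 with h | h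
    · exact hq1K h
    · exact hqm1K h
  -- step 1 & 2
  obtain ⟨k, hk⟩ := (hsig A).mpr ⟨1, (zpow_one A).symm⟩
  obtain ⟨j, hj⟩ := (hsig (B⁻¹ * A * B)).mp ⟨1, by rw [zpow_one]; exact sand A⟩
  have hsc : SemiconjBy B A (A ^ k) := ofConj hk
  have hsc2 : SemiconjBy B (A ^ j) ((A ^ k) ^ j) :=
    Matrix.SemiconjBy.zpow_right hA (hA.det_zpow k) hsc j
  have h2 : A = B * A ^ j * B⁻¹ := by rw [← hj]; exact (sand A).symm
  have hAkj : A = A ^ (k * j) := by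
    rw [Matrix.zpow_mul A hA]
    calc A = B * A ^ j * B⁻¹ := h2
    _ = (A ^ k) ^ j * B * B⁻¹ := by rw [hsc2.eq]
    _ = (A ^ k) ^ j := by rw [mul_assoc, hBB, mul_one]
  have hm : A ^ (k * j - 1) = 1 := by
    rw [Matrix.zpow_sub hA, ← hAkj, zpow_one, div_eq_mul_inv, hAA]
  have hnat : ∀ n : ℕ, A ^ n = 1 → n = 0 := by
    intro n hn
    by_contra h0
    have hqn : (q : K) ^ n = 1 := by
      rw [← Amat_pow_11 K q n, ← hAdef, hn, Matrix.one_apply]; simp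
    have hqq : q ^ n = 1 := by exact_mod_cast hqn
    rcases (pow_eq_one_iff_of_ne_zero h0).mp hqq with h | ⟨h, _⟩
    · exact hq1 h
    · exact hqm1 h
  have hkj : k * j = 1 := by
    have hz : k * j - 1 = 0 := by
      rcases Int.natAbs_eq (k * j - 1) with h | h
      · have h5 : A ^ ((k * j - 1).natAbs : ℤ) = 1 := by rw [← h]; exact hm
        rw [zpow_natCast] at h5
        have := hnat _ h5
        omega
      · have hneg : A ^ (-((k * j - 1).natAbs : ℤ)) = 1 := by rw [← h]; exact hm
        rw [Matrix.zpow_neg hA] at hneg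
        have hdet : IsUnit (A ^ ((k * j - 1).natAbs : ℤ)).det := hA.det_zpow _
        have h6 : A ^ ((k * j - 1).natAbs : ℤ) = 1 := by
          have h7 := Matrix.mul_nonsing_inv _ hdet
          rw [hneg, mul_one] at h7
          exact h7
        rw [zpow_natCast] at h6
        have := hnat _ h6
        omega
    omega
  rcases Int.isUnit_iff.mp (IsUnit.of_mul_eq_one (a := k) j hkj) with hk1 | hk1
  · -- case k = 1 : B commutes with A
    rw [hk1, zpow_one] at hk
    have hc : B * A = A * B := ofConj hk
    obtain ⟨a, b, c, hu⟩ := (hlam (unitriMat K 1 0 0)).mpr ⟨1, 0, 0, rfl⟩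
    have hu' : B * unitriMat K 1 0 0 = unitriMat K a b c * B := ofConj hu
    have e01 := Matrix.ext_iff.mpr hc 0 1
    have e02 := Matrix.ext_iff.mpr hc 0 2
    have e12 := Matrix.ext_iff.mpr hc 1 2
    have e21 := Matrix.ext_iff.mpr hc 2 1
    have e10 := Matrix.ext_iff.mpr hc 1 0
    have e20 := Matrix.ext_iff.mpr hc 2 0
    simp [hAdef, Amat, Matrix.mul_apply, Fin.sum_univ_three] at e01 e02 e12 e21 e10 e20
    have f11 := Matrix.ext_iff.mpr hu' 1 1
    have f21 := Matrix.ext_iff.mpr hu' 2 1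
    simp [unitriMat, Matrix.mul_apply, Fin.sum_univ_three] at f11 f21
    -- e01 : B 0 1 * q = B 0 1 ; e02 : B 0 2 * q⁻¹ = B 0 2
    have hB01 : B 0 1 = 0 := key _ _ e01 hq1K
    have hB02 : B 0 2 = 0 := key _ _ e02 hqi1K
    -- e12 : B 1 2 * q⁻¹ = B 0 2 + q * B 1 2
    have hB12 : B 1 2 = 0 := by
      apply hq2
      rw [hB02, zero_add] at e12
      rw [e12]; ring
    -- e21 : B 2 1 * q = B 0 1 + q⁻¹ * B 2 1
    have hB21 : B 2 1 = 0 := by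
      apply hq2
      rw [hB01, zero_add] at e21
      linear_combination -e21
    -- f11 : B 1 0 + B 1 1 = B 1 1 + c * B 2 1 ; f21 : B 2 0 = 0
    have hB10 : B 1 0 = 0 := by
      rw [hB21] at f11; linear_combination f11
    have hB20 : B 2 0 = 0 := f21
    -- e10 : B 1 0 + B 1 1 + B 1 2 = B 0 0 + q * B 1 0
    have hB11 : B 1 1 = B 0 0 := by
      rw [hB10, hB12] at e10; linear_combination e10
    have hB22 : B 2 2 = B 0 0 := by
      rw [hB20, hB21] at e20; linear_combination e20
    refine ⟨B 0 0, ?_⟩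
    conv_lhs => rw [Matrix.eta_fin_three B]
    rw [hB01, hB02, hB10, hB12, hB20, hB21, hB11, hB22]
    ext i j
    fin_cases i <;> fin_cases j <;>
      simp [Matrix.one_apply, Matrix.vecHead, Matrix.vecTail]
  · -- case k = -1 : contradiction
    rw [hk1, Matrix.zpow_neg_one] at hk
    have hc : A * B * A = B := by
      rw [mul_assoc, ofConj hk, ← mul_assoc, hAA, one_mul]
    obtain ⟨a, b, c, hu⟩ := (hlam (unitriMat K 0 0 1)).mpr ⟨0, 0, 1, rfl⟩
    have hu' : B * unitriMat K 0 0 1 = unitriMat K a b c * B := ofConj hu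
    have e01 := Matrix.ext_iff.mpr hc 0 1
    have e11 := Matrix.ext_iff.mpr hc 1 1
    have f22 := Matrix.ext_iff.mpr hu' 2 2
    simp [hAdef, Amat, Matrix.mul_apply, Fin.sum_univ_three, Matrix.vecMul, Matrix.vecHead,
      Matrix.vecTail, dotProduct] at e01 e11
    simp [unitriMat, Matrix.mul_apply, Fin.sum_univ_three, Matrix.vecHead, Matrix.vecTail] at f22
    -- expected: e01 : q * B 0 1 = B 0 1 (some form), e11 : ... , f22 : B 2 1 + B 2 2 = B 2 2
    have hB01 : B 0 1 = 0 := by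
      apply key _ ((q : K)) _ hq1K
      linear_combination e01
    have hB11 : B 1 1 = 0 := by
      have h5 : B 1 1 * ((q : K) * (q : K)) = B 1 1 := by
        linear_combination e11 - (q : K) * hB01
      by_contra hx
      have h6 : (q : K) * (q : K) = 1 := mul_left_cancel₀ hx (by rw [h5, mul_one])
      rcases mul_self_eq_one_iff.mp h6 with h | h
      · exact hq1K h
      · exact hqm1K h
    have hB21 : B 2 1 = 0 := by linear_combination f22
    have hdet0 : B.det = 0 := by
      rw [Matrix.det_fin_three, hB01, hB11, hB21]; ring
    rw [hdet0] at hB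
    exact absurd hB (by simp)
end
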